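/- arXiv:2204.01410 — 11 statements merged into one kernel-verified Lean document; each statement's English description precedes it below -/
import Mathlib

section
/- Assume the action space A and the noise space Ξ are compact metric spaces, and for each cluster k ∈ {1,…,K} the map P^k : A × Ξ → ℝ^{N×N} is continuous with values in row-stochastic matrices. Assume there is L ∈ ℕ such that for every a_{1:L} ∈ A^L, every ξ_{1:L} ∈ Ξ^L and every k, the product Q^k_L(a_{1:L},ξ_{1:L}) = P^k(a_1,ξ_1)···P^k(a_L,ξ_L) has all entries strictly positive. Let D^k_L be the convex hull of { μ Q^k_L(a_{1:L},ξ_{1:L}) : a_{1:L} ∈ A^L, μ ∈ Δ_N, ξ_{1:L} ∈ Ξ^L } and D_L = Π_{k=1}^K D^k_L. Then D_L is compact, each D^k_L is contained in the relative interior of Δ_N (i.e., all its points have strictly positive entries), and for every μ_0 ∈ (Δ_N)^K, every t ≥ L, every a_{1:t} ∈ A^t and ξ_{1:t} ∈ Ξ^t, the state μ_t defined componentwise by μ^k_s = μ^k_{s−1} P^k(a_s, ξ_s) for s = 1,…,t satisfies μ_t ∈ D_L. -/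
open Matrix

/-- Extending a sum over `Fin m` to a sum over `Fin M` by zero padding. -/
lemma sum_extend_fin {m M : ℕ} (hmM : m ≤ M) {V : Type*} [AddCommMonoid V] (f : Fin m → V) :
    (∑ i : Fin M, if h : (i : ℕ) < m then f ⟨i, h⟩ else 0) = ∑ i : Fin m, f i := by
  set F : ℕ → V := fun i => if h : i < m then f ⟨i, h⟩ else 0 with hF
  have h1 : (∑ i : Fin M, if h : (i : ℕ) < m then f ⟨i, h⟩ else 0) = ∑ i ∈ Finset.range M, F i :=
    Fin.sum_univ_eq_sum_range F M
  have h2 : ∑ i ∈ Finset.range M, F i = ∑ i ∈ Finset.range m, F i := by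
    refine (Finset.sum_subset (Finset.range_subset_range.2 hmM) ?_).symm
    intro x _ hx
    simp only [Finset.mem_range] at hx
    simp [hF, hx]
  have h3 : ∑ i ∈ Finset.range m, F i = ∑ i : Fin m, F i := (Fin.sum_univ_eq_sum_range F m).symm
  have h4 : ∑ i : Fin m, F (i : ℕ) = ∑ i : Fin m, f i := by
    refine Finset.sum_congr rfl fun i _ => ?_
    simp [hF, i.isLt]
  rw [h1, h2, h3, h4]

/-- The convex hull of a compact subset of `Fin N → ℝ` is compact. -/
lemma isCompact_convexHull_fin {N : ℕ} {s : Set (Fin N → ℝ)} (hs : IsCompact s) :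
    IsCompact (convexHull ℝ s) := by
  classical
  set M := N + 1 with hM
  set g : (Fin M → ℝ) × (Fin M → Fin N → ℝ) → (Fin N → ℝ) :=
    fun p => ∑ i : Fin M, p.1 i • p.2 i with hg
  have hgc : Continuous g := by
    refine continuous_finset_sum _ fun i _ => ?_
    exact ((continuous_apply i).comp continuous_fst).smul
      ((continuous_apply i).comp continuous_snd)
  have key : convexHull ℝ s =
      g '' (stdSimplex ℝ (Fin M) ×ˢ {z : Fin M → Fin N → ℝ | ∀ i, z i ∈ s}) := by
    apply Set.Subset.antisymm
    · intro x hx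
      obtain ⟨ι, hι, z, w, hzs, hAI, hwpos, hwsum, hx⟩ :=
        eq_pos_convex_span_of_mem_convexHull hx
      have hne : Nonempty ι := by
        by_contra hempty
        rw [not_nonempty_iff] at hempty
        rw [Finset.univ_eq_empty] at hwsum
        simp at hwsum
      obtain ⟨i₀⟩ := hne
      have hcard : Fintype.card ι ≤ M := by
        have h1 := hAI.card_le_finrank_succ
        have h2 : Module.finrank ℝ (vectorSpan ℝ (Set.range z)) ≤
            Module.finrank ℝ (Fin N → ℝ) := Submodule.finrank_le _
        have h3 : Module.finrank ℝ (Fin N → ℝ) = N := by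
          simp [Module.finrank_fintype_fun_eq_card]
        omega
      set m := Fintype.card ι with hm
      have e : ι ≃ Fin m := Fintype.equivFin ι
      set w' : Fin M → ℝ := fun i => if h : (i : ℕ) < m then w (e.symm ⟨i, h⟩) else 0 with hw'
      set z' : Fin M → Fin N → ℝ :=
        fun i => if h : (i : ℕ) < m then z (e.symm ⟨i, h⟩) else z i₀ with hz'
      refine ⟨⟨w', z'⟩, ⟨⟨?_, ?_⟩, ?_⟩, ?_⟩
      · intro i
        by_cases h : (i : ℕ) < m
        · simp [hw', h, (hwpos _).le]
        · simp [hw', h]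
      · have := sum_extend_fin hcard (fun i : Fin m => w (e.symm i))
        rw [hw']
        rw [this]
        rw [Equiv.sum_comp e.symm w]
        exact hwsum
      · intro i
        by_cases h : (i : ℕ) < m
        · simp only [hz', h, dif_pos]
          exact hzs (Set.mem_range_self _)
        · simp only [hz', h, dif_neg, not_false_iff]
          exact hzs (Set.mem_range_self _)
      · have hterm : ∀ i : Fin M, w' i • z' i =
            if h : (i : ℕ) < m then w (e.symm ⟨i, h⟩) • z (e.symm ⟨i, h⟩) else 0 := by
          intro i
          by_cases h : (i : ℕ) < m
          · simp [hw', hz', h]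
          · simp [hw', hz', h]
        have : g ⟨w', z'⟩ = ∑ i : Fin M,
            if h : (i : ℕ) < m then w (e.symm ⟨i, h⟩) • z (e.symm ⟨i, h⟩) else 0 := by
          rw [hg]
          exact Finset.sum_congr rfl fun i _ => hterm i
        rw [this, sum_extend_fin hcard (fun i : Fin m => w (e.symm i) • z (e.symm i)),
          Equiv.sum_comp e.symm (fun i => w i • z i)]
        exact hx
    · rintro x ⟨⟨w, z⟩, ⟨⟨hw0, hw1⟩, hz⟩, rfl⟩
      have : g ⟨w, z⟩ = Finset.univ.centerMass w z := by
        rw [Finset.centerMass_eq_of_sum_1 _ _ hw1, hg]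
      rw [this]
      exact Finset.centerMass_mem_convexHull _ (fun i _ => hw0 i) (by rw [hw1]; norm_num)
        (fun i _ => hz i)
  rw [key]
  refine ((isCompact_stdSimplex _ _).prod ?_).image hgc
  have : {z : Fin M → Fin N → ℝ | ∀ i, z i ∈ s} = Set.pi Set.univ fun _ => s := by
    ext z; simp [Set.mem_pi]
  rw [this]
  exact isCompact_univ_pi fun _ => hs

/-- Continuity of a product of finitely many continuous matrix-valued maps. -/
lemma continuous_ofFn_prod {X : Type*} [TopologicalSpace X] {n N : ℕ}
    (f : Fin n → X → Matrix (Fin N) (Fin N) ℝ) (hf : ∀ i, Continuous (f i)) :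
    Continuous fun x => (List.ofFn fun i => f i x).prod := by
  induction n with
  | zero =>
    simp only [List.ofFn_zero, List.prod_nil]
    exact continuous_const
  | succ n ih =>
    have hrw : (fun x => (List.ofFn fun i => f i x).prod) =
        fun x => f 0 x * (List.ofFn fun i : Fin n => f i.succ x).prod := by
      funext x; rw [List.ofFn_succ, List.prod_cons]
    rw [hrw]
    exact (hf 0).matrix_mul (ih _ fun i => hf i.succ)

/-- Multiplying a simplex vector by a row-stochastic matrix stays in the simplex. -/
lemma vecMul_mem_stdSimplex {N : ℕ} {v : Fin N → ℝ} (hv : v ∈ stdSimplex ℝ (Fin N))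
    {M : Matrix (Fin N) (Fin N) ℝ} (hM : ∀ i, (fun j => M i j) ∈ stdSimplex ℝ (Fin N)) :
    Matrix.vecMul v M ∈ stdSimplex ℝ (Fin N) := by
  constructor
  · intro j
    simp only [Matrix.vecMul, dotProduct]
    exact Finset.sum_nonneg fun i _ => mul_nonneg (hv.1 i) ((hM i).1 j)
  · simp only [Matrix.vecMul, dotProduct]
    rw [Finset.sum_comm]
    have : ∀ i : Fin N, ∑ j : Fin N, v i * M i j = v i := by
      intro i
      rw [← Finset.mul_sum, (hM i).2, mul_one]
    rw [Finset.sum_congr rfl fun i _ => this i]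
    exact hv.2

/-- Multiplying a simplex vector by a product of row-stochastic matrices stays
in the simplex. -/
lemma vecMul_listProd_mem_stdSimplex {N : ℕ} {v : Fin N → ℝ}
    (hv : v ∈ stdSimplex ℝ (Fin N)) :
    ∀ l : List (Matrix (Fin N) (Fin N) ℝ),
      (∀ M ∈ l, ∀ i, (fun j => M i j) ∈ stdSimplex ℝ (Fin N)) →
      Matrix.vecMul v l.prod ∈ stdSimplex ℝ (Fin N) := by
  intro l
  induction l generalizing v with
  | nil => intro _; simpa [Matrix.vecMul_one] using hv
  | cons M l ih =>
    intro hl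
    rw [List.prod_cons, ← Matrix.vecMul_vecMul]
    exact ih (vecMul_mem_stdSimplex hv (hl M List.mem_cons_self))
      fun M' hM' => hl M' (List.mem_cons_of_mem _ hM')

/-- Unrolling a linear recursion `v (s+1) = v s * M (s+1)` over `n` steps. -/
lemma traj_vecMul {N : ℕ} (v : ℕ → Fin N → ℝ) (M : ℕ → Matrix (Fin N) (Fin N) ℝ)
    (hstep : ∀ s, v (s + 1) = Matrix.vecMul (v s) (M (s + 1))) :
    ∀ (n s : ℕ), v (s + n) = Matrix.vecMul (v s)
      (List.ofFn fun l : Fin n => M (s + (l : ℕ) + 1)).prod := by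
  intro n
  induction n with
  | zero => intro s; simp [Matrix.vecMul_one]
  | succ n ih =>
    intro s
    have h1 : s + (n + 1) = (s + 1) + n := by omega
    have hlist : (List.ofFn fun l : Fin (n+1) => M (s + (l : ℕ) + 1)) =
        M (s + 1) :: List.ofFn (fun l : Fin n => M (s + 1 + (l : ℕ) + 1)) := by
      rw [List.ofFn_succ]
      congr 1
      congr 1
      funext l
      have h2 : s + (l.succ : ℕ) + 1 = s + 1 + (l : ℕ) + 1 := by
        simp only [Fin.val_succ]
        omega
      rw [h2]
    rw [h1, ih (s + 1), hstep s, Matrix.vecMul_vecMul, hlist, List.prod_cons]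

/-- Lemma on the effective domain `D_L`.
Under continuity (A1), row-stochasticity, and the primitivity assumption (A2)
that every product of `L` transition matrices is entrywise positive, the set
`D_L` (product over clusters of convex hulls of images of the simplex) is
compact, each factor is contained in the relative interior of the simplex,
and the controlled trajectory lies in `D_L` after `L` steps. -/
theorem effective_domain_compact_and_invariant
    {A Ξ : Type*} [MetricSpace A] [CompactSpace A] [MetricSpace Ξ] [CompactSpace Ξ]
    (K N L : ℕ)
    (P : Fin K → A → Ξ → Matrix (Fin N) (Fin N) ℝ)
    (hPcont : ∀ k, Continuous fun p : A × Ξ => P k p.1 p.2)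
    (hPstoch : ∀ k a ξ i, (fun j => P k a ξ i j) ∈ stdSimplex ℝ (Fin N))
    (hPpos : ∀ (a : Fin L → A) (ξ : Fin L → Ξ) (k : Fin K) (i j : Fin N),
      0 < (List.ofFn fun l => P k (a l) (ξ l)).prod i j)
    (DkL : Fin K → Set (Fin N → ℝ))
    (hDkL : ∀ k, DkL k = convexHull ℝ
      {ν | ∃ (a : Fin L → A) (ξ : Fin L → Ξ) (μ : Fin N → ℝ),
        μ ∈ stdSimplex ℝ (Fin N) ∧
        ν = Matrix.vecMul μ (List.ofFn fun l => P k (a l) (ξ l)).prod})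
    (DL : Set (Fin K → Fin N → ℝ))
    (hDL : DL = {μ | ∀ k, μ k ∈ DkL k}) :
    IsCompact DL ∧
    (∀ k, ∀ x ∈ DkL k, x ∈ stdSimplex ℝ (Fin N) ∧ ∀ i, 0 < x i) ∧
    (∀ (μ : ℕ → Fin K → Fin N → ℝ) (a : ℕ → A) (ξ : ℕ → Ξ),
      (∀ k, μ 0 k ∈ stdSimplex ℝ (Fin N)) →
      (∀ s k, μ (s + 1) k = Matrix.vecMul (μ s k) (P k (a (s + 1)) (ξ (s + 1)))) →
      ∀ t, L ≤ t → μ t ∈ DL) := by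
  classical
  -- The base (pre-hull) sets
  set S : Fin K → Set (Fin N → ℝ) := fun k =>
    {ν | ∃ (a : Fin L → A) (ξ : Fin L → Ξ) (μ : Fin N → ℝ),
      μ ∈ stdSimplex ℝ (Fin N) ∧
      ν = Matrix.vecMul μ (List.ofFn fun l => P k (a l) (ξ l)).prod} with hS
  -- Each base set lies in the simplex and has strictly positive coordinates
  have hSsub : ∀ k, S k ⊆ {x | x ∈ stdSimplex ℝ (Fin N) ∧ ∀ i, 0 < x i} := by
    rintro k x ⟨a, ξ, μ, hμ, rfl⟩
    have hrows : ∀ M ∈ (List.ofFn fun l => P k (a l) (ξ l)),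
        ∀ i, (fun j => M i j) ∈ stdSimplex ℝ (Fin N) := by
      intro M hMl i
      rw [List.mem_ofFn] at hMl
      obtain ⟨l, rfl⟩ := hMl
      exact hPstoch k (a l) (ξ l) i
    refine ⟨vecMul_listProd_mem_stdSimplex hμ _ hrows, ?_⟩
    intro j
    -- some coordinate of μ is positive
    obtain ⟨i, hi⟩ : ∃ i, 0 < μ i := by
      by_contra h
      push_neg at h
      have : (∑ i, μ i) ≤ 0 := Finset.sum_nonpos fun i _ => h i
      rw [hμ.2] at this; linarith
    have hQ := hPpos a ξ k
    simp only [Matrix.vecMul, dotProduct]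
    refine Finset.sum_pos' (fun i' _ => mul_nonneg (hμ.1 i') (hQ i' j).le)
      ⟨i, Finset.mem_univ i, mul_pos hi (hQ i j)⟩
  -- The target of the hull is convex
  have hTconv : Convex ℝ {x : Fin N → ℝ | x ∈ stdSimplex ℝ (Fin N) ∧ ∀ i, 0 < x i} := by
    intro x hx y hy p q hp hq hpq
    refine ⟨(convex_stdSimplex ℝ (Fin N)) hx.1 hy.1 hp hq hpq, fun i => ?_⟩
    have hxi := hx.2 i
    have hyi := hy.2 i
    simp only [Pi.add_apply, Pi.smul_apply, smul_eq_mul]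
    rcases hp.eq_or_lt with h | h
    · have hq1 : q = 1 := by linarith
      rw [← h, hq1]; simpa using hyi
    · nlinarith [mul_nonneg hq hyi.le]
  -- Claim 2: each `DkL k` lies in the simplex with positive coordinates
  have claim2 : ∀ k, ∀ x ∈ DkL k, x ∈ stdSimplex ℝ (Fin N) ∧ ∀ i, 0 < x i := by
    intro k x hx
    rw [hDkL k] at hx
    exact convexHull_min (hSsub k) hTconv hx
  -- Each base set is compact
  have hScompact : ∀ k, IsCompact (S k) := by
    intro k
    have himg : S k = (fun q : ((Fin L → A) × (Fin L → Ξ)) × (Fin N → ℝ) =>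
        Matrix.vecMul q.2 (List.ofFn fun l => P k (q.1.1 l) (q.1.2 l)).prod) ''
        (Set.univ ×ˢ stdSimplex ℝ (Fin N)) := by
      ext x
      constructor
      · rintro ⟨a, ξ, μ, hμ, rfl⟩
        exact ⟨⟨⟨a, ξ⟩, μ⟩, ⟨Set.mem_univ _, hμ⟩, rfl⟩
      · rintro ⟨⟨⟨a, ξ⟩, μ⟩, ⟨-, hμ⟩, rfl⟩
        exact ⟨a, ξ, μ, hμ, rfl⟩
    rw [himg]
    refine (isCompact_univ.prod (isCompact_stdSimplex _ _)).image ?_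
    have hmatcont : Continuous fun q : ((Fin L → A) × (Fin L → Ξ)) × (Fin N → ℝ) =>
        (List.ofFn fun l => P k (q.1.1 l) (q.1.2 l)).prod := by
      refine continuous_ofFn_prod
        (fun (l : Fin L) (q : ((Fin L → A) × (Fin L → Ξ)) × (Fin N → ℝ)) =>
          P k (q.1.1 l) (q.1.2 l)) fun l => ?_
      exact (hPcont k).comp
        (show Continuous fun q : ((Fin L → A) × (Fin L → Ξ)) × (Fin N → ℝ) =>
          ((q.1.1 l, q.1.2 l) : A × Ξ) by fun_prop)
    exact Continuous.matrix_vecMul continuous_snd hmatcont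
  -- Claim 1: compactness of `DL`
  have claim1 : IsCompact DL := by
    have hDkcompact : ∀ k, IsCompact (DkL k) := by
      intro k
      rw [hDkL k]
      exact isCompact_convexHull_fin (hScompact k)
    have : DL = Set.pi Set.univ DkL := by
      rw [hDL]; ext x; simp [Set.mem_pi]
    rw [this]
    exact isCompact_univ_pi hDkcompact
  refine ⟨claim1, claim2, ?_⟩
  -- Claim 3: invariance after `L` steps
  intro μ a ξ h0 hstep t ht
  rw [hDL]
  intro k
  have hsimplex : ∀ s, μ s k ∈ stdSimplex ℝ (Fin N) := by
    intro s
    induction s with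
    | zero => exact h0 k
    | succ s ih =>
      rw [hstep s k]
      exact vecMul_mem_stdSimplex ih fun i => hPstoch k _ _ i
  have htraj := traj_vecMul (fun s => μ s k) (fun n => P k (a n) (ξ n))
    (fun s => hstep s k) L (t - L)
  have hts : t - L + L = t := Nat.sub_add_cancel ht
  rw [hts] at htraj
  rw [hDkL k]
  apply subset_convexHull
  exact ⟨fun l => a (t - L + (l : ℕ) + 1), fun l => ξ (t - L + (l : ℕ) + 1),
    μ (t - L) k, hsimplex (t - L), htraj⟩
end

section
/- Let n ≥ 1, let u = (1/n,…,1/n) ∈ Δ_n be the barycenter of the simplex, let x, y ∈ Δ_n have all entries strictly positive, and let d > 0 satisfy d_H(x,y) ≤ d, d_H(x,u) ≤ d and d_H(y,u) ≤ d. Then n·‖x − y‖_∞ ≤ d_H(x,y)·Υ(d), where Υ(d) = (1/d)·e^d·(e^d − 1). -/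
/-- Hilbert's projective metric on positive vectors:
`d_H(u,v) = max_{i,j} log((u i / v i) * (v j / u j))`. -/
noncomputable def dH {n : ℕ} (u v : Fin n → ℝ) : ℝ :=
  ⨆ p : Fin n × Fin n, Real.log (u p.1 / v p.1 * (v p.2 / u p.2))

/-- metric comparison lemma, Lemma 2 of the paper.
If `x, y` are positive points of the simplex `Δ_n`, `u` is the barycenter,
and the pairwise Hilbert distances between `x`, `y`, `u` are at most `d > 0`,
then `n * ‖x - y‖_∞ ≤ d_H(x,y) * Υ(d)` with `Υ(d) = (1/d) e^d (e^d - 1)`.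
(The norm on `Fin n → ℝ` is the sup norm.) -/
theorem metric_comparison (n : ℕ) (hn : 1 ≤ n) (x y : Fin n → ℝ)
    (hx : x ∈ stdSimplex ℝ (Fin n)) (hy : y ∈ stdSimplex ℝ (Fin n))
    (hxpos : ∀ i, 0 < x i) (hypos : ∀ i, 0 < y i)
    (u : Fin n → ℝ) (hu : u = fun _ => 1 / (n : ℝ))
    (d : ℝ) (hd : 0 < d)
    (hxy : dH x y ≤ d) (hxu : dH x u ≤ d) (hyu : dH y u ≤ d) :
    (n : ℝ) * ‖x - y‖ ≤ dH x y * (1 / d * Real.exp d * (Real.exp d - 1)) := by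
  subst hu
  haveI : Nonempty (Fin n) := Fin.pos_iff_nonempty.mp (by omega)
  have hn0 : (0:ℝ) < n := by exact_mod_cast Nat.lt_of_lt_of_le Nat.zero_lt_one hn
  set D := dH x y with hDdef
  have bddxy : BddAbove (Set.range fun p : Fin n × Fin n =>
      Real.log (x p.1 / y p.1 * (y p.2 / x p.2))) :=
    Set.Finite.bddAbove (Set.finite_range _)
  have hterm : ∀ i j : Fin n, Real.log (x i / y i * (y j / x j)) ≤ D := by
    intro i j
    exact le_ciSup bddxy (i, j)
  have bddyu : BddAbove (Set.range fun p : Fin n × Fin n =>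
      Real.log (y p.1 / (1 / (n:ℝ)) * ((1 / (n:ℝ)) / y p.2))) :=
    Set.Finite.bddAbove (Set.finite_range _)
  have htermyu : ∀ i j : Fin n, Real.log (y i / y j) ≤ d := by
    intro i j
    have h1 : Real.log (y i / (1 / (n:ℝ)) * ((1 / (n:ℝ)) / y j)) ≤ d :=
      le_trans (le_ciSup bddyu (i, j)) hyu
    have he : y i / (1 / (n:ℝ)) * ((1 / (n:ℝ)) / y j) = y i / y j := by
      have h1 : (n:ℝ) ≠ 0 := ne_of_gt hn0
      have h2 : y j ≠ 0 := ne_of_gt (hypos j)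
      field_simp
    rwa [he] at h1
  -- 0 ≤ D
  have hD0 : 0 ≤ D := by
    have i0 : Fin n := Classical.arbitrary _
    have := hterm i0 i0
    have he : x i0 / y i0 * (y i0 / x i0) = 1 := by
      have h1 : x i0 ≠ 0 := ne_of_gt (hxpos i0)
      have h2 : y i0 ≠ 0 := ne_of_gt (hypos i0)
      field_simp
    rwa [he, Real.log_one] at this
  have hsum_x : ∑ i, x i = 1 := hx.2
  have hsum_y : ∑ i, y i = 1 := hy.2
  -- index where x ≤ y and where y ≤ x
  have hex : ∃ j, x j ≤ y j := by
    by_contra h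
    push_neg at h
    have : ∑ i, y i < ∑ i, x i :=
      Finset.sum_lt_sum_of_nonempty Finset.univ_nonempty (fun i _ => h i)
    linarith
  have hey : ∃ j, y j ≤ x j := by
    by_contra h
    push_neg at h
    have : ∑ i, x i < ∑ i, y i :=
      Finset.sum_lt_sum_of_nonempty Finset.univ_nonempty (fun i _ => h i)
    linarith
  have hlog_le : ∀ i, Real.log (x i / y i) ≤ D := by
    intro i
    obtain ⟨j, hj⟩ := hex
    have h1 : x i / y i ≤ x i / y i * (y j / x j) := by
      have : (1:ℝ) ≤ y j / x j := (one_le_div (hxpos j)).mpr hj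
      nlinarith [div_pos (hxpos i) (hypos i)]
    calc Real.log (x i / y i) ≤ Real.log (x i / y i * (y j / x j)) :=
          Real.log_le_log (div_pos (hxpos i) (hypos i)) h1
      _ ≤ D := hterm i j
  have hlog_ge : ∀ i, Real.log (y i / x i) ≤ D := by
    intro i
    obtain ⟨j, hj⟩ := hey
    have h1 : y i / x i ≤ x j / y j * (y i / x i) := by
      have : (1:ℝ) ≤ x j / y j := (one_le_div (hypos j)).mpr hj
      nlinarith [div_pos (hypos i) (hxpos i)]
    calc Real.log (y i / x i) ≤ Real.log (x j / y j * (y i / x i)) :=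
          Real.log_le_log (div_pos (hypos i) (hxpos i)) h1
      _ ≤ D := hterm j i
  -- y bounded: y i ≤ exp d / n
  have heyn : ∃ j, y j ≤ 1 / (n:ℝ) := by
    by_contra h
    push_neg at h
    have : ∑ _i : Fin n, (1 / (n:ℝ)) < ∑ i, y i :=
      Finset.sum_lt_sum_of_nonempty Finset.univ_nonempty (fun i _ => h i)
    rw [Finset.sum_const, Finset.card_univ, Fintype.card_fin, nsmul_eq_mul] at this
    rw [hsum_y] at this
    have : (n:ℝ) * (1 / n) = 1 := by field_simp
    linarith
  have hyb : ∀ i, y i ≤ Real.exp d / n := by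
    intro i
    obtain ⟨j, hj⟩ := heyn
    have h1 : y i / y j ≤ Real.exp d := by
      have := htermyu i j
      calc y i / y j = Real.exp (Real.log (y i / y j)) :=
            (Real.exp_log (div_pos (hypos i) (hypos j))).symm
        _ ≤ Real.exp d := Real.exp_le_exp.mpr this
    have h2 : y i ≤ Real.exp d * y j := (div_le_iff₀ (hypos j)).mp h1
    calc y i ≤ Real.exp d * y j := h2
      _ ≤ Real.exp d * (1 / n) := by
          exact mul_le_mul_of_nonneg_left hj (Real.exp_nonneg d)
      _ = Real.exp d / n := by ring
  have hed1 : (0:ℝ) ≤ Real.exp d - 1 := by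
    have := Real.one_le_exp hd.le
    linarith
  -- per-coordinate bound
  have key : ∀ i, |x i - y i| ≤ D * (1 / d * Real.exp d * (Real.exp d - 1)) / n := by
    intro i
    set t := Real.log (x i / y i) with ht
    have hxiy : x i = y i * Real.exp t := by
      rw [ht, Real.exp_log (div_pos (hxpos i) (hypos i)),
        mul_div_cancel₀ _ (ne_of_gt (hypos i))]
    have htD : |t| ≤ D := by
      rw [abs_le]
      constructor
      · have := hlog_ge i
        have hneg : Real.log (y i / x i) = -t := by
          rw [ht, ← Real.log_inv]
          congr 1
          field_simp
        linarith [hneg ▸ this]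
      · exact hlog_le i
    have htd : |t| ≤ d := le_trans htD hxy
    have habs : |Real.exp t - 1| ≤ Real.exp |t| - 1 := by
      rcases le_or_gt 0 t with h | h
      · rw [abs_of_nonneg h, abs_of_nonneg (by linarith [Real.one_le_exp h])]
      · rw [abs_of_neg h, abs_of_nonpos (by linarith [Real.exp_lt_one_iff.mpr h] : Real.exp t - 1 ≤ 0)]
        have h1 := Real.add_one_le_exp t
        have h2 := Real.add_one_le_exp (-t)
        nlinarith
    have hconv : Real.exp |t| - 1 ≤ |t| / d * (Real.exp d - 1) := by
      have hfr : (0:ℝ) ≤ |t| / d := by positivity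
      have hfr1 : |t| / d ≤ 1 := (div_le_one hd).mpr htd
      have hc := convexOn_exp.2 (Set.mem_univ 0) (Set.mem_univ d)
        (by linarith : (0:ℝ) ≤ 1 - |t| / d) hfr (by ring)
      simp only [smul_eq_mul, mul_zero, zero_add, Real.exp_zero, mul_one] at hc
      have he : |t| / d * d = |t| := by field_simp
      rw [he] at hc
      nlinarith
    have hy0 : (0:ℝ) ≤ y i := (hypos i).le
    have step1 : |x i - y i| = y i * |Real.exp t - 1| := by
      rw [hxiy]
      rw [show y i * Real.exp t - y i = y i * (Real.exp t - 1) by ring, abs_mul,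
        abs_of_nonneg hy0]
    calc |x i - y i| = y i * |Real.exp t - 1| := step1
      _ ≤ (Real.exp d / n) * (|t| / d * (Real.exp d - 1)) := by
          apply mul_le_mul (hyb i) (le_trans habs hconv) (abs_nonneg _)
          positivity
      _ ≤ (Real.exp d / n) * (D / d * (Real.exp d - 1)) := by
          apply mul_le_mul_of_nonneg_left _ (by positivity)
          apply mul_le_mul_of_nonneg_right _ hed1
          gcongr
      _ = D * (1 / d * Real.exp d * (Real.exp d - 1)) / n := by
          field_simp
  have hRHS0 : 0 ≤ D * (1 / d * Real.exp d * (Real.exp d - 1)) / n := by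
    apply div_nonneg _ hn0.le
    apply mul_nonneg hD0
    positivity
  have hnorm : ‖x - y‖ ≤ D * (1 / d * Real.exp d * (Real.exp d - 1)) / n := by
    rw [pi_norm_le_iff_of_nonneg hRHS0]
    intro i
    simpa [Real.norm_eq_abs] using key i
  calc (n:ℝ) * ‖x - y‖ ≤ (n:ℝ) * (D * (1 / d * Real.exp d * (Real.exp d - 1)) / n) :=
        mul_le_mul_of_nonneg_left hnorm hn0.le
    _ = D * (1 / d * Real.exp d * (Real.exp d - 1)) := by
        field_simp
end

section
/- Assume: A and Ξ are compact metric spaces, σ is a Borel probability measure on Ξ; for each k ∈ {1,…,K}, P^k : A × Ξ → ℝ^{N×N} is continuous with values in row-stochastic matrices; θ^k : A × Ξ → ℝ^N is continuous with |θ^{kn}(a,ξ)| ≤ M_r for all k, n, a, ξ; ρ ∈ Δ_K; and r(a,μ,ξ) = Σ_k ρ_k ⟨θ^k(a,ξ), μ^k⟩. Let D = Π_k D^k where each D^k is a convex compact subset of the relative interior of Δ_N, invariant in the sense that μ^k P^k(a,ξ) ∈ D^k for all μ^k ∈ D^k, a ∈ A, ξ ∈ Ξ. Suppose there exist κ ∈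 [0,1) and M > 0 such that for all μ, ν ∈ D, a ∈ A, ξ ∈ Ξ: Σ_k d_H(μ^k P^k(a,ξ), ν^k P^k(a,ξ)) ≤ κ·Σ_k d_H(μ^k, ν^k), and |r(a,μ,ξ) − r(a,ν,ξ)| ≤ M·Σ_k d_H(μ^k, ν^k). Then the ergodic eigenproblem admits a solution: there exist g ∈ ℝ and h : D → ℝ, which is convex and Lipschitz continuous with respect to the metric (μ,ν) ↦ Σ_k d_H(μ^k, ν^k), such that for every μ ∈ D: g + h(μ) = sup_{a∈A} ∫_Ξ [ r(a,μ,ξ) + h(μP(a,ξ)) ] dσ(ξ), where μP(a,ξ) = (μ^1 P^1(a,ξ),…, μ^K P^K(a,ξ)). -/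
set_option linter.unusedSectionVars false

open MeasureTheory Filter Topology Set

section SupHelpers

variable {ι : Type*} [Nonempty ι] {f g : ι → ℝ} {c : ℝ}

lemma bddAbove_range_of_le (h : ∀ i, f i ≤ c) : BddAbove (Set.range f) :=
  ⟨c, by rintro x ⟨i, rfl⟩; exact h i⟩

lemma iSup_le_iSup_add' (hg : BddAbove (Set.range g)) (h : ∀ i, f i ≤ g i + c) :
    (⨆ i, f i) ≤ (⨆ i, g i) + c :=
  ciSup_le fun i => (h i).trans (add_le_add_left (le_ciSup hg i) c)

lemma abs_iSup_sub_iSup_le' (hf : BddAbove (Set.range f)) (hg : BddAbove (Set.range g))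
    (h : ∀ i, |f i - g i| ≤ c) : |(⨆ i, f i) - (⨆ i, g i)| ≤ c := by
  rw [abs_le]
  constructor
  · have h1 : (⨆ i, g i) ≤ (⨆ i, f i) + c :=
      iSup_le_iSup_add' hf fun i => by have := abs_le.1 (h i); linarith [this.1]
    linarith
  · have h2 : (⨆ i, f i) ≤ (⨆ i, g i) + c :=
      iSup_le_iSup_add' hg fun i => by have := abs_le.1 (h i); linarith [this.2]
    linarith

lemma abs_iSup_le' (h : ∀ i, |f i| ≤ c) : |⨆ i, f i| ≤ c := by
  rw [abs_le]
  constructor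
  · obtain ⟨i⟩ := ‹Nonempty ι›
    have h1 : f i ≤ ⨆ j, f j := le_ciSup (bddAbove_range_of_le fun j => (abs_le.1 (h j)).2) i
    have h2 := (abs_le.1 (h i)).1
    linarith
  · exact ciSup_le fun i => (abs_le.1 (h i)).2

lemma iSup_add_const' (hf : BddAbove (Set.range f)) : (⨆ i, f i + c) = (⨆ i, f i) + c := by
  apply le_antisymm
  · exact ciSup_le fun i => add_le_add_left (le_ciSup hf i) c
  · have hb : BddAbove (Set.range fun i => f i + c) := by
      obtain ⟨b, hb⟩ := hf
      exact ⟨b + c, by rintro x ⟨i, rfl⟩; exact add_le_add_left (hb (Set.mem_range_self i)) c⟩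
    have h1 : (⨆ i, f i) ≤ (⨆ i, f i + c) - c :=
      ciSup_le fun i => le_sub_iff_add_le.2 (le_ciSup hb i)
    linarith

end SupHelpers

section EdistHelpers

/-- An auxiliary upper bound for Hilbert's metric, continuous on positive vectors. -/
noncomputable def Edist {n : ℕ} (u v : Fin n → ℝ) : ℝ :=
  (∑ i, |Real.log (u i / v i)|) + ∑ j, |Real.log (v j / u j)|

variable {n : ℕ} {u v : Fin n → ℝ}

lemma Edist_symm : Edist u v = Edist v u := add_comm _ _

lemma Edist_nonneg : 0 ≤ Edist u v :=
  add_nonneg (Finset.sum_nonneg fun _ _ => abs_nonneg _)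
    (Finset.sum_nonneg fun _ _ => abs_nonneg _)

lemma Edist_self (hu : ∀ i, 0 < u i) : Edist u u = 0 := by
  have : ∀ i : Fin n, |Real.log (u i / u i)| = 0 := fun i => by
    rw [div_self (hu i).ne', Real.log_one, abs_zero]
  simp only [Edist, this, Finset.sum_const_zero, add_zero]

lemma dH_nonneg (hn : 0 < n) (hu : ∀ i, 0 < u i) (hv : ∀ i, 0 < v i) : 0 ≤ dH u v := by
  have i : Fin n := ⟨0, hn⟩
  have h1 : u i / v i * (v i / u i) = 1 := by
    rw [div_mul_div_comm, mul_comm (v i) (u i)]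
    exact div_self (mul_pos (hu i) (hv i)).ne'
  have hb : BddAbove (Set.range fun p : Fin n × Fin n =>
      Real.log (u p.1 / v p.1 * (v p.2 / u p.2))) :=
    (Set.finite_range _).bddAbove
  have h2 := le_ciSup hb (i, i)
  simp only [h1, Real.log_one] at h2
  exact h2.trans_eq rfl

lemma dH_le_Edist (hn : 0 < n) (hu : ∀ i, 0 < u i) (hv : ∀ i, 0 < v i) : dH u v ≤ Edist u v := by
  haveI : Nonempty (Fin n) := ⟨⟨0, hn⟩⟩
  refine ciSup_le fun p => ?_
  have h1 : Real.log (u p.1 / v p.1 * (v p.2 / u p.2)) =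
      Real.log (u p.1 / v p.1) + Real.log (v p.2 / u p.2) :=
    Real.log_mul (div_pos (hu _) (hv _)).ne' (div_pos (hv _) (hu _)).ne'
  have t1 : Real.log (u p.1 / v p.1) ≤ ∑ i, |Real.log (u i / v i)| :=
    (le_abs_self _).trans (Finset.single_le_sum (f := fun i => |Real.log (u i / v i)|)
      (fun i _ => abs_nonneg _) (Finset.mem_univ p.1))
  have t2 : Real.log (v p.2 / u p.2) ≤ ∑ j, |Real.log (v j / u j)| :=
    (le_abs_self _).trans (Finset.single_le_sum (f := fun j => |Real.log (v j / u j)|)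
      (fun i _ => abs_nonneg _) (Finset.mem_univ p.2))
  rw [h1]
  unfold Edist
  linarith

lemma continuousAt_Edist {X : Type*} [TopologicalSpace X] {F G : X → Fin n → ℝ} {x0 : X}
    (hF : ∀ i, ContinuousAt (fun x => F x i) x0) (hG : ∀ i, ContinuousAt (fun x => G x i) x0)
    (hFpos : ∀ i, 0 < F x0 i) (hGpos : ∀ i, 0 < G x0 i) :
    ContinuousAt (fun x => Edist (F x) (G x)) x0 := by
  have key : ∀ (F' G' : X → Fin n → ℝ), (∀ i, ContinuousAt (fun x => F' x i) x0) →
      (∀ i, ContinuousAt (fun x => G' x i) x0) → (∀ i, 0 < F' x0 i) → (∀ i, 0 < G' x0 i) →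
      ContinuousAt (fun x => ∑ i, |Real.log (F' x i / G' x i)|) x0 := by
    intro F' G' hF' hG' hF'p hG'p
    apply tendsto_finset_sum
    intro i _
    have hdiv : ContinuousAt (fun x => F' x i / G' x i) x0 := (hF' i).div (hG' i) (hG'p i).ne'
    have hne : F' x0 i / G' x0 i ≠ 0 := (div_pos (hF'p i) (hG'p i)).ne'
    have hcomp := (Real.continuousAt_log hne).tendsto.comp hdiv
    exact hcomp.abs
  exact (key F G hF hG hFpos hGpos).add (key G F hG hF hGpos hFpos)

end EdistHelpers
section ContAux

lemma cont_phi {A Ξ : Type*} [TopologicalSpace A] [TopologicalSpace Ξ] {K N : ℕ}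
    (P : Fin K → A → Ξ → Matrix (Fin N) (Fin N) ℝ)
    (hPcont : ∀ k, Continuous fun p : A × Ξ => P k p.1 p.2)
    (μ : Fin K → Fin N → ℝ) (a : A) :
    Continuous fun ξ => (fun k => Matrix.vecMul (μ k) (P k a ξ)) := by
  apply continuous_pi; intro k
  apply continuous_pi; intro i
  have hrw : (fun ξ => Matrix.vecMul (μ k) (P k a ξ) i) =
      fun ξ => ∑ j, μ k j * P k a ξ j i := by
    funext ξ; simp [Matrix.vecMul, dotProduct]
  show Continuous fun ξ => Matrix.vecMul (μ k) (P k a ξ) i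
  rw [hrw]
  apply continuous_finset_sum; intro j _
  have hP : Continuous fun ξ => P k a ξ j i :=
    (continuous_apply i).comp ((continuous_apply j).comp ((hPcont k).comp (Continuous.prodMk_right a)))
  exact continuous_const.mul hP

lemma cont_h_comp {A Ξ : Type*} [TopologicalSpace A] [TopologicalSpace Ξ] {K N : ℕ}
    (P : Fin K → A → Ξ → Matrix (Fin N) (Fin N) ℝ)
    (hPcont : ∀ k, Continuous fun p : A × Ξ => P k p.1 p.2)
    (D : Set (Fin K → Fin N → ℝ))
    (hDpos : ∀ μ ∈ D, ∀ (k : Fin K) (i : Fin N), 0 < μ k i)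
    (hN : Fin K → 0 < N)
    (h : (Fin K → Fin N → ℝ) → ℝ) (L : ℝ) (hL : 0 ≤ L)
    (hLiph : ∀ μ ∈ D, ∀ ν ∈ D, |h μ - h ν| ≤ L * ∑ k, dH (μ k) (ν k))
    (μ : Fin K → Fin N → ℝ) (a : A)
    (hΦD : ∀ ξ, (fun k => Matrix.vecMul (μ k) (P k a ξ)) ∈ D) :
    Continuous fun ξ => h (fun k => Matrix.vecMul (μ k) (P k a ξ)) := by
  rw [continuous_iff_continuousAt]
  intro ξ0
  set G : Ξ → (Fin K → Fin N → ℝ) := fun ξ => (fun k => Matrix.vecMul (μ k) (P k a ξ)) with hG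
  have hGc : Continuous G := cont_phi P hPcont μ a
  have hEc : ContinuousAt (fun ξ => ∑ k, Edist (G ξ k) (G ξ0 k)) ξ0 := by
    apply tendsto_finset_sum
    intro k _
    exact continuousAt_Edist
      (fun i => ((continuous_apply i).comp ((continuous_apply k).comp hGc)).continuousAt)
      (fun i => continuousAt_const)
      (fun i => hDpos _ (hΦD ξ0) k i) (fun i => hDpos _ (hΦD ξ0) k i)
  have hE0 : Filter.Tendsto (fun ξ => ∑ k, Edist (G ξ k) (G ξ0 k)) (nhds ξ0) (nhds 0) := by
    have hz : (∑ k, Edist (G ξ0 k) (G ξ0 k)) = 0 :=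
      Finset.sum_eq_zero fun k _ => Edist_self (hDpos _ (hΦD ξ0) k)
    have h' : Filter.Tendsto (fun ξ => ∑ k, Edist (G ξ k) (G ξ0 k)) (nhds ξ0)
        (nhds (∑ k, Edist (G ξ0 k) (G ξ0 k))) := hEc
    rwa [hz] at h'
  rw [ContinuousAt, tendsto_iff_dist_tendsto_zero]
  refine squeeze_zero (fun ξ => dist_nonneg) (g := fun ξ => L * ∑ k, Edist (G ξ k) (G ξ0 k))
    (fun ξ => ?_) (by simpa using hE0.const_mul L)
  have h1 : |h (G ξ) - h (G ξ0)| ≤ L * ∑ k, dH (G ξ k) (G ξ0 k) := hLiph _ (hΦD ξ) _ (hΦD ξ0)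
  have h2 : (∑ k, dH (G ξ k) (G ξ0 k)) ≤ ∑ k, Edist (G ξ k) (G ξ0 k) :=
    Finset.sum_le_sum fun k _ => dH_le_Edist (hN k) (hDpos _ (hΦD ξ) k) (hDpos _ (hΦD ξ0) k)
  rw [Real.dist_eq]
  exact h1.trans (mul_le_mul_of_nonneg_left h2 hL)

end ContAux
lemma key_discounted {A Ξ : Type*} [MetricSpace A] [CompactSpace A] [Nonempty A]
    [MetricSpace Ξ] [CompactSpace Ξ] [MeasurableSpace Ξ] [BorelSpace Ξ]
    (σ : MeasureTheory.Measure Ξ) [MeasureTheory.IsProbabilityMeasure σ] {K N : ℕ}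
    (P : Fin K → A → Ξ → Matrix (Fin N) (Fin N) ℝ)
    (hPcont : ∀ k, Continuous fun p : A × Ξ => P k p.1 p.2)
    (r : A → (Fin K → Fin N → ℝ) → Ξ → ℝ)
    (D : Set (Fin K → Fin N → ℝ))
    (hDconv : Convex ℝ D)
    (hDpos : ∀ μ ∈ D, ∀ (k : Fin K) (i : Fin N), 0 < μ k i)
    (hN : Fin K → 0 < N)
    (hΦD : ∀ μ ∈ D, ∀ (a : A) (ξ : Ξ), (fun k => Matrix.vecMul (μ k) (P k a ξ)) ∈ D)
    (Mr' : ℝ) (hMr'0 : 0 ≤ Mr')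
    (hrcont : ∀ a μ, Continuous fun ξ => r a μ ξ)
    (hrbd : ∀ (a : A) (ξ : Ξ), ∀ μ ∈ D, |r a μ ξ| ≤ Mr')
    (hraff : ∀ (a : A) (ξ : Ξ) (x y : Fin K → Fin N → ℝ) (s t : ℝ),
      r a (s • x + t • y) ξ = s * r a x ξ + t * r a y ξ)
    (κ M : ℝ) (hκ0 : 0 ≤ κ) (hκ1 : κ < 1) (hM : 0 < M)
    (hcontr : ∀ μ ∈ D, ∀ ν ∈ D, ∀ (a : A) (ξ : Ξ),
      ∑ k, dH (Matrix.vecMul (μ k) (P k a ξ)) (Matrix.vecMul (ν k) (P k a ξ))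
        ≤ κ * ∑ k, dH (μ k) (ν k))
    (hLip : ∀ μ ∈ D, ∀ ν ∈ D, ∀ (a : A) (ξ : Ξ),
      |r a μ ξ - r a ν ξ| ≤ M * ∑ k, dH (μ k) (ν k))
    (α : ℝ) (hα0 : 0 ≤ α) (hα1 : α < 1) :
    ∃ v : (Fin K → Fin N → ℝ) → ℝ,
      (∀ μ ∈ D, |v μ| ≤ Mr' / (1 - α)) ∧
      (∀ μ ∈ D, ∀ ν ∈ D, |v μ - v ν| ≤ M / (1 - κ) * ∑ k, dH (μ k) (ν k)) ∧
      ConvexOn ℝ D v ∧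
      ∀ μ ∈ D, v μ =
        ⨆ a : A, ∫ ξ, (r a μ ξ + α * v fun k => Matrix.vecMul (μ k) (P k a ξ))
          ∂σ := by
  classical
  have h1κ : 0 < 1 - κ := by linarith
  have h1α : 0 < 1 - α := by linarith
  set L : ℝ := M / (1 - κ) with hLdef
  have hL0 : 0 ≤ L := le_of_lt (div_pos hM h1κ)
  have hLrec : M + α * κ * L ≤ L := by
    have e : L * (1 - κ) = M := div_mul_cancel₀ _ h1κ.ne'
    nlinarith [mul_nonneg (mul_nonneg hκ0 hL0) h1α.le]
  set B : ℝ := Mr' / (1 - α) with hBdef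
  have hB0 : 0 ≤ B := div_nonneg hMr'0 (le_of_lt h1α)
  have hBrec : Mr' + α * B ≤ B := by
    have e : B * (1 - α) = Mr' := div_mul_cancel₀ _ h1α.ne'
    nlinarith
  have hρd0 : ∀ μ ∈ D, ∀ ν ∈ D, 0 ≤ ∑ k, dH (μ k) (ν k) := fun μ hμ ν hν =>
    Finset.sum_nonneg fun k _ => dH_nonneg (hN k) (hDpos μ hμ k) (hDpos ν hν k)
  -- integrability of bellman integrands
  have hint : ∀ (h : (Fin K → Fin N → ℝ) → ℝ) (L' : ℝ), 0 ≤ L' →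
      (∀ μ ∈ D, ∀ ν ∈ D, |h μ - h ν| ≤ L' * ∑ k, dH (μ k) (ν k)) →
      ∀ (c : ℝ) (a : A), ∀ μ ∈ D, MeasureTheory.Integrable (fun ξ =>
        r a μ ξ + c * h fun k => Matrix.vecMul (μ k) (P k a ξ)) σ := by
    intro h L' hL' hLh c a μ hμ
    have hc : Continuous fun ξ => r a μ ξ + c * h fun k => Matrix.vecMul (μ k) (P k a ξ) :=
      (hrcont a μ).add (continuous_const.mul
        (cont_h_comp P hPcont D hDpos hN h L' hL' hLh μ a fun ξ => hΦD μ hμ a ξ))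
    exact hc.integrable_of_hasCompactSupport (HasCompactSupport.of_compactSpace _)
  -- per-action integral bound
  have hIbd : ∀ (h : (Fin K → Fin N → ℝ) → ℝ) (B' : ℝ), (∀ ν ∈ D, |h ν| ≤ B') →
      ∀ (a : A), ∀ μ ∈ D,
        |∫ ξ, (r a μ ξ + α * h fun k => Matrix.vecMul (μ k) (P k a ξ)) ∂σ|
          ≤ Mr' + α * B' := by
    intro h B' hB' a μ hμ
    have hpt : ∀ ξ, ‖r a μ ξ + α * h fun k => Matrix.vecMul (μ k) (P k a ξ)‖ ≤ Mr' + α * B' := by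
      intro ξ
      rw [Real.norm_eq_abs]
      have h1 := hrbd a ξ μ hμ
      have h2 : |α * h fun k => Matrix.vecMul (μ k) (P k a ξ)| ≤ α * B' := by
        rw [abs_mul, abs_of_nonneg hα0]
        exact mul_le_mul_of_nonneg_left (hB' _ (hΦD μ hμ a ξ)) hα0
      calc |(r a μ ξ) + α * h fun k => Matrix.vecMul (μ k) (P k a ξ)|
          ≤ |r a μ ξ| + |α * h fun k => Matrix.vecMul (μ k) (P k a ξ)| := abs_add_le _ _
        _ ≤ Mr' + α * B' := add_le_add h1 h2
    have hnorm := MeasureTheory.norm_integral_le_of_norm_le_const (μ := σ)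
      (Filter.Eventually.of_forall hpt)
    simpa [Real.norm_eq_abs] using hnorm
  -- the operator, through its defining formula
  set T : ((Fin K → Fin N → ℝ) → ℝ) → (Fin K → Fin N → ℝ) → ℝ := fun h μ =>
    ⨆ a : A, ∫ ξ, (r a μ ξ + α * h fun k => Matrix.vecMul (μ k) (P k a ξ)) ∂σ with hTdef
  -- bound for T
  have hTbd : ∀ (h : (Fin K → Fin N → ℝ) → ℝ) (B' : ℝ), (∀ ν ∈ D, |h ν| ≤ B') →
      ∀ μ ∈ D, |T h μ| ≤ Mr' + α * B' := by
    intro h B' hB' μ hμ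
    exact abs_iSup_le' fun a => hIbd h B' hB' a μ hμ
  -- Lipschitz bound for T
  have hTlip : ∀ (h : (Fin K → Fin N → ℝ) → ℝ) (B' L' : ℝ), 0 ≤ L' →
      (∀ ν ∈ D, |h ν| ≤ B') →
      (∀ x ∈ D, ∀ y ∈ D, |h x - h y| ≤ L' * ∑ k, dH (x k) (y k)) →
      ∀ μ ∈ D, ∀ ν ∈ D, |T h μ - T h ν| ≤ (M + α * κ * L') * ∑ k, dH (μ k) (ν k) := by
    intro h B' L' hL' hB' hLh μ hμ ν hν
    have hbμ : BddAbove (Set.range fun a =>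
        ∫ ξ, (r a μ ξ + α * h fun k => Matrix.vecMul (μ k) (P k a ξ)) ∂σ) :=
      bddAbove_range_of_le fun a => (abs_le.1 (hIbd h B' hB' a μ hμ)).2
    have hbν : BddAbove (Set.range fun a =>
        ∫ ξ, (r a ν ξ + α * h fun k => Matrix.vecMul (ν k) (P k a ξ)) ∂σ) :=
      bddAbove_range_of_le fun a => (abs_le.1 (hIbd h B' hB' a ν hν)).2
    refine abs_iSup_sub_iSup_le' hbμ hbν fun a => ?_
    have hiμ := hint h L' hL' hLh α a μ hμ
    have hiν := hint h L' hL' hLh α a ν hν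
    rw [← MeasureTheory.integral_sub hiμ hiν]
    have hpt : ∀ ξ, ‖(r a μ ξ + α * h fun k => Matrix.vecMul (μ k) (P k a ξ)) -
        (r a ν ξ + α * h fun k => Matrix.vecMul (ν k) (P k a ξ))‖
          ≤ (M + α * κ * L') * ∑ k, dH (μ k) (ν k) := by
      intro ξ
      rw [Real.norm_eq_abs]
      have h1 := hLip μ hμ ν hν a ξ
      have h2 : |h (fun k => Matrix.vecMul (μ k) (P k a ξ)) -
          h fun k => Matrix.vecMul (ν k) (P k a ξ)|
            ≤ L' * (κ * ∑ k, dH (μ k) (ν k)) := by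
        have h3 := hLh _ (hΦD μ hμ a ξ) _ (hΦD ν hν a ξ)
        have h4 := hcontr μ hμ ν hν a ξ
        exact h3.trans (mul_le_mul_of_nonneg_left h4 hL')
      calc |(r a μ ξ + α * h fun k => Matrix.vecMul (μ k) (P k a ξ)) -
          (r a ν ξ + α * h fun k => Matrix.vecMul (ν k) (P k a ξ))|
          = |(r a μ ξ - r a ν ξ) + α * ((h fun k => Matrix.vecMul (μ k) (P k a ξ)) -
              h fun k => Matrix.vecMul (ν k) (P k a ξ))| := by ring_nf
        _ ≤ |r a μ ξ - r a ν ξ| + |α * ((h fun k => Matrix.vecMul (μ k) (P k a ξ)) -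
              h fun k => Matrix.vecMul (ν k) (P k a ξ))| := abs_add_le _ _
        _ ≤ M * (∑ k, dH (μ k) (ν k)) + α * (L' * (κ * ∑ k, dH (μ k) (ν k))) := by
            refine add_le_add h1 ?_
            rw [abs_mul, abs_of_nonneg hα0]
            exact mul_le_mul_of_nonneg_left h2 hα0
        _ = (M + α * κ * L') * ∑ k, dH (μ k) (ν k) := by ring
    have hnorm := MeasureTheory.norm_integral_le_of_norm_le_const (μ := σ)
      (Filter.Eventually.of_forall hpt)
    simpa [Real.norm_eq_abs] using hnorm
  -- contraction for T
  have hTcontra : ∀ (h1 h2 : (Fin K → Fin N → ℝ) → ℝ) (B1 B2 L1 L2 : ℝ),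
      0 ≤ L1 → 0 ≤ L2 →
      (∀ ν ∈ D, |h1 ν| ≤ B1) → (∀ ν ∈ D, |h2 ν| ≤ B2) →
      (∀ x ∈ D, ∀ y ∈ D, |h1 x - h1 y| ≤ L1 * ∑ k, dH (x k) (y k)) →
      (∀ x ∈ D, ∀ y ∈ D, |h2 x - h2 y| ≤ L2 * ∑ k, dH (x k) (y k)) →
      ∀ (c : ℝ), 0 ≤ c → (∀ ν ∈ D, |h1 ν - h2 ν| ≤ c) →
      ∀ μ ∈ D, |T h1 μ - T h2 μ| ≤ α * c := by
    intro h1 h2 B1 B2 L1 L2 hL1 hL2 hB1 hB2 hLh1 hLh2 c hc hcl μ hμ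
    have hb1 : BddAbove (Set.range fun a =>
        ∫ ξ, (r a μ ξ + α * h1 fun k => Matrix.vecMul (μ k) (P k a ξ)) ∂σ) :=
      bddAbove_range_of_le fun a => (abs_le.1 (hIbd h1 B1 hB1 a μ hμ)).2
    have hb2 : BddAbove (Set.range fun a =>
        ∫ ξ, (r a μ ξ + α * h2 fun k => Matrix.vecMul (μ k) (P k a ξ)) ∂σ) :=
      bddAbove_range_of_le fun a => (abs_le.1 (hIbd h2 B2 hB2 a μ hμ)).2
    refine abs_iSup_sub_iSup_le' hb1 hb2 fun a => ?_
    have hi1 := hint h1 L1 hL1 hLh1 α a μ hμ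
    have hi2 := hint h2 L2 hL2 hLh2 α a μ hμ
    rw [← MeasureTheory.integral_sub hi1 hi2]
    have hpt : ∀ ξ, ‖(r a μ ξ + α * h1 fun k => Matrix.vecMul (μ k) (P k a ξ)) -
        (r a μ ξ + α * h2 fun k => Matrix.vecMul (μ k) (P k a ξ))‖ ≤ α * c := by
      intro ξ
      rw [Real.norm_eq_abs]
      have h3 : (r a μ ξ + α * h1 fun k => Matrix.vecMul (μ k) (P k a ξ)) -
          (r a μ ξ + α * h2 fun k => Matrix.vecMul (μ k) (P k a ξ))
          = α * ((h1 fun k => Matrix.vecMul (μ k) (P k a ξ)) -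
              h2 fun k => Matrix.vecMul (μ k) (P k a ξ)) := by ring
      rw [h3, abs_mul, abs_of_nonneg hα0]
      exact mul_le_mul_of_nonneg_left (hcl _ (hΦD μ hμ a ξ)) hα0
    have hnorm := MeasureTheory.norm_integral_le_of_norm_le_const (μ := σ)
      (Filter.Eventually.of_forall hpt)
    simpa [Real.norm_eq_abs] using hnorm
  -- convexity preservation
  have hTconv : ∀ (h : (Fin K → Fin N → ℝ) → ℝ) (B' L' : ℝ), 0 ≤ L' →
      (∀ ν ∈ D, |h ν| ≤ B') →
      (∀ x ∈ D, ∀ y ∈ D, |h x - h y| ≤ L' * ∑ k, dH (x k) (y k)) →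
      ConvexOn ℝ D h → ConvexOn ℝ D (T h) := by
    intro h B' L' hL' hB' hLh hconvh
    refine ⟨hDconv, fun x hx y hy s t hs ht hst => ?_⟩
    have hxy : s • x + t • y ∈ D := hDconv hx hy hs ht hst
    have hpt : ∀ (a : A) (ξ : Ξ),
        r a (s • x + t • y) ξ + α * h (fun k => Matrix.vecMul ((s • x + t • y) k) (P k a ξ))
          ≤ s * (r a x ξ + α * h fun k => Matrix.vecMul (x k) (P k a ξ)) +
            t * (r a y ξ + α * h fun k => Matrix.vecMul (y k) (P k a ξ)) := by
      intro a ξ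
      have hΦ : (fun k => Matrix.vecMul ((s • x + t • y) k) (P k a ξ)) =
          s • (fun k => Matrix.vecMul (x k) (P k a ξ)) +
            t • (fun k => Matrix.vecMul (y k) (P k a ξ)) := by
        funext k
        show Matrix.vecMul (s • x k + t • y k) (P k a ξ) = _
        rw [Matrix.add_vecMul, Matrix.smul_vecMul, Matrix.smul_vecMul]
        rfl
      have hcv := hconvh.2 (hΦD x hx a ξ) (hΦD y hy a ξ) hs ht hst
      rw [hraff a ξ x y s t, hΦ]
      have hcv' : h (s • (fun k => Matrix.vecMul (x k) (P k a ξ)) +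
          t • (fun k => Matrix.vecMul (y k) (P k a ξ)))
            ≤ s * h (fun k => Matrix.vecMul (x k) (P k a ξ)) +
              t * h fun k => Matrix.vecMul (y k) (P k a ξ) := by
        simpa [smul_eq_mul] using hcv
      nlinarith [mul_le_mul_of_nonneg_left hcv' hα0]
    have hIle : ∀ a : A,
        (∫ ξ, (r a (s • x + t • y) ξ +
            α * h fun k => Matrix.vecMul ((s • x + t • y) k) (P k a ξ)) ∂σ)
          ≤ s * (∫ ξ, (r a x ξ + α * h fun k => Matrix.vecMul (x k) (P k a ξ)) ∂σ) +
            t * ∫ ξ, (r a y ξ + α * h fun k => Matrix.vecMul (y k) (P k a ξ)) ∂σ := by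
      intro a
      have hi0 := hint h L' hL' hLh α a _ hxy
      have hix := hint h L' hL' hLh α a x hx
      have hiy := hint h L' hL' hLh α a y hy
      calc (∫ ξ, (r a (s • x + t • y) ξ +
            α * h fun k => Matrix.vecMul ((s • x + t • y) k) (P k a ξ)) ∂σ)
          ≤ ∫ ξ, (s * (r a x ξ + α * h fun k => Matrix.vecMul (x k) (P k a ξ)) +
              t * (r a y ξ + α * h fun k => Matrix.vecMul (y k) (P k a ξ))) ∂σ := by
            exact MeasureTheory.integral_mono hi0 ((hix.const_mul s).add (hiy.const_mul t))
              (hpt a)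
        _ = s * (∫ ξ, (r a x ξ + α * h fun k => Matrix.vecMul (x k) (P k a ξ)) ∂σ) +
            t * ∫ ξ, (r a y ξ + α * h fun k => Matrix.vecMul (y k) (P k a ξ)) ∂σ := by
            rw [MeasureTheory.integral_add (hix.const_mul s) (hiy.const_mul t),
              MeasureTheory.integral_const_mul, MeasureTheory.integral_const_mul]
    have hbx : BddAbove (Set.range fun a =>
        ∫ ξ, (r a x ξ + α * h fun k => Matrix.vecMul (x k) (P k a ξ)) ∂σ) :=
      bddAbove_range_of_le fun a => (abs_le.1 (hIbd h B' hB' a x hx)).2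
    have hby : BddAbove (Set.range fun a =>
        ∫ ξ, (r a y ξ + α * h fun k => Matrix.vecMul (y k) (P k a ξ)) ∂σ) :=
      bddAbove_range_of_le fun a => (abs_le.1 (hIbd h B' hB' a y hy)).2
    have hgoal : T h (s • x + t • y) ≤ s * T h x + t * T h y := by
      refine ciSup_le fun a => (hIle a).trans (add_le_add ?_ ?_)
      · exact mul_le_mul_of_nonneg_left (le_ciSup hbx a) hs
      · exact mul_le_mul_of_nonneg_left (le_ciSup hby a) ht
    simpa [smul_eq_mul] using hgoal
  -- the iterates of T starting from 0
  set vs : ℕ → (Fin K → Fin N → ℝ) → ℝ := fun n => T^[n] (fun _ => 0) with hvsdef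
  have hvs0 : vs 0 = fun _ => 0 := rfl
  have hvs_succ : ∀ n, vs (n + 1) = T (vs n) := fun n => Function.iterate_succ_apply' T n _
  have hvs_prop : ∀ n, (∀ μ ∈ D, |vs n μ| ≤ B) ∧
      (∀ x ∈ D, ∀ y ∈ D, |vs n x - vs n y| ≤ L * ∑ k, dH (x k) (y k)) ∧
      ConvexOn ℝ D (vs n) := by
    intro n
    induction n with
    | zero =>
      refine ⟨fun μ hμ => by rw [hvs0]; simpa using hB0, fun x hx y hy => ?_, ?_⟩
      · rw [hvs0]
        simpa using mul_nonneg hL0 (hρd0 x hx y hy)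
      · exact ⟨hDconv, fun x hx y hy s t hs ht hst => by rw [hvs0]; simp⟩
    | succ n ih =>
      obtain ⟨ihB, ihL, ihC⟩ := ih
      rw [hvs_succ]
      refine ⟨fun μ hμ => (hTbd (vs n) B ihB μ hμ).trans hBrec,
        fun x hx y hy => (hTlip (vs n) B L hL0 ihB ihL x hx y hy).trans
          (mul_le_mul_of_nonneg_right hLrec (hρd0 x hx y hy)),
        hTconv (vs n) B L hL0 ihB ihL ihC⟩
  -- geometric decay of increments
  have hstep : ∀ n, ∀ μ ∈ D, |vs (n + 1) μ - vs n μ| ≤ α ^ n * Mr' := by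
    intro n
    induction n with
    | zero =>
      intro μ hμ
      have h0 : |vs 1 μ| ≤ Mr' + α * 0 := by
        rw [hvs_succ 0]
        exact hTbd (vs 0) 0 (fun ν hν => by rw [hvs0]; simp) μ hμ
      rw [hvs0]
      simpa using h0
    | succ n ih =>
      intro μ hμ
      have hc : 0 ≤ α ^ n * Mr' := mul_nonneg (pow_nonneg hα0 n) hMr'0
      have hev : ∀ ν ∈ D, |vs (n + 1) ν - vs n ν| ≤ α ^ n * Mr' := fun ν hν => ih ν hν
      have hkey := hTcontra (vs (n + 1)) (vs n) B B L L hL0 hL0 (hvs_prop (n + 1)).1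
        (hvs_prop n).1 (hvs_prop (n + 1)).2.1 (hvs_prop n).2.1 (α ^ n * Mr') hc hev μ hμ
      rw [← hvs_succ (n + 1), ← hvs_succ n] at hkey
      calc |vs (n + 1 + 1) μ - vs (n + 1) μ| ≤ α * (α ^ n * Mr') := hkey
        _ = α ^ (n + 1) * Mr' := by ring
  -- partial-sum control between distant iterates
  have hgeom : ∀ j : ℕ, (∑ i ∈ Finset.range j, α ^ i) ≤ 1 / (1 - α) := by
    intro j
    rw [le_div_iff₀ h1α]
    have hm := geom_sum_mul α j
    have : (∑ i ∈ Finset.range j, α ^ i) * (1 - α) = 1 - α ^ j := by nlinarith [hm]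
    nlinarith [pow_nonneg hα0 j]
  have htail0 : ∀ n j, ∀ μ ∈ D, |vs (n + j) μ - vs n μ| ≤ α ^ n * Mr' / (1 - α) := by
    intro n j μ hμ
    have hsum : |vs (n + j) μ - vs n μ| ≤ ∑ i ∈ Finset.range j, α ^ (n + i) * Mr' := by
      induction j with
      | zero => simp
      | succ j ihj =>
        have h1 : |vs (n + j + 1) μ - vs (n + j) μ| ≤ α ^ (n + j) * Mr' := hstep (n + j) μ hμ
        calc |vs (n + (j + 1)) μ - vs n μ|
            = |(vs (n + j + 1) μ - vs (n + j) μ) + (vs (n + j) μ - vs n μ)| := by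
              rw [show n + (j + 1) = n + j + 1 from rfl]; ring_nf
          _ ≤ |vs (n + j + 1) μ - vs (n + j) μ| + |vs (n + j) μ - vs n μ| := abs_add_le _ _
          _ ≤ α ^ (n + j) * Mr' + ∑ i ∈ Finset.range j, α ^ (n + i) * Mr' := add_le_add h1 ihj
          _ = ∑ i ∈ Finset.range (j + 1), α ^ (n + i) * Mr' := by
              rw [Finset.sum_range_succ]; ring
    have hsum2 : (∑ i ∈ Finset.range j, α ^ (n + i) * Mr') = α ^ n * Mr' * ∑ i ∈ Finset.range j, α ^ i := by
      rw [Finset.mul_sum]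
      exact Finset.sum_congr rfl fun i _ => by rw [pow_add]; ring
    have hb2 : α ^ n * Mr' * (∑ i ∈ Finset.range j, α ^ i) ≤ α ^ n * Mr' * (1 / (1 - α)) :=
      mul_le_mul_of_nonneg_left (hgeom j) (mul_nonneg (pow_nonneg hα0 n) hMr'0)
    calc |vs (n + j) μ - vs n μ| ≤ α ^ n * Mr' * ∑ i ∈ Finset.range j, α ^ i := by
          rw [← hsum2]; exact hsum
      _ ≤ α ^ n * Mr' * (1 / (1 - α)) := hb2
      _ = α ^ n * Mr' / (1 - α) := by ring
  -- convergence of the iterates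
  have hconv : ∀ μ ∈ D, ∃ c, Tendsto (fun n => vs n μ) atTop (nhds c) := by
    intro μ hμ
    have hcs : CauchySeq fun n => vs n μ := by
      refine cauchySeq_of_le_geometric α Mr' hα1 fun n => ?_
      rw [Real.dist_eq, abs_sub_comm]
      exact (hstep n μ hμ).trans_eq (mul_comm _ _)
    exact cauchySeq_tendsto_of_complete hcs
  choose vfun hvfun using hconv
  let v : (Fin K → Fin N → ℝ) → ℝ := fun μ => if hμ : μ ∈ D then vfun μ hμ else 0
  have hvt : ∀ μ (hμ : μ ∈ D), Tendsto (fun n => vs n μ) atTop (nhds (v μ)) := by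
    intro μ hμ
    show Tendsto _ _ (nhds (if hμ' : μ ∈ D then vfun μ hμ' else 0))
    rw [dif_pos hμ]
    exact hvfun μ hμ
  have hvB : ∀ μ ∈ D, |v μ| ≤ B := fun μ hμ =>
    le_of_tendsto' (hvt μ hμ).abs fun n => (hvs_prop n).1 μ hμ
  have hvL : ∀ x ∈ D, ∀ y ∈ D, |v x - v y| ≤ L * ∑ k, dH (x k) (y k) := fun x hx y hy =>
    le_of_tendsto' ((hvt x hx).sub (hvt y hy)).abs fun n => (hvs_prop n).2.1 x hx y hy
  have hvC : ConvexOn ℝ D v := by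
    refine ⟨hDconv, fun x hx y hy s t hs ht hst => ?_⟩
    have hxy : s • x + t • y ∈ D := hDconv hx hy hs ht hst
    have h1 : Tendsto (fun n => vs n (s • x + t • y)) atTop (nhds (v (s • x + t • y))) :=
      hvt _ hxy
    have h2 : Tendsto (fun n => s * vs n x + t * vs n y) atTop (nhds (s * v x + t * v y)) :=
      ((hvt x hx).const_mul s).add ((hvt y hy).const_mul t)
    have hle : ∀ n, vs n (s • x + t • y) ≤ s * vs n x + t * vs n y := fun n => by
      simpa [smul_eq_mul] using (hvs_prop n).2.2.2 hx hy hs ht hst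
    simpa [smul_eq_mul] using le_of_tendsto_of_tendsto' h1 h2 hle
  have hvtail : ∀ n, ∀ ν ∈ D, |v ν - vs n ν| ≤ α ^ n * Mr' / (1 - α) := by
    intro n ν hν
    have hcomp : Tendsto (fun j => vs (j + n) ν) atTop (nhds (v ν)) :=
      (hvt ν hν).comp (tendsto_add_atTop_nat n)
    have hcomp' : Tendsto (fun j => vs (n + j) ν) atTop (nhds (v ν)) := by
      simpa [Nat.add_comm] using hcomp
    have h1 : Tendsto (fun j => |vs (n + j) ν - vs n ν|) atTop (nhds |v ν - vs n ν|) :=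
      (hcomp'.sub tendsto_const_nhds).abs
    exact le_of_tendsto' h1 fun j => htail0 n j ν hν
  -- the fixed point property
  have hfix : ∀ μ ∈ D, v μ = T v μ := by
    intro μ hμ
    have hz : Tendsto (fun n => |T v μ - vs (n + 1) μ|) atTop (nhds |T v μ - v μ|) := by
      have h1 : Tendsto (fun n => vs (n + 1) μ) atTop (nhds (v μ)) :=
        (hvt μ hμ).comp (tendsto_add_atTop_nat 1)
      exact (tendsto_const_nhds.sub h1).abs
    have hb : ∀ n, |T v μ - vs (n + 1) μ| ≤ (α * Mr' / (1 - α)) * α ^ n := by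
      intro n
      have hc : 0 ≤ α ^ n * Mr' / (1 - α) :=
        div_nonneg (mul_nonneg (pow_nonneg hα0 n) hMr'0) h1α.le
      have hcl : ∀ ν ∈ D, |v ν - vs n ν| ≤ α ^ n * Mr' / (1 - α) := hvtail n
      have := hTcontra v (vs n) B B L L hL0 hL0 hvB (hvs_prop n).1 hvL (hvs_prop n).2.1
        (α ^ n * Mr' / (1 - α)) hc hcl μ hμ
      rw [hvs_succ]
      calc |T v μ - T (vs n) μ| ≤ α * (α ^ n * Mr' / (1 - α)) := this
        _ = (α * Mr' / (1 - α)) * α ^ n := by ring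
    have hlim0 : Tendsto (fun n : ℕ => (α * Mr' / (1 - α)) * α ^ n) atTop (nhds 0) := by
      have := (tendsto_pow_atTop_nhds_zero_of_lt_one hα0 hα1).const_mul (α * Mr' / (1 - α))
      simpa using this
    have habs : |T v μ - v μ| ≤ 0 := le_of_tendsto_of_tendsto' hz hlim0 hb
    have := abs_nonpos_iff.mp habs
    linarith [sub_eq_zero.mp this]
  exact ⟨v, hvB, fun μ hμ ν hν => hvL μ hμ ν hν, hvC, fun μ hμ => hfix μ hμ⟩
/-- Theorem 1 of the paper: existence of a solution of the
ergodic eigenproblem. Under the stated assumptions (continuity and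
stochasticity of the transitions, bounded rewards, a convex compact invariant
domain `D` contained in the relative interior of the product of simplices,
contraction of the dynamics in Hilbert's metric, Lipschitz reward), there
exist `g ∈ ℝ` and a convex, Hilbert-Lipschitz bias `h : D → ℝ` with
`g + h(μ) = sup_a ∫ [r(a,μ,ξ) + h(μP(a,ξ))] dσ(ξ)` for all `μ ∈ D`. -/
theorem ergodic_eigenproblem_exists
    {A Ξ : Type*} [MetricSpace A] [CompactSpace A] [Nonempty A]
    [MetricSpace Ξ] [CompactSpace Ξ] [MeasurableSpace Ξ] [BorelSpace Ξ]
    (σ : Measure Ξ) [IsProbabilityMeasure σ]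
    (K N : ℕ)
    (P : Fin K → A → Ξ → Matrix (Fin N) (Fin N) ℝ)
    (hPcont : ∀ k, Continuous fun p : A × Ξ => P k p.1 p.2)
    (hPstoch : ∀ k a ξ i, (fun j => P k a ξ i j) ∈ stdSimplex ℝ (Fin N))
    (θ : Fin K → A → Ξ → Fin N → ℝ)
    (hθcont : ∀ k, Continuous fun p : A × Ξ => θ k p.1 p.2)
    (Mr : ℝ) (hθbdd : ∀ k a ξ n, |θ k a ξ n| ≤ Mr)
    (ρ : Fin K → ℝ) (hρ : ρ ∈ stdSimplex ℝ (Fin K))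
    (r : A → (Fin K → Fin N → ℝ) → Ξ → ℝ)
    (hr : ∀ a μ ξ, r a μ ξ = ∑ k, ρ k * ∑ n, θ k a ξ n * μ k n)
    (Dk : Fin K → Set (Fin N → ℝ))
    (hDkconvex : ∀ k, Convex ℝ (Dk k))
    (hDkcompact : ∀ k, IsCompact (Dk k))
    (hDksub : ∀ k, ∀ x ∈ Dk k, x ∈ stdSimplex ℝ (Fin N) ∧ ∀ i, 0 < x i)
    (hDkinv : ∀ k, ∀ x ∈ Dk k, ∀ (a : A) (ξ : Ξ), Matrix.vecMul x (P k a ξ) ∈ Dk k)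
    (D : Set (Fin K → Fin N → ℝ)) (hD : D = {μ | ∀ k, μ k ∈ Dk k})
    (κ M : ℝ) (hκ0 : 0 ≤ κ) (hκ1 : κ < 1) (hM : 0 < M)
    (hcontr : ∀ μ ∈ D, ∀ ν ∈ D, ∀ (a : A) (ξ : Ξ),
      ∑ k, dH (Matrix.vecMul (μ k) (P k a ξ)) (Matrix.vecMul (ν k) (P k a ξ))
        ≤ κ * ∑ k, dH (μ k) (ν k))
    (hLip : ∀ μ ∈ D, ∀ ν ∈ D, ∀ (a : A) (ξ : Ξ),
      |r a μ ξ - r a ν ξ| ≤ M * ∑ k, dH (μ k) (ν k)) :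
    ∃ (g : ℝ) (h : (Fin K → Fin N → ℝ) → ℝ),
      ConvexOn ℝ D h ∧
      (∃ Clip : ℝ, ∀ μ ∈ D, ∀ ν ∈ D, |h μ - h ν| ≤ Clip * ∑ k, dH (μ k) (ν k)) ∧
      ∀ μ ∈ D, g + h μ =
        ⨆ a : A, ∫ ξ, (r a μ ξ + h fun k => Matrix.vecMul (μ k) (P k a ξ)) ∂σ := by
  classical
  rcases Set.eq_empty_or_nonempty D with hDe | ⟨μ0, hμ0⟩
  · refine ⟨0, fun _ => 0, ?_, ⟨0, ?_⟩, ?_⟩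
    · rw [hDe]
      exact ⟨convex_empty, fun x hx => absurd hx (Set.notMem_empty x)⟩
    · intro μ hμ; rw [hDe] at hμ; exact absurd hμ (Set.notMem_empty μ)
    · intro μ hμ; rw [hDe] at hμ; exact absurd hμ (Set.notMem_empty μ)
  -- basic facts about the domain
  have hmem : ∀ {μ : Fin K → Fin N → ℝ}, μ ∈ D → ∀ k, μ k ∈ Dk k := by
    intro μ hμ; rw [hD] at hμ; exact hμ
  have hmem' : ∀ {μ : Fin K → Fin N → ℝ}, (∀ k, μ k ∈ Dk k) → μ ∈ D := by
    intro μ hμ; rw [hD]; exact hμ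
  have hDpos : ∀ μ ∈ D, ∀ (k : Fin K) (i : Fin N), 0 < μ k i :=
    fun μ hμ k i => (hDksub k _ (hmem hμ k)).2 i
  have hN : ∀ _ : Fin K, 0 < N := by
    intro k
    by_contra hc
    push_neg at hc
    have hsum := (hDksub k _ (hmem hμ0 k)).1.2
    have hN0 : N = 0 := Nat.le_zero.mp hc
    subst hN0
    simp at hsum
  have hΦD : ∀ μ ∈ D, ∀ (a : A) (ξ : Ξ), (fun k => Matrix.vecMul (μ k) (P k a ξ)) ∈ D :=
    fun μ hμ a ξ => hmem' fun k => hDkinv k _ (hmem hμ k) a ξ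
  have hDpi : D = Set.pi Set.univ Dk := by
    rw [hD]; ext μ; simp [Set.mem_pi]
  have hDconv : Convex ℝ D := by rw [hDpi]; exact convex_pi fun k _ => hDkconvex k
  have hDcpt : IsCompact D := by rw [hDpi]; exact isCompact_univ_pi hDkcompact
  -- reward bound
  set Mr' : ℝ := max Mr 0 with hMr'def
  have hMr'0 : 0 ≤ Mr' := le_max_right _ _
  have hrbd : ∀ (a : A) (ξ : Ξ), ∀ μ ∈ D, |r a μ ξ| ≤ Mr' := by
    intro a ξ μ hμ
    rw [hr]
    have hinner : ∀ k, |∑ n, θ k a ξ n * μ k n| ≤ Mr' := by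
      intro k
      have h1 : |∑ n, θ k a ξ n * μ k n| ≤ ∑ n, |θ k a ξ n * μ k n| :=
        Finset.abs_sum_le_sum_abs _ _
      have h2 : ∀ n : Fin N, |θ k a ξ n * μ k n| ≤ Mr' * μ k n := by
        intro n
        rw [abs_mul, abs_of_nonneg ((hDksub k _ (hmem hμ k)).1.1 n)]
        exact mul_le_mul_of_nonneg_right ((hθbdd k a ξ n).trans (le_max_left _ _))
          ((hDksub k _ (hmem hμ k)).1.1 n)
      have h3 : (∑ n, Mr' * μ k n) = Mr' := by
        rw [← Finset.mul_sum, (hDksub k _ (hmem hμ k)).1.2, mul_one]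
      exact h1.trans ((Finset.sum_le_sum fun n _ => h2 n).trans_eq h3)
    calc |∑ k, ρ k * ∑ n, θ k a ξ n * μ k n| ≤ ∑ k, |ρ k * ∑ n, θ k a ξ n * μ k n| :=
        Finset.abs_sum_le_sum_abs _ _
      _ ≤ ∑ k, ρ k * Mr' := Finset.sum_le_sum fun k _ => by
          rw [abs_mul, abs_of_nonneg (hρ.1 k)]
          exact mul_le_mul_of_nonneg_left (hinner k) (hρ.1 k)
      _ = Mr' := by rw [← Finset.sum_mul, hρ.2, one_mul]
  have hrcont : ∀ a μ, Continuous fun ξ => r a μ ξ := by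
    intro a μ
    have heq : (fun ξ => r a μ ξ) = fun ξ => ∑ k, ρ k * ∑ n, θ k a ξ n * μ k n := by
      funext ξ; rw [hr]
    rw [heq]
    apply continuous_finset_sum; intro k _
    refine continuous_const.mul (continuous_finset_sum _ fun n _ => ?_)
    exact ((continuous_apply n).comp ((hθcont k).comp (Continuous.prodMk_right a))).mul
      continuous_const
  have hraff : ∀ (a : A) (ξ : Ξ) (x y : Fin K → Fin N → ℝ) (s t : ℝ),
      r a (s • x + t • y) ξ = s * r a x ξ + t * r a y ξ := by
    intro a ξ x y s t
    simp only [hr]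
    rw [Finset.mul_sum, Finset.mul_sum, ← Finset.sum_add_distrib]
    refine Finset.sum_congr rfl fun k _ => ?_
    have hin : (∑ n, θ k a ξ n * (s • x + t • y) k n) =
        s * (∑ n, θ k a ξ n * x k n) + t * ∑ n, θ k a ξ n * y k n := by
      rw [Finset.mul_sum, Finset.mul_sum, ← Finset.sum_add_distrib]
      refine Finset.sum_congr rfl fun n _ => ?_
      simp only [Pi.add_apply, Pi.smul_apply, smul_eq_mul]
      ring
    rw [hin]; ring
  -- the discounted value functions
  set L : ℝ := M / (1 - κ) with hLdef
  have h1κ : 0 < 1 - κ := by linarith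
  have hL0 : 0 ≤ L := (div_pos hM h1κ).le
  set αs : ℕ → ℝ := fun m => 1 - 1 / (m + 1) with hαsdef
  have hαid : ∀ m : ℕ, 1 - αs m = 1 / ((m : ℝ) + 1) := fun m => by
    simp only [hαsdef]; ring
  have hα0 : ∀ m, 0 ≤ αs m := by
    intro m
    have h1 : (0:ℝ) < (m:ℝ) + 1 := by positivity
    have h2 : 1 / ((m:ℝ) + 1) ≤ 1 := by
      rw [div_le_one h1]; linarith
    have := hαid m
    simp only [hαsdef]
    linarith
  have hα1 : ∀ m, αs m < 1 := by
    intro m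
    have h2 : 0 < 1 / ((m:ℝ) + 1) := by positivity
    simp only [hαsdef]
    linarith
  have hαtend : Tendsto (fun m => 1 - αs m) atTop (nhds 0) := by
    have heq : (fun m : ℕ => 1 - αs m) = fun m : ℕ => 1 / ((m : ℝ) + 1) := funext hαid
    rw [heq]
    exact tendsto_one_div_add_atTop_nhds_zero_nat
  have hv := fun m => key_discounted σ P hPcont r D hDconv hDpos hN hΦD Mr' hMr'0 hrcont hrbd
    hraff κ M hκ0 hκ1 hM hcontr hLip (αs m) (hα0 m) (hα1 m)
  choose v hv using hv
  -- recentered bias functions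
  set w : ℕ → (Fin K → Fin N → ℝ) → ℝ := fun m μ => v m μ - v m μ0 with hwdef
  set gs : ℕ → ℝ := fun m => (1 - αs m) * v m μ0 with hgdef
  -- a uniform bound for the Hilbert diameter of D
  obtain ⟨C, hC0, hCD⟩ : ∃ C : ℝ, 0 ≤ C ∧ ∀ μ ∈ D, ∀ ν ∈ D, (∑ k, dH (μ k) (ν k)) ≤ C := by
    have hcontE : ContinuousOn (fun p : (Fin K → Fin N → ℝ) × (Fin K → Fin N → ℝ) =>
        ∑ k, Edist (p.1 k) (p.2 k)) (D ×ˢ D) := by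
      intro p hp
      apply ContinuousAt.continuousWithinAt
      apply tendsto_finset_sum
      intro k _
      exact continuousAt_Edist
        (fun i => ((continuous_apply i).comp ((continuous_apply k).comp continuous_fst)).continuousAt)
        (fun i => ((continuous_apply i).comp ((continuous_apply k).comp continuous_snd)).continuousAt)
        (fun i => hDpos _ hp.1 k i) (fun i => hDpos _ hp.2 k i)
    obtain ⟨C, hC⟩ := (hDcpt.prod hDcpt).exists_bound_of_continuousOn hcontE
    refine ⟨max C 0, le_max_right _ _, fun μ hμ ν hν => ?_⟩
    have h1 : (∑ k, dH (μ k) (ν k)) ≤ ∑ k, Edist (μ k) (ν k) :=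
      Finset.sum_le_sum fun k _ => dH_le_Edist (hN k) (hDpos μ hμ k) (hDpos ν hν k)
    have h2 := hC (μ, ν) (Set.mk_mem_prod hμ hν)
    rw [Real.norm_eq_abs] at h2
    exact h1.trans ((le_abs_self _).trans (h2.trans (le_max_left _ _)))
  have hwB : ∀ m, ∀ μ ∈ D, |w m μ| ≤ L * C := by
    intro m μ hμ
    exact ((hv m).2.1 μ hμ μ0 hμ0).trans (mul_le_mul_of_nonneg_left (hCD μ hμ μ0 hμ0) hL0)
  have hwL : ∀ m, ∀ x ∈ D, ∀ y ∈ D, |w m x - w m y| ≤ L * ∑ k, dH (x k) (y k) := by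
    intro m x hx y hy
    have heq : w m x - w m y = v m x - v m y := by simp only [hwdef]; ring
    rw [heq]
    exact (hv m).2.1 x hx y hy
  have hgB : ∀ m, |gs m| ≤ Mr' := by
    intro m
    have h1 := (hv m).1 μ0 hμ0
    have h2 : 0 < 1 - αs m := by linarith [hα1 m]
    calc |gs m| = (1 - αs m) * |v m μ0| := by
          rw [hgdef]; rw [abs_mul, abs_of_nonneg h2.le]
      _ ≤ (1 - αs m) * (Mr' / (1 - αs m)) := mul_le_mul_of_nonneg_left h1 h2.le
      _ = Mr' := by field_simp
  -- integrability and integral bounds for Lipschitz functions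
  have hint : ∀ (h : (Fin K → Fin N → ℝ) → ℝ) (L' : ℝ), 0 ≤ L' →
      (∀ x ∈ D, ∀ y ∈ D, |h x - h y| ≤ L' * ∑ k, dH (x k) (y k)) →
      ∀ (c : ℝ) (a : A), ∀ μ ∈ D, Integrable (fun ξ =>
        r a μ ξ + c * h fun k => Matrix.vecMul (μ k) (P k a ξ)) σ := by
    intro h L' hL' hLh c a μ hμ
    have hc : Continuous fun ξ => r a μ ξ + c * h fun k => Matrix.vecMul (μ k) (P k a ξ) :=
      (hrcont a μ).add (continuous_const.mul
        (cont_h_comp P hPcont D hDpos hN h L' hL' hLh μ a fun ξ => hΦD μ hμ a ξ))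
    exact hc.integrable_of_hasCompactSupport (HasCompactSupport.of_compactSpace _)
  have hIbd : ∀ (h : (Fin K → Fin N → ℝ) → ℝ) (B' : ℝ), 0 ≤ B' → (∀ ν ∈ D, |h ν| ≤ B') →
      ∀ (c : ℝ), |c| ≤ 1 → ∀ (a : A), ∀ μ ∈ D,
        |∫ ξ, (r a μ ξ + c * h fun k => Matrix.vecMul (μ k) (P k a ξ)) ∂σ|
          ≤ Mr' + B' := by
    intro h B' hB'0 hB' c hc a μ hμ
    have hpt : ∀ ξ, ‖r a μ ξ + c * h fun k => Matrix.vecMul (μ k) (P k a ξ)‖ ≤ Mr' + B' := by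
      intro ξ
      rw [Real.norm_eq_abs]
      have h1 := hrbd a ξ μ hμ
      have h2 : |c * h fun k => Matrix.vecMul (μ k) (P k a ξ)| ≤ B' := by
        rw [abs_mul]
        have := hB' _ (hΦD μ hμ a ξ)
        calc |c| * |h fun k => Matrix.vecMul (μ k) (P k a ξ)| ≤ 1 * B' := by
              exact mul_le_mul hc this (abs_nonneg _) zero_le_one
          _ = B' := one_mul _
      calc |(r a μ ξ) + c * h fun k => Matrix.vecMul (μ k) (P k a ξ)|
          ≤ |r a μ ξ| + |c * h fun k => Matrix.vecMul (μ k) (P k a ξ)| := abs_add_le _ _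
        _ ≤ Mr' + B' := add_le_add h1 h2
    have hnorm := MeasureTheory.norm_integral_le_of_norm_le_const (μ := σ)
      (Filter.Eventually.of_forall hpt)
    simpa [Real.norm_eq_abs] using hnorm
  -- the Bellman equation for the recentered functions
  have hwveq : ∀ m, ∀ ν, w m ν = v m ν - v m μ0 := fun m ν => rfl
  have hweq : ∀ m, ∀ μ ∈ D, gs m + w m μ =
      ⨆ a : A, ∫ ξ, (r a μ ξ + αs m * w m fun k => Matrix.vecMul (μ k) (P k a ξ)) ∂σ := by
    intro m μ hμ
    have hIv : ∀ a : A, Integrable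
        (fun ξ => r a μ ξ + αs m * v m fun k => Matrix.vecMul (μ k) (P k a ξ)) σ :=
      fun a => hint (v m) L hL0 ((hv m).2.1) (αs m) a μ hμ
    have hi : ∀ a : A,
        (∫ ξ, (r a μ ξ + αs m * w m fun k => Matrix.vecMul (μ k) (P k a ξ)) ∂σ)
          = (∫ ξ, (r a μ ξ + αs m * v m fun k => Matrix.vecMul (μ k) (P k a ξ)) ∂σ)
            + -(αs m * v m μ0) := by
      intro a
      have heq : (fun ξ => r a μ ξ + αs m * w m fun k => Matrix.vecMul (μ k) (P k a ξ))
          = fun ξ => (r a μ ξ + αs m * v m fun k => Matrix.vecMul (μ k) (P k a ξ))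
            - αs m * v m μ0 := by
        funext ξ
        rw [hwveq]
        ring
      rw [heq, MeasureTheory.integral_sub (hIv a) (MeasureTheory.integrable_const _),
        MeasureTheory.integral_const]
      simp [measure_univ]
      ring
    have hvB0 : ∀ ν ∈ D, |v m ν| ≤ Mr' / (1 - αs m) := (hv m).1
    have h1αm : 0 < 1 - αs m := by linarith [hα1 m]
    have hbdd : BddAbove (Set.range fun a =>
        ∫ ξ, (r a μ ξ + αs m * v m fun k => Matrix.vecMul (μ k) (P k a ξ)) ∂σ) := by
      refine bddAbove_range_of_le (c := Mr' + Mr' / (1 - αs m)) fun a => ?_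
      exact (abs_le.1 (hIbd (v m) (Mr' / (1 - αs m)) (div_nonneg hMr'0 h1αm.le) hvB0 (αs m)
        (by rw [abs_of_nonneg (hα0 m)]; linarith [hα1 m]) a μ hμ)).2
    calc gs m + w m μ = v m μ + -(αs m * v m μ0) := by rw [hgdef, hwveq]; ring
      _ = (⨆ a : A, ∫ ξ, (r a μ ξ + αs m * v m fun k => Matrix.vecMul (μ k) (P k a ξ)) ∂σ)
          + -(αs m * v m μ0) := by rw [← (hv m).2.2.2 μ hμ]
      _ = ⨆ a : A, ((∫ ξ, (r a μ ξ + αs m * v m fun k => Matrix.vecMul (μ k) (P k a ξ)) ∂σ)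
          + -(αs m * v m μ0)) := (iSup_add_const' hbdd).symm
      _ = ⨆ a : A, ∫ ξ, (r a μ ξ + αs m * w m fun k => Matrix.vecMul (μ k) (P k a ξ)) ∂σ := by
          congr 1
          funext a
          exact (hi a).symm
  -- limits along an ultrafilter
  set U : Ultrafilter ℕ := Ultrafilter.of atTop with hUdef
  have hUle : (U : Filter ℕ) ≤ atTop := Ultrafilter.of_le _
  have hUb : (U : Filter ℕ).NeBot := U.neBot
  have hex : ∀ μ ∈ D, ∃ c, Tendsto (fun m => w m μ) U (nhds c) := by
    intro μ hμ
    have hball : ∀ m, w m μ ∈ Set.Icc (-(L * C)) (L * C) := fun m => by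
      have := abs_le.1 (hwB m μ hμ); exact ⟨this.1, this.2⟩
    have hf : (Ultrafilter.map (fun m => w m μ) U : Filter ℝ)
        ≤ Filter.principal (Set.Icc (-(L * C)) (L * C)) := by
      rw [Ultrafilter.coe_map, Filter.le_principal_iff, Filter.mem_map]
      exact Filter.Eventually.of_forall hball
    obtain ⟨c, -, hc⟩ := isCompact_Icc.ultrafilter_le_nhds (Ultrafilter.map (fun m => w m μ) U) hf
    rw [Ultrafilter.coe_map] at hc
    exact ⟨c, hc⟩
  choose hbf hbfspec using hex
  set hb : (Fin K → Fin N → ℝ) → ℝ := fun μ => if hμ : μ ∈ D then hbf μ hμ else 0 with hbdef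
  have hbt : ∀ μ (hμ : μ ∈ D), Tendsto (fun m => w m μ) U (nhds (hb μ)) := by
    intro μ hμ
    show Tendsto _ _ (nhds (if hμ' : μ ∈ D then hbf μ hμ' else 0))
    rw [dif_pos hμ]
    exact hbfspec μ hμ
  obtain ⟨g0, hg0⟩ : ∃ c, Tendsto gs U (nhds c) := by
    have hball : ∀ m, gs m ∈ Set.Icc (-Mr') Mr' := fun m => by
      have := abs_le.1 (hgB m); exact ⟨this.1, this.2⟩
    have hf : (Ultrafilter.map gs U : Filter ℝ) ≤ Filter.principal (Set.Icc (-Mr') Mr') := by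
      rw [Ultrafilter.coe_map, Filter.le_principal_iff, Filter.mem_map]
      exact Filter.Eventually.of_forall hball
    obtain ⟨c, -, hc⟩ := isCompact_Icc.ultrafilter_le_nhds (Ultrafilter.map gs U) hf
    rw [Ultrafilter.coe_map] at hc
    exact ⟨c, hc⟩
  -- properties of the limit bias
  have hbB : ∀ μ ∈ D, |hb μ| ≤ L * C := fun μ hμ =>
    le_of_tendsto' (hbt μ hμ).abs fun m => hwB m μ hμ
  have hbLip : ∀ x ∈ D, ∀ y ∈ D, |hb x - hb y| ≤ L * ∑ k, dH (x k) (y k) := fun x hx y hy =>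
    le_of_tendsto' ((hbt x hx).sub (hbt y hy)).abs fun m => hwL m x hx y hy
  have hbC : ConvexOn ℝ D hb := by
    refine ⟨hDconv, fun x hx y hy s t hs ht hst => ?_⟩
    have hxy : s • x + t • y ∈ D := hDconv hx hy hs ht hst
    have h1 : Tendsto (fun m => w m (s • x + t • y)) U (nhds (hb (s • x + t • y))) := hbt _ hxy
    have h2 : Tendsto (fun m => s * w m x + t * w m y) U (nhds (s * hb x + t * hb y)) :=
      ((hbt x hx).const_mul s).add ((hbt y hy).const_mul t)
    have hle : ∀ m, w m (s • x + t • y) ≤ s * w m x + t * w m y := by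
      intro m
      have hcv := (hv m).2.2.1.2 hx hy hs ht hst
      have hc1 : v m (s • x + t • y) ≤ s * v m x + t * v m y := by
        simpa [smul_eq_mul] using hcv
      have : s * v m μ0 + t * v m μ0 = v m μ0 := by
        rw [← add_mul, hst, one_mul]
      simp only [hwveq]
      nlinarith [hc1]
    simpa [smul_eq_mul] using le_of_tendsto_of_tendsto' h1 h2 hle
  -- uniform convergence along the ultrafilter, via equi-Lipschitz continuity
  have hOopen : IsOpen {ν : Fin K → Fin N → ℝ | ∀ k i, 0 < ν k i} := by
    have heq : {ν : Fin K → Fin N → ℝ | ∀ k i, 0 < ν k i} =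
        ⋂ (k : Fin K), ⋂ (i : Fin N), {ν : Fin K → Fin N → ℝ | 0 < ν k i} := by
      ext ν; simp [Set.mem_iInter]
    rw [heq]
    exact isOpen_iInter_of_finite fun k => isOpen_iInter_of_finite fun i =>
      isOpen_lt continuous_const ((continuous_apply i).comp (continuous_apply k))
  have hunif : ∀ ε : ℝ, 0 < ε → ∀ᶠ m in (U : Filter ℕ), ∀ ν ∈ D, |w m ν - hb ν| ≤ ε := by
    intro ε hε
    have hL1 : 0 < L + 1 := by linarith
    set ε' : ℝ := ε / (3 * (L + 1)) with hε'def
    have hε' : 0 < ε' := div_pos hε (by linarith)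
    have hLε' : L * ε' ≤ ε / 3 := by
      rw [hε'def, mul_div_assoc', div_le_div_iff₀ (by linarith) (by norm_num)]
      nlinarith [hε.le, hL0]
    set Uc : (Fin K → Fin N → ℝ) → Set (Fin K → Fin N → ℝ) := fun c =>
      {ν | ∀ k i, 0 < ν k i} ∩ {ν | (∑ k, Edist (ν k) (c k)) < ε'} with hUcdef
    have hUopen : ∀ c ∈ D, IsOpen (Uc c) := by
      intro c hc
      rw [isOpen_iff_mem_nhds]
      intro ν0 hν0
      have hcontAt : ContinuousAt (fun ν : Fin K → Fin N → ℝ => ∑ k, Edist (ν k) (c k)) ν0 := by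
        apply tendsto_finset_sum
        intro k _
        exact continuousAt_Edist
          (fun i => ((continuous_apply i).comp (continuous_apply k)).continuousAt)
          (fun i => continuousAt_const) (fun i => hν0.1 k i) (fun i => hDpos _ hc k i)
      have h1 : ∀ᶠ ν in nhds ν0, (∑ k, Edist (ν k) (c k)) < ε' :=
        hcontAt.eventually_lt_const hν0.2
      have h2 : ∀ᶠ ν in nhds ν0, ∀ k i, 0 < ν k i := hOopen.eventually_mem hν0.1
      filter_upwards [h1, h2] with ν hν1 hν2 using ⟨hν2, hν1⟩
    have hcover : D ⊆ ⋃ c ∈ D, Uc c := by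
      intro ν hν
      refine Set.mem_biUnion hν ⟨fun k i => hDpos _ hν k i, ?_⟩
      have hz : (∑ k, Edist (ν k) (ν k)) = 0 :=
        Finset.sum_eq_zero fun k _ => Edist_self (hDpos _ hν k)
      rw [Set.mem_setOf_eq, hz]
      exact hε'
    obtain ⟨t, htD, htfin, htcover⟩ := hDcpt.elim_finite_subcover_image hUopen hcover
    have hev : ∀ᶠ m in (U : Filter ℕ), ∀ c ∈ t, |w m c - hb c| ≤ ε / 3 := by
      rw [Filter.eventually_all_finite htfin]
      intro c hc
      have hcd : c ∈ D := htD hc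
      have hdist : ∀ᶠ m in (U : Filter ℕ), dist (w m c) (hb c) < ε / 3 :=
        (Metric.tendsto_nhds.mp (hbt c hcd)) (ε / 3) (by linarith)
      filter_upwards [hdist] with m hm
      rw [Real.dist_eq] at hm
      exact hm.le
    filter_upwards [hev] with m hm ν hν
    obtain ⟨c, hct, hνU⟩ := Set.mem_iUnion₂.mp (htcover hν)
    have hcD : c ∈ D := htD hct
    have hρ1 : (∑ k, dH (ν k) (c k)) ≤ ε' := by
      have h1 : (∑ k, dH (ν k) (c k)) ≤ ∑ k, Edist (ν k) (c k) :=
        Finset.sum_le_sum fun k _ => dH_le_Edist (hN k) (hDpos _ hν k) (hDpos _ hcD k)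
      exact h1.trans hνU.2.le
    have hρ2 : (∑ k, dH (c k) (ν k)) ≤ ε' := by
      have h1 : (∑ k, dH (c k) (ν k)) ≤ ∑ k, Edist (c k) (ν k) :=
        Finset.sum_le_sum fun k _ => dH_le_Edist (hN k) (hDpos _ hcD k) (hDpos _ hν k)
      have h2 : (∑ k, Edist (c k) (ν k)) = ∑ k, Edist (ν k) (c k) :=
        Finset.sum_congr rfl fun k _ => Edist_symm
      rw [h2] at h1
      exact h1.trans hνU.2.le
    have e1 : |w m ν - w m c| ≤ L * ε' :=
      (hwL m ν hν c hcD).trans (mul_le_mul_of_nonneg_left hρ1 hL0)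
    have e2 : |hb c - hb ν| ≤ L * ε' :=
      (hbLip c hcD ν hν).trans (mul_le_mul_of_nonneg_left hρ2 hL0)
    have e3 := hm c hct
    calc |w m ν - hb ν| = |(w m ν - w m c) + (w m c - hb c) + (hb c - hb ν)| := by ring_nf
      _ ≤ |(w m ν - w m c) + (w m c - hb c)| + |hb c - hb ν| := abs_add_le _ _
      _ ≤ |w m ν - w m c| + |w m c - hb c| + |hb c - hb ν| :=
          add_le_add_left (abs_add_le _ _) _
      _ ≤ ε := by linarith
  -- the ergodic eigen-equation
  have hfinal : ∀ μ ∈ D, g0 + hb μ =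
      ⨆ a : A, ∫ ξ, (r a μ ξ + hb fun k => Matrix.vecMul (μ k) (P k a ξ)) ∂σ := by
    intro μ hμ
    have hLHS : Tendsto (fun m => gs m + w m μ) U (nhds (g0 + hb μ)) := hg0.add (hbt μ hμ)
    have hRHS : Tendsto (fun m => gs m + w m μ) U
        (nhds (⨆ a : A, ∫ ξ, (r a μ ξ + hb fun k => Matrix.vecMul (μ k) (P k a ξ)) ∂σ)) := by
      rw [Metric.tendsto_nhds]
      intro ε hε
      have hsmall1 := hunif (ε / 4) (by linarith)
      have hsmall2 : ∀ᶠ m in (U : Filter ℕ), (1 - αs m) * (L * C) < ε / 4 := by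
        have htt : Tendsto (fun m => (1 - αs m) * (L * C)) atTop (nhds 0) := by
          have := hαtend.mul_const (L * C)
          simpa using this
        exact (htt.eventually_lt_const (by linarith : (0:ℝ) < ε / 4)).filter_mono hUle
      filter_upwards [hsmall1, hsmall2] with m hm1 hm2
      rw [Real.dist_eq, hweq m μ hμ]
      have hbB0 : 0 ≤ L * C := mul_nonneg hL0 hC0
      have hαm1 : |αs m| ≤ 1 := by
        rw [abs_of_nonneg (hα0 m)]; exact (hα1 m).le
      have hbdd1 : BddAbove (Set.range fun a =>
          ∫ ξ, (r a μ ξ + αs m * w m fun k => Matrix.vecMul (μ k) (P k a ξ)) ∂σ) :=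
        bddAbove_range_of_le fun a =>
          (abs_le.1 (hIbd (w m) (L * C) hbB0 (hwB m) (αs m) hαm1 a μ hμ)).2
      have hbdd2 : BddAbove (Set.range fun a =>
          ∫ ξ, (r a μ ξ + hb fun k => Matrix.vecMul (μ k) (P k a ξ)) ∂σ) := by
        refine bddAbove_range_of_le (c := Mr' + L * C) fun a => ?_
        have := hIbd hb (L * C) hbB0 hbB 1 (by norm_num) a μ hμ
        simp only [one_mul] at this
        exact (abs_le.1 this).2
      have hcomp : ∀ a : A,
          |(∫ ξ, (r a μ ξ + αs m * w m fun k => Matrix.vecMul (μ k) (P k a ξ)) ∂σ)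
            - ∫ ξ, (r a μ ξ + hb fun k => Matrix.vecMul (μ k) (P k a ξ)) ∂σ| ≤ ε / 2 := by
        intro a
        have hi1 : Integrable
            (fun ξ => r a μ ξ + αs m * w m fun k => Matrix.vecMul (μ k) (P k a ξ)) σ :=
          hint (w m) L hL0 (hwL m) (αs m) a μ hμ
        have hi2' : Integrable
            (fun ξ => r a μ ξ + 1 * hb fun k => Matrix.vecMul (μ k) (P k a ξ)) σ :=
          hint hb L hL0 hbLip 1 a μ hμ
        have hi2 : Integrable
            (fun ξ => r a μ ξ + hb fun k => Matrix.vecMul (μ k) (P k a ξ)) σ := by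
          simpa [one_mul] using hi2'
        rw [← MeasureTheory.integral_sub hi1 hi2]
        have hpt : ∀ ξ, ‖(r a μ ξ + αs m * w m fun k => Matrix.vecMul (μ k) (P k a ξ))
            - (r a μ ξ + hb fun k => Matrix.vecMul (μ k) (P k a ξ))‖ ≤ ε / 2 := by
          intro ξ
          rw [Real.norm_eq_abs]
          set ν' : Fin K → Fin N → ℝ := fun k => Matrix.vecMul (μ k) (P k a ξ) with hν'def
          have hν'D : ν' ∈ D := hΦD μ hμ a ξ
          have heq2 : (r a μ ξ + αs m * w m ν') - (r a μ ξ + hb ν')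
              = αs m * (w m ν' - hb ν') + -((1 - αs m) * hb ν') := by ring
          rw [heq2]
          have hh1 : |αs m * (w m ν' - hb ν')| ≤ ε / 4 := by
            rw [abs_mul]
            calc |αs m| * |w m ν' - hb ν'| ≤ 1 * (ε / 4) :=
                mul_le_mul hαm1 (hm1 ν' hν'D) (abs_nonneg _) zero_le_one
              _ = ε / 4 := one_mul _
          have hh2 : |-((1 - αs m) * hb ν')| ≤ ε / 4 := by
            rw [abs_neg, abs_mul, abs_of_nonneg (by linarith [hα1 m] : (0:ℝ) ≤ 1 - αs m)]
            calc (1 - αs m) * |hb ν'| ≤ (1 - αs m) * (L * C) :=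
                mul_le_mul_of_nonneg_left (hbB ν' hν'D) (by linarith [hα1 m])
              _ ≤ ε / 4 := hm2.le
          calc |αs m * (w m ν' - hb ν') + -((1 - αs m) * hb ν')|
              ≤ |αs m * (w m ν' - hb ν')| + |-((1 - αs m) * hb ν')| := abs_add_le _ _
            _ ≤ ε / 2 := by linarith
        have hnorm := MeasureTheory.norm_integral_le_of_norm_le_const (μ := σ)
          (Filter.Eventually.of_forall hpt)
        simpa [Real.norm_eq_abs] using hnorm
      have := abs_iSup_sub_iSup_le' hbdd1 hbdd2 hcomp
      calc |(⨆ a : A, ∫ ξ, (r a μ ξ + αs m * w m fun k => Matrix.vecMul (μ k) (P k a ξ)) ∂σ)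
          - ⨆ a : A, ∫ ξ, (r a μ ξ + hb fun k => Matrix.vecMul (μ k) (P k a ξ)) ∂σ| ≤ ε / 2 :=
          this
        _ < ε := by linarith
    exact tendsto_nhds_unique hLHS hRHS
  exact ⟨g0, hb, hbC, ⟨L, hbLip⟩, hfinal⟩
end

section
/- Fix a_0 ∈ (0,1/2), a_1 = 1−a_0, and k ∈ {0,1}. A linear function h(μ_1,μ_3) = α·μ_1 + β·μ_3 and a constant g ∈ ℝ satisfy the Kolmogorov (fixed-policy) eigen-equation h(μ_1,μ_3) + g = (1−a_k)²(1−μ_3) + a_k²(1−μ_1) + h((1−a_k)(1−μ_3), a_k(1−μ_1)) for all (μ_1,μ_3) ∈ Δ₃^≤ if and only if g = (a_k³ + (1−a_k)³)/(1 − a_k(1−a_k)), α = (a_k(1−a_k)² − a_k²)/(1 − a_k(1−a_k)), and β = ((1−a_k)a_k² − (1−a_k)²)/(1 − a_k(1−a_k)). In particular the value of g is the same for k = 0 and k = 1. -/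
/-- bias of the Kolmogorov operator in the counter-example.
With `a ∈ {a₀, 1 - a₀}` for `a₀ ∈ (0,1/2)`, a linear function
`h(μ₁,μ₃) = α μ₁ + β μ₃` and a constant `g` satisfy the fixed-policy
eigen-equation on `Δ₃^≤` iff `g`, `α`, `β` are given by the explicit formulas;
moreover the value of `g` is the same for `a₀` and `a₁ = 1 - a₀`. -/
theorem kolmogorov_bias_characterization
    (a0 : ℝ) (ha0 : a0 ∈ Set.Ioo (0 : ℝ) (1 / 2))
    (a : ℝ) (ha : a = a0 ∨ a = 1 - a0) (g α β : ℝ) :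
    ((∀ μ1 μ3 : ℝ, 0 ≤ μ1 → 0 ≤ μ3 → μ1 + μ3 ≤ 1 →
        α * μ1 + β * μ3 + g =
          (1 - a) ^ 2 * (1 - μ3) + a ^ 2 * (1 - μ1) +
            (α * ((1 - a) * (1 - μ3)) + β * (a * (1 - μ1)))) ↔
      (g = (a ^ 3 + (1 - a) ^ 3) / (1 - a * (1 - a)) ∧
        α = (a * (1 - a) ^ 2 - a ^ 2) / (1 - a * (1 - a)) ∧
        β = ((1 - a) * a ^ 2 - (1 - a) ^ 2) / (1 - a * (1 - a))))
    ∧ (a0 ^ 3 + (1 - a0) ^ 3) / (1 - a0 * (1 - a0)) =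
        ((1 - a0) ^ 3 + (1 - (1 - a0)) ^ 3) / (1 - (1 - a0) * (1 - (1 - a0))) := by
  have hD : (1 : ℝ) - a * (1 - a) ≠ 0 := by
    rcases ha with h | h <;> rw [h] <;> nlinarith [ha0.1, ha0.2, sq_nonneg (2 * a0 - 1)]
  constructor
  · constructor
    · intro H
      have h0 := H 0 0 le_rfl le_rfl (by norm_num)
      have h1 := H 1 0 (by norm_num) le_rfl (by norm_num)
      have h2 := H 0 1 le_rfl (by norm_num) (by norm_num)
      refine ⟨?_, ?_, ?_⟩ <;> rw [eq_div_iff hD]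
      · linear_combination a * (1 - a) * h0 + (1 - a) ^ 2 * h1 + a ^ 2 * h2
      · linear_combination (a - 1) * h0 + h1 - a * h2
      · linear_combination (-a) * h0 - (1 - a) * h1 + h2
    · rintro ⟨hg, hα, hβ⟩ μ1 μ3 _ _ _
      subst hg hα hβ
      field_simp
      ring
  · have hD0 : (1 : ℝ) - a0 * (1 - a0) ≠ 0 := by nlinarith [ha0.1, ha0.2, sq_nonneg (2*a0 - 1)]
    have : (1 : ℝ) - (1 - a0) * (1 - (1 - a0)) = 1 - a0 * (1 - a0) := by ring
    rw [this]
    ring_nf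
end

section
/- Suboptimality gap of steady-state policies: assume A is a compact metric space, for each k ∈ {1,…,K} the map P^k : A → ℝ^{N×N} is continuous with values in row-stochastic matrices having ALL entries strictly positive, θ^k : A → ℝ^N is continuous and bounded, ρ ∈ Δ_K, and r(a,μ) = Σ_k ρ_k⟨θ^k(a), μ^k⟩. Let S = {(a,μ) ∈ A×(Δ_N)^K : μ = μP(a)} (where μP(a) = (μ^1P^1(a),…,μ^KP^K(a))) and ḡ = sup_{(a,μ)∈S} r(a,μ). For any bounded injective map φ : (Δ_N)^K → ℝ^{KN}, define the Lagrangian L^φ(a,μ,λ) = r(a, μP(a)) + ⟨λ, φ(μP(a)) − φ(μ)⟩ and the dual value g^φ = inf_{λ∈ℝ^{KN}} sup_{(a,μ)∈A×(Δ_N)^K} L^φ(a,μ,λ). Then for every initial state μ_0 ∈ (Δ_N)^K: ḡ ≤ sup_{(a_t)_{t≥1}∈A^ℕ} liminf_{T→∞} (1/T)·Σ_{t=1}^T r(a_t, μ_t) ≤ g^φ, where μ_t = μ_{t−1}P(a_t). -/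
open Filter Topology

section mySteadyStateHelpers
open Finset

section helpers
variable {N : ℕ}

lemma my_vecMul_apply (ν : Fin N → ℝ) (P : Matrix (Fin N) (Fin N) ℝ) (j : Fin N) :
    Matrix.vecMul ν P j = ∑ i, ν i * P i j := by
  simp [Matrix.vecMul, dotProduct]

lemma my_mem_simplex (P : Matrix (Fin N) (Fin N) ℝ)
    (hst : ∀ i, (fun j => P i j) ∈ stdSimplex ℝ (Fin N))
    {ν : Fin N → ℝ} (hν : ν ∈ stdSimplex ℝ (Fin N)) :
    Matrix.vecMul ν P ∈ stdSimplex ℝ (Fin N) := by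
  constructor
  · intro j
    rw [my_vecMul_apply]
    exact Finset.sum_nonneg fun i _ => mul_nonneg (hν.1 i) ((hst i).1 j)
  · calc ∑ j, Matrix.vecMul ν P j = ∑ i, ν i * ∑ j, P i j := by
          simp_rw [my_vecMul_apply, Finset.mul_sum]; rw [Finset.sum_comm]
      _ = 1 := by
          have : ∀ i : Fin N, ν i * ∑ j, P i j = ν i := fun i => by rw [(hst i).2, mul_one]
          simp_rw [this]; exact hν.2

lemma my_contract (P : Matrix (Fin N) (Fin N) ℝ)
    (hst : ∀ i, (fun j => P i j) ∈ stdSimplex ℝ (Fin N))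
    {δ : ℝ} (hδ : ∀ i j, δ ≤ P i j)
    (ν ν' : Fin N → ℝ) (hs : ∑ i, ν i = ∑ i, ν' i) :
    ∑ j, |Matrix.vecMul ν P j - Matrix.vecMul ν' P j|
      ≤ (1 - N * δ) * ∑ i, |ν i - ν' i| := by
  have h0 : ∑ i, (ν i - ν' i) = 0 := by rw [Finset.sum_sub_distrib, hs, sub_self]
  have key : ∀ j, Matrix.vecMul ν P j - Matrix.vecMul ν' P j
      = ∑ i, (ν i - ν' i) * (P i j - δ) := by
    intro j
    calc Matrix.vecMul ν P j - Matrix.vecMul ν' P j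
        = ∑ i, (ν i - ν' i) * P i j := by
          rw [my_vecMul_apply, my_vecMul_apply, ← Finset.sum_sub_distrib]
          exact Finset.sum_congr rfl fun i _ => (sub_mul _ _ _).symm
      _ = ∑ i, (ν i - ν' i) * (P i j - δ) + δ * ∑ i, (ν i - ν' i) := by
          rw [Finset.mul_sum, ← Finset.sum_add_distrib]
          exact Finset.sum_congr rfl fun i _ => by ring
      _ = ∑ i, (ν i - ν' i) * (P i j - δ) := by rw [h0, mul_zero, add_zero]
  calc ∑ j, |Matrix.vecMul ν P j - Matrix.vecMul ν' P j|
      ≤ ∑ j, ∑ i, |ν i - ν' i| * (P i j - δ) := by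
        refine Finset.sum_le_sum fun j _ => ?_
        rw [key]
        refine (Finset.abs_sum_le_sum_abs _ _).trans (Finset.sum_le_sum fun i _ => ?_)
        rw [abs_mul, abs_of_nonneg (sub_nonneg.2 (hδ i j))]
    _ = ∑ i, |ν i - ν' i| * (1 - N * δ) := by
        rw [Finset.sum_comm]
        refine Finset.sum_congr rfl fun i _ => ?_
        rw [← Finset.mul_sum, Finset.sum_sub_distrib, (hst i).2, Finset.sum_const,
          Finset.card_univ, Fintype.card_fin, nsmul_eq_mul]
    _ = (1 - N * δ) * ∑ i, |ν i - ν' i| := by rw [← Finset.sum_mul, mul_comm]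

lemma my_delta (P : Matrix (Fin N) (Fin N) ℝ)
    (hst : ∀ i, (fun j => P i j) ∈ stdSimplex ℝ (Fin N))
    (hpos : ∀ i j, 0 < P i j) (hne : Nonempty (Fin N)) :
    ∃ δ : ℝ, 0 < δ ∧ (∀ i j, δ ≤ P i j) ∧ (N : ℝ) * δ ≤ 1 := by
  obtain ⟨p, -, hp⟩ := Finset.exists_min_image (Finset.univ ×ˢ Finset.univ)
    (fun p : Fin N × Fin N => P p.1 p.2)
    (by simp [Finset.univ_nonempty.product Finset.univ_nonempty])
  refine ⟨P p.1 p.2, hpos _ _, fun i j => hp (i, j) (by simp), ?_⟩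
  calc (N : ℝ) * P p.1 p.2 = ∑ _j : Fin N, P p.1 p.2 := by
        rw [Finset.sum_const, Finset.card_univ, Fintype.card_fin, nsmul_eq_mul]
    _ ≤ ∑ j, P p.1 j := Finset.sum_le_sum fun j _ => hp (p.1, j) (by simp)
    _ = 1 := (hst p.1).2

lemma my_cont_vecMul (P : Matrix (Fin N) (Fin N) ℝ) :
    Continuous fun ν : Fin N → ℝ => Matrix.vecMul ν P := by
  apply continuous_pi
  intro j
  simp only [my_vecMul_apply]
  exact continuous_finset_sum _ fun i _ => (continuous_apply i).mul continuous_const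

lemma my_nonempty {ν : Fin N → ℝ} (hν : ν ∈ stdSimplex ℝ (Fin N)) : Nonempty (Fin N) := by
  by_contra h
  have : ∑ i, ν i = 0 := by
    rw [not_nonempty_iff] at h
    simp
  rw [hν.2] at this
  norm_num at this

/-- Trajectories under a positive stochastic matrix converge to a fixed stationary
distribution, from any starting point in the simplex. -/
lemma my_tendsto (P : Matrix (Fin N) (Fin N) ℝ)
    (hst : ∀ i, (fun j => P i j) ∈ stdSimplex ℝ (Fin N))
    (hpos : ∀ i j, 0 < P i j)
    (g : ℕ → Fin N → ℝ) (hg0 : g 0 ∈ stdSimplex ℝ (Fin N))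
    (hgS : ∀ t, g (t + 1) = Matrix.vecMul (g t) P)
    {μ : Fin N → ℝ} (hμ : μ ∈ stdSimplex ℝ (Fin N)) (hfix : Matrix.vecMul μ P = μ) :
    Filter.Tendsto g Filter.atTop (𝓝 μ) := by
  have hne : Nonempty (Fin N) := my_nonempty hg0
  obtain ⟨δ, hδ0, hδle, hδN⟩ := my_delta P hst hpos hne
  set c : ℝ := 1 - N * δ with hc
  have hc0 : 0 ≤ c := by simp [hc, hδN]
  have hc1 : c < 1 := by
    have hN : 0 < (N : ℝ) := by exact_mod_cast Fintype.card_fin N ▸ Fintype.card_pos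
    have : 0 < (N : ℝ) * δ := by positivity
    simp [hc]; linarith
  have hmem : ∀ t, g t ∈ stdSimplex ℝ (Fin N) := by
    intro t
    induction t with
    | zero => exact hg0
    | succ t ih => rw [hgS]; exact my_mem_simplex P hst ih
  set C : ℝ := ∑ j, |g 0 j - μ j| with hC
  have hCnn : 0 ≤ C := Finset.sum_nonneg fun j _ => abs_nonneg _
  have hkey : ∀ t, ∑ j, |g t j - μ j| ≤ c ^ t * C := by
    intro t
    induction t with
    | zero => simp [hC]
    | succ t ih =>
      calc ∑ j, |g (t+1) j - μ j| = ∑ j, |Matrix.vecMul (g t) P j - Matrix.vecMul μ P j| := by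
            rw [hgS, hfix]
        _ ≤ c * ∑ j, |g t j - μ j| :=
            my_contract P hst hδle _ _ (by rw [(hmem t).2, hμ.2])
        _ ≤ c * (c ^ t * C) := by
            exact mul_le_mul_of_nonneg_left ih hc0
        _ = c ^ (t+1) * C := by ring
  rw [tendsto_pi_nhds]
  intro j
  rw [← tendsto_sub_nhds_zero_iff]
  refine squeeze_zero_norm (fun t => ?_)
    (by simpa using (tendsto_pow_atTop_nhds_zero_of_lt_one hc0 hc1).mul_const C)
  calc ‖g t j - μ j‖ = |g t j - μ j| := rfl
      _ ≤ ∑ j, |g t j - μ j| :=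
          Finset.single_le_sum (f := fun j => |g t j - μ j|)
            (fun i _ => abs_nonneg _) (Finset.mem_univ j)
      _ ≤ c ^ t * C := hkey t

/-- Existence of a stationary distribution for a positive stochastic matrix. -/
lemma my_exists (P : Matrix (Fin N) (Fin N) ℝ)
    (hst : ∀ i, (fun j => P i j) ∈ stdSimplex ℝ (Fin N))
    (hpos : ∀ i j, 0 < P i j)
    (ν₀ : Fin N → ℝ) (hν₀ : ν₀ ∈ stdSimplex ℝ (Fin N)) :
    ∃ μ ∈ stdSimplex ℝ (Fin N), Matrix.vecMul μ P = μ := by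
  have hne : Nonempty (Fin N) := my_nonempty hν₀
  obtain ⟨δ, hδ0, hδle, hδN⟩ := my_delta P hst hpos hne
  set c : ℝ := 1 - N * δ with hc
  have hc0 : 0 ≤ c := by simp [hc, hδN]
  have hc1 : c < 1 := by
    have hN : 0 < (N : ℝ) := by exact_mod_cast Fintype.card_fin N ▸ Fintype.card_pos
    have : 0 < (N : ℝ) * δ := by positivity
    simp [hc]; linarith
  set g : ℕ → Fin N → ℝ := fun t => (fun ν => Matrix.vecMul ν P)^[t] ν₀ with hg
  have hg0 : g 0 = ν₀ := rfl
  have hgS : ∀ t, g (t + 1) = Matrix.vecMul (g t) P := fun t =>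
    Function.iterate_succ_apply' _ _ _
  have hmem : ∀ t, g t ∈ stdSimplex ℝ (Fin N) := by
    intro t
    induction t with
    | zero => exact hν₀
    | succ t ih => rw [hgS]; exact my_mem_simplex P hst ih
  set C : ℝ := ∑ j, |g 0 j - g 1 j| with hC
  have hCnn : 0 ≤ C := Finset.sum_nonneg fun j _ => abs_nonneg _
  have hkey : ∀ t, ∑ j, |g t j - g (t+1) j| ≤ c ^ t * C := by
    intro t
    induction t with
    | zero => simp [hC]
    | succ t ih =>
      have hcon := my_contract P hst hδle (g t) (g (t+1))
        (by rw [(hmem t).2, (hmem (t+1)).2])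
      rw [← hgS t, ← hgS (t+1)] at hcon
      calc ∑ j, |g (t+1) j - g (t+1+1) j| ≤ c * ∑ j, |g t j - g (t+1) j| := hcon
        _ ≤ c * (c ^ t * C) := mul_le_mul_of_nonneg_left ih hc0
        _ = c ^ (t+1) * C := by ring
  have hdist : ∀ t, dist (g t) (g (t + 1)) ≤ C * c ^ t := by
    intro t
    rw [dist_pi_le_iff (by positivity)]
    intro j
    rw [Real.dist_eq]
    calc |g t j - g (t+1) j| ≤ ∑ j, |g t j - g (t+1) j| :=
          Finset.single_le_sum (f := fun j => |g t j - g (t+1) j|)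
            (fun i _ => abs_nonneg _) (Finset.mem_univ j)
      _ ≤ c ^ t * C := hkey t
      _ = C * c ^ t := mul_comm _ _
  have hcauchy : CauchySeq g := cauchySeq_of_le_geometric c C hc1 hdist
  obtain ⟨μ, hμt⟩ := cauchySeq_tendsto_of_complete hcauchy
  have hμmem : μ ∈ stdSimplex ℝ (Fin N) :=
    (isClosed_stdSimplex ℝ (Fin N)).mem_of_tendsto hμt (Filter.Eventually.of_forall hmem)
  refine ⟨μ, hμmem, ?_⟩
  have h1 : Tendsto (fun t => g (t + 1)) atTop (𝓝 μ) := hμt.comp (tendsto_add_atTop_nat 1)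
  have h2 : Tendsto (fun t => Matrix.vecMul (g t) P) atTop (𝓝 (Matrix.vecMul μ P)) :=
    ((my_cont_vecMul P).tendsto μ).comp hμt
  have h3 : Tendsto (fun t => g (t + 1)) atTop (𝓝 (Matrix.vecMul μ P)) := by
    simpa only [hgS] using h2
  exact tendsto_nhds_unique h3 h1

end helpers


end mySteadyStateHelpers

/-- Proposition 3 of the paper: suboptimality gap of
steady-state policies. With positive transition matrices, the optimal
steady-state gain `ḡ`, the optimal long-run average gain `g*(μ₀)` and the
dual value `g^φ` of the Lagrangian associated with any bounded injective
`φ` satisfy `ḡ ≤ g*(μ₀) ≤ g^φ` for every initial state `μ₀`. -/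
theorem steady_state_duality_gap
    {A : Type*} [MetricSpace A] [CompactSpace A] [Nonempty A]
    (K N : ℕ)
    (P : Fin K → A → Matrix (Fin N) (Fin N) ℝ)
    (hPcont : ∀ k, Continuous (P k))
    (hPstoch : ∀ k a i, (fun j => P k a i j) ∈ stdSimplex ℝ (Fin N))
    (hPpos : ∀ k a i j, 0 < P k a i j)
    (θ : Fin K → A → Fin N → ℝ) (hθcont : ∀ k, Continuous (θ k))
    (Mθ : ℝ) (hθbdd : ∀ k a n, |θ k a n| ≤ Mθ)
    (ρ : Fin K → ℝ) (hρ : ρ ∈ stdSimplex ℝ (Fin K))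
    (r : A → (Fin K → Fin N → ℝ) → ℝ)
    (hr : ∀ a μ, r a μ = ∑ k, ρ k * ∑ n, θ k a n * μ k n)
    (D : Set (Fin K → Fin N → ℝ)) (hD : D = {μ | ∀ k, μ k ∈ stdSimplex ℝ (Fin N)})
    (step : (Fin K → Fin N → ℝ) → A → (Fin K → Fin N → ℝ))
    (hstep : ∀ μ a, step μ a = fun k => Matrix.vecMul (μ k) (P k a))
    (gbar : ℝ)
    (hgbar : gbar = sSup {x | ∃ a : A, ∃ μ ∈ D, μ = step μ a ∧ x = r a μ})
    (φ : (Fin K → Fin N → ℝ) → Fin K → Fin N → ℝ)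
    (hφinj : Set.InjOn φ D)
    (hφbdd : ∃ Cφ : ℝ, ∀ μ ∈ D, ‖φ μ‖ ≤ Cφ)
    (gphi : ℝ)
    (hgphi : gphi = ⨅ lam : Fin K → Fin N → ℝ, ⨆ q : A × D,
      (r q.1 (step (q.2 : Fin K → Fin N → ℝ) q.1) +
        ∑ k, ∑ n, lam k n *
          (φ (step (q.2 : Fin K → Fin N → ℝ) q.1) k n -
            φ (q.2 : Fin K → Fin N → ℝ) k n)))
    (μ0 : Fin K → Fin N → ℝ) (hμ0 : μ0 ∈ D)
    (traj : (ℕ → A) → ℕ → Fin K → Fin N → ℝ)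
    (htraj0 : ∀ a, traj a 0 = μ0)
    (htrajS : ∀ a t, traj a (t + 1) = step (traj a t) (a (t + 1)))
    (gstar : ℝ)
    (hgstar : gstar = ⨆ a : ℕ → A,
      Filter.liminf
        (fun T : ℕ => 1 / (T : ℝ) * ∑ t ∈ Finset.Icc 1 T, r (a t) (traj a t)) atTop) :
    gbar ≤ gstar ∧ gstar ≤ gphi := by
  classical
  have hDiff : ∀ μ : Fin K → Fin N → ℝ, μ ∈ D ↔ ∀ k, μ k ∈ stdSimplex ℝ (Fin N) :=
    fun μ => by rw [hD]; exact Iff.rfl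
  set B : ℝ := max Mθ 0 with hB
  have hB0 : 0 ≤ B := le_max_right _ _
  have hθB : ∀ k a n, |θ k a n| ≤ B := fun k a n => (hθbdd k a n).trans (le_max_left _ _)
  have hinner : ∀ (a : A) (k : Fin K) (ν : Fin N → ℝ), ν ∈ stdSimplex ℝ (Fin N) →
      |∑ n, θ k a n * ν n| ≤ B := by
    intro a k ν hν
    calc |∑ n, θ k a n * ν n| ≤ ∑ n, |θ k a n * ν n| := Finset.abs_sum_le_sum_abs _ _
      _ ≤ ∑ n, B * ν n := Finset.sum_le_sum fun n _ => by
          rw [abs_mul, abs_of_nonneg (hν.1 n)]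
          exact mul_le_mul_of_nonneg_right (hθB k a n) (hν.1 n)
      _ = B := by rw [← Finset.mul_sum, hν.2, mul_one]
  have hrB : ∀ (a : A) (μ : Fin K → Fin N → ℝ), μ ∈ D → |r a μ| ≤ B := by
    intro a μ hμ
    rw [hDiff] at hμ
    rw [hr]
    calc |∑ k, ρ k * ∑ n, θ k a n * μ k n| ≤ ∑ k, |ρ k * ∑ n, θ k a n * μ k n| :=
          Finset.abs_sum_le_sum_abs _ _
      _ ≤ ∑ k, ρ k * B := Finset.sum_le_sum fun k _ => by
          rw [abs_mul, abs_of_nonneg (hρ.1 k)]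
          exact mul_le_mul_of_nonneg_left (hinner a k _ (hμ k)) (hρ.1 k)
      _ = B := by rw [← Finset.sum_mul, hρ.2, one_mul]
  have hstepD : ∀ μ ∈ D, ∀ a : A, step μ a ∈ D := by
    intro μ hμ a
    rw [hDiff] at hμ ⊢
    rw [hstep]
    intro k
    exact my_mem_simplex (P k a) (hPstoch k a) (hμ k)
  have htrajD : ∀ (as : ℕ → A) (t : ℕ), traj as t ∈ D := by
    intro as t
    induction t with
    | zero => rw [htraj0]; exact hμ0
    | succ t ih => rw [htrajS]; exact hstepD _ ih _
  have habs : ∀ (as : ℕ → A) (T : ℕ),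
      |1 / (T : ℝ) * ∑ t ∈ Finset.Icc 1 T, r (as t) (traj as t)| ≤ B := by
    intro as T
    rcases Nat.eq_zero_or_pos T with h0 | hT
    · subst h0; simp [hB0]
    · have hTpos : (0 : ℝ) < T := by exact_mod_cast hT
      have h1 : |∑ t ∈ Finset.Icc 1 T, r (as t) (traj as t)| ≤ (T : ℝ) * B := by
        refine (Finset.abs_sum_le_sum_abs _ _).trans ?_
        calc ∑ t ∈ Finset.Icc 1 T, |r (as t) (traj as t)|
            ≤ ∑ _t ∈ Finset.Icc 1 T, B := Finset.sum_le_sum fun t _ => hrB _ _ (htrajD as t)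
          _ = (T : ℝ) * B := by
              rw [Finset.sum_const, Nat.card_Icc, Nat.add_sub_cancel, nsmul_eq_mul]
      rw [abs_mul]
      calc |1 / (T : ℝ)| * |∑ t ∈ Finset.Icc 1 T, r (as t) (traj as t)|
          ≤ |1 / (T : ℝ)| * ((T : ℝ) * B) := mul_le_mul_of_nonneg_left h1 (abs_nonneg _)
        _ = B := by
            rw [abs_of_nonneg (by positivity : (0:ℝ) ≤ 1 / (T : ℝ))]
            field_simp
  have hlbdd : ∀ as : ℕ → A, Filter.IsBoundedUnder (· ≥ ·) atTop
      (fun T : ℕ => 1 / (T : ℝ) * ∑ t ∈ Finset.Icc 1 T, r (as t) (traj as t)) :=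
    fun as => Filter.isBoundedUnder_of ⟨-B, fun T => (abs_le.1 (habs as T)).1⟩
  have hliminf_le_B : ∀ as : ℕ → A,
      Filter.liminf (fun T : ℕ => 1 / (T : ℝ) * ∑ t ∈ Finset.Icc 1 T, r (as t) (traj as t))
        atTop ≤ B :=
    fun as => Filter.liminf_le_of_frequently_le
      (Filter.Frequently.of_forall fun T => (abs_le.1 (habs as T)).2) (hlbdd as)
  constructor
  · -- gbar ≤ gstar
    rw [hgbar, hgstar]
    apply csSup_le
    · obtain ⟨a₀⟩ := (inferInstance : Nonempty A)
      have hex := fun k => my_exists (P k a₀) (hPstoch k a₀) (hPpos k a₀) (μ0 k)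
        ((hDiff μ0).1 hμ0 k)
      choose μs hμs hfixs using hex
      refine ⟨r a₀ μs, a₀, μs, (hDiff μs).2 hμs, ?_, rfl⟩
      rw [hstep]; funext k; exact (hfixs k).symm
    · rintro x ⟨a, μ, hμD, hfixμ, rfl⟩
      have hfixk : ∀ k, Matrix.vecMul (μ k) (P k a) = μ k := by
        intro k
        have h := congrFun hfixμ k
        rw [hstep] at h
        exact h.symm
      set ca : ℕ → A := fun _ => a with hca
      have htk : ∀ k, Tendsto (fun t => traj ca t k) atTop (𝓝 (μ k)) := by
        intro k
        refine my_tendsto (P k a) (hPstoch k a) (hPpos k a) _ ?_ ?_ ((hDiff μ).1 hμD k)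
          (hfixk k)
        · rw [htraj0]; exact (hDiff μ0).1 hμ0 k
        · intro t; rw [htrajS, hstep]
      have htμ : Tendsto (fun t => traj ca t) atTop (𝓝 μ) := tendsto_pi_nhds.2 htk
      have hcontr : Continuous fun ν : Fin K → Fin N → ℝ => r a ν := by
        have heq : (fun ν : Fin K → Fin N → ℝ => r a ν)
            = fun ν => ∑ k, ρ k * ∑ n, θ k a n * ν k n := by
          funext ν; rw [hr]
        rw [heq]
        exact continuous_finset_sum _ fun k _ => continuous_const.mul
          (continuous_finset_sum _ fun n _ => continuous_const.mul
            ((continuous_apply n).comp (continuous_apply k)))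
      have hru : Tendsto (fun t => r a (traj ca t)) atTop (𝓝 (r a μ)) :=
        (hcontr.tendsto μ).comp htμ
      have hshift : Tendsto (fun i : ℕ => r a (traj ca (1 + i))) atTop (𝓝 (r a μ)) := by
        have h := hru.comp (tendsto_add_atTop_nat 1)
        simpa [Function.comp_def, Nat.add_comm] using h
      have hces := hshift.cesaro
      have heq2 : (fun T : ℕ => 1 / (T : ℝ) * ∑ t ∈ Finset.Icc 1 T, r (ca t) (traj ca t))
          = fun T : ℕ => ((T : ℝ)⁻¹) * ∑ i ∈ Finset.range T, r a (traj ca (1 + i)) := by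
        funext T
        rw [one_div, ← Finset.Ico_add_one_right_eq_Icc, Finset.sum_Ico_eq_sum_range, Nat.add_sub_cancel]
      refine le_ciSup_of_le ⟨B, ?_⟩ ca ?_
      · rintro y ⟨as, rfl⟩; exact hliminf_le_B as
      · have hlim : Filter.liminf
            (fun T : ℕ => 1 / (T : ℝ) * ∑ t ∈ Finset.Icc 1 T, r (ca t) (traj ca t)) atTop
            = r a μ := by
          rw [heq2]
          exact hces.liminf_eq
        exact hlim.ge
  · -- gstar ≤ gphi
    rw [hgstar, hgphi]
    obtain ⟨Cφ, hCφ⟩ := hφbdd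
    have hCφ0 : 0 ≤ Cφ := (norm_nonneg _).trans (hCφ μ0 hμ0)
    have hφcomp : ∀ μ ∈ D, ∀ (k : Fin K) (n : Fin N), |φ μ k n| ≤ Cφ := by
      intro μ hμ k n
      calc |φ μ k n| ≤ ‖φ μ k‖ := norm_le_pi_norm (φ μ k) n
        _ ≤ ‖φ μ‖ := norm_le_pi_norm (φ μ) k
        _ ≤ Cφ := hCφ μ hμ
    apply le_ciInf
    intro lam
    set Cl : ℝ := ∑ k, ∑ n, |lam k n| * Cφ with hCl
    have hCl0 : 0 ≤ Cl :=
      Finset.sum_nonneg fun k _ => Finset.sum_nonneg fun n _ =>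
        mul_nonneg (abs_nonneg _) hCφ0
    set F : A × D → ℝ := fun q =>
      r q.1 (step (q.2 : Fin K → Fin N → ℝ) q.1) +
        ∑ k, ∑ n, lam k n *
          (φ (step (q.2 : Fin K → Fin N → ℝ) q.1) k n -
            φ (q.2 : Fin K → Fin N → ℝ) k n) with hF
    have habs2 : ∀ (x y : ℝ), |x - y| ≤ |x| + |y| := fun x y => by
      have h := abs_add_le x (-y)
      simpa [sub_eq_add_neg] using h
    have hFbdd : BddAbove (Set.range F) := by
      refine ⟨B + 2 * Cl, ?_⟩
      rintro x ⟨q, rfl⟩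
      have hq2D : (q.2 : Fin K → Fin N → ℝ) ∈ D := q.2.2
      have hsD : step (q.2 : Fin K → Fin N → ℝ) q.1 ∈ D := hstepD _ hq2D q.1
      have h1 : r q.1 (step (q.2 : Fin K → Fin N → ℝ) q.1) ≤ B := (abs_le.1 (hrB _ _ hsD)).2
      have h2 : ∑ k, ∑ n, lam k n *
          (φ (step (q.2 : Fin K → Fin N → ℝ) q.1) k n - φ (q.2 : Fin K → Fin N → ℝ) k n)
          ≤ 2 * Cl := by
        calc ∑ k, ∑ n, lam k n *
            (φ (step (q.2 : Fin K → Fin N → ℝ) q.1) k n - φ (q.2 : Fin K → Fin N → ℝ) k n)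
            ≤ ∑ k, ∑ n, |lam k n| * (2 * Cφ) := by
              refine Finset.sum_le_sum fun k _ => Finset.sum_le_sum fun n _ => ?_
              calc lam k n * (φ (step (q.2 : Fin K → Fin N → ℝ) q.1) k n
                      - φ (q.2 : Fin K → Fin N → ℝ) k n)
                  ≤ |lam k n * (φ (step (q.2 : Fin K → Fin N → ℝ) q.1) k n
                      - φ (q.2 : Fin K → Fin N → ℝ) k n)| := le_abs_self _
                _ = |lam k n| * |φ (step (q.2 : Fin K → Fin N → ℝ) q.1) k n
                      - φ (q.2 : Fin K → Fin N → ℝ) k n| := abs_mul _ _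
                _ ≤ |lam k n| * (2 * Cφ) := by
                    refine mul_le_mul_of_nonneg_left ?_ (abs_nonneg _)
                    have hb := (habs2 (φ (step (q.2 : Fin K → Fin N → ℝ) q.1) k n)
                      (φ (q.2 : Fin K → Fin N → ℝ) k n))
                    have hb1 := hφcomp _ hsD k n
                    have hb2 := hφcomp _ hq2D k n
                    linarith
          _ = 2 * Cl := by
              rw [hCl, Finset.mul_sum]
              refine Finset.sum_congr rfl fun k _ => ?_
              rw [Finset.mul_sum]
              exact Finset.sum_congr rfl fun n _ => by ring
      simp only [hF]
      linarith
    apply ciSup_le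
    intro as
    set G : ℕ → ℝ := fun t => ∑ k, ∑ n, lam k n * φ (traj as t) k n with hG
    have hGb : ∀ t, |G t| ≤ Cl := by
      intro t
      calc |G t| ≤ ∑ k, |∑ n, lam k n * φ (traj as t) k n| := Finset.abs_sum_le_sum_abs _ _
        _ ≤ ∑ k, ∑ n, |lam k n * φ (traj as t) k n| :=
            Finset.sum_le_sum fun k _ => Finset.abs_sum_le_sum_abs _ _
        _ ≤ Cl := by
            rw [hCl]
            refine Finset.sum_le_sum fun k _ => Finset.sum_le_sum fun n _ => ?_
            rw [abs_mul]
            exact mul_le_mul_of_nonneg_left (hφcomp _ (htrajD as t) k n) (abs_nonneg _)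
    have hkey : ∀ i : ℕ, r (as (i+1)) (traj as (i+1))
        = F (as (i+1), ⟨traj as i, htrajD as i⟩) - (G (i+1) - G i) := by
      intro i
      have hF' : F (as (i+1), ⟨traj as i, htrajD as i⟩)
          = r (as (i+1)) (traj as (i+1)) +
            ∑ k, ∑ n, lam k n * (φ (traj as (i+1)) k n - φ (traj as i) k n) := by
        simp only [hF]
        rw [← htrajS]
      rw [hF']
      have hGdiff : ∑ k, ∑ n, lam k n * (φ (traj as (i+1)) k n - φ (traj as i) k n)
          = G (i+1) - G i := by
        rw [hG]
        rw [← Finset.sum_sub_distrib]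
        refine Finset.sum_congr rfl fun k _ => ?_
        rw [← Finset.sum_sub_distrib]
        exact Finset.sum_congr rfl fun n _ => by ring
      rw [hGdiff]; ring
    have hFle : ∀ q : A × D, F q ≤ ⨆ q : A × D, F q := fun q => le_ciSup hFbdd q
    have hsum_le : ∀ T : ℕ, ∑ t ∈ Finset.Icc 1 T, r (as t) (traj as t)
        ≤ (T : ℝ) * (⨆ q : A × D, F q) + 2 * Cl := by
      intro T
      rw [← Finset.Ico_add_one_right_eq_Icc, Finset.sum_Ico_eq_sum_range, Nat.add_sub_cancel]
      calc ∑ i ∈ Finset.range T, r (as (1 + i)) (traj as (1 + i))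
          = ∑ i ∈ Finset.range T,
              (F (as (i+1), ⟨traj as i, htrajD as i⟩) - (G (i+1) - G i)) := by
            refine Finset.sum_congr rfl fun i _ => ?_
            rw [Nat.add_comm 1 i]
            exact hkey i
        _ = (∑ i ∈ Finset.range T, F (as (i+1), ⟨traj as i, htrajD as i⟩)) - (G T - G 0) := by
            rw [Finset.sum_sub_distrib, Finset.sum_range_sub G]
        _ ≤ (T : ℝ) * (⨆ q : A × D, F q) + 2 * Cl := by
            have h1 : ∑ i ∈ Finset.range T, F (as (i+1), ⟨traj as i, htrajD as i⟩)
                ≤ (T : ℝ) * (⨆ q : A × D, F q) := by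
              calc ∑ i ∈ Finset.range T, F (as (i+1), ⟨traj as i, htrajD as i⟩)
                  ≤ ∑ _i ∈ Finset.range T, (⨆ q : A × D, F q) :=
                    Finset.sum_le_sum fun i _ => hFle _
                _ = (T : ℝ) * (⨆ q : A × D, F q) := by
                    rw [Finset.sum_const, Finset.card_range, nsmul_eq_mul]
            have h2 := abs_le.1 (hGb T)
            have h3 := abs_le.1 (hGb 0)
            linarith
    refine le_of_forall_pos_le_add ?_
    intro ε hε
    have h2 : Tendsto (fun T : ℕ => (2 * Cl) * (1 / (T : ℝ))) atTop (𝓝 0) := by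
      simpa using tendsto_one_div_atTop_nhds_zero_nat.const_mul (2 * Cl)
    have hev : ∀ᶠ T : ℕ in atTop,
        1 / (T : ℝ) * ∑ t ∈ Finset.Icc 1 T, r (as t) (traj as t)
          ≤ (⨆ q : A × D, F q) + ε := by
      filter_upwards [h2.eventually (gt_mem_nhds hε), Filter.eventually_ge_atTop 1]
        with T hT1 hT2
      have hTpos : (0 : ℝ) < T := by exact_mod_cast hT2
      have hTne : (T : ℝ) ≠ 0 := hTpos.ne'
      calc 1 / (T : ℝ) * ∑ t ∈ Finset.Icc 1 T, r (as t) (traj as t)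
          ≤ 1 / (T : ℝ) * ((T : ℝ) * (⨆ q : A × D, F q) + 2 * Cl) :=
            mul_le_mul_of_nonneg_left (hsum_le T) (by positivity)
        _ = (⨆ q : A × D, F q) + (2 * Cl) * (1 / (T : ℝ)) := by
            field_simp
        _ ≤ (⨆ q : A × D, F q) + ε := by linarith
    exact Filter.liminf_le_of_frequently_le hev.frequently (hlbdd as)
end

section
/- Fix β > 0, N ≥ 1, utilities U ∈ ℝ^N and switching costs γ ∈ ℝ^N with γ_n ≥ 0. Define the logit-with-inertia kernel P ∈ ℝ^{N×N} by P_{nm} = exp(β[U_m + γ_n·1_{m=n}]) / Σ_{l=1}^N exp(β[U_l + γ_n·1_{l=n}]), the instantaneous logit response μ_L ∈ Δ_N by μ_L^n = exp(βU_n)/Σ_l exp(βU_l), η^n = 1 + (exp(βγ_n) − 1)·μ_L^n, and μ̄ ∈ Δ_N by μ̄^n = η^n μ_L^n / Σ_{l=1}^N η^l μ_L^l. Then μ̄ is a stationary distribution of P (μ̄P = μ̄), and for every initial distribution μ_0 ∈ Δ_N the iterates μ_0 P^t converge to μ̄ as t → ∞. -/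
/-- Theorem 3 of the paper: closed form for the stationary
distribution of the logit-with-inertia kernel. The distribution
`μ̄^n = η^n μ_L^n / Σ_l η^l μ_L^l` with `η^n = 1 + (e^{βγ_n} - 1) μ_L^n` is
stationary for the kernel `P`, and `μ₀ Pᵗ → μ̄` for every initial
distribution `μ₀ ∈ Δ_N`. -/
theorem logit_inertia_stationary_distribution
    (β : ℝ) (hβ : 0 < β) (N : ℕ) (hN : 1 ≤ N)
    (U γ : Fin N → ℝ) (hγ : ∀ n, 0 ≤ γ n)
    (P : Matrix (Fin N) (Fin N) ℝ)
    (hP : ∀ n m, P n m = Real.exp (β * (U m + if m = n then γ n else 0)) /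
      ∑ l, Real.exp (β * (U l + if l = n then γ n else 0)))
    (μL : Fin N → ℝ)
    (hμL : ∀ n, μL n = Real.exp (β * U n) / ∑ l, Real.exp (β * U l))
    (η : Fin N → ℝ) (hη : ∀ n, η n = 1 + (Real.exp (β * γ n) - 1) * μL n)
    (μbar : Fin N → ℝ) (hμbar : ∀ n, μbar n = η n * μL n / ∑ l, η l * μL l) :
    μbar ∈ stdSimplex ℝ (Fin N) ∧ Matrix.vecMul μbar P = μbar ∧
      ∀ μ0 ∈ stdSimplex ℝ (Fin N),
        Filter.Tendsto (fun t : ℕ => Matrix.vecMul μ0 (P ^ t)) Filter.atTop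
          (nhds μbar) := by
  have hNne : Nonempty (Fin N) := Fin.pos_iff_nonempty.mp (by omega)
  set Z : ℝ := ∑ l, Real.exp (β * U l) with hZ
  have hZpos : 0 < Z :=
    Finset.sum_pos (fun l _ => Real.exp_pos _) Finset.univ_nonempty
  have hμLpos : ∀ n, 0 < μL n := fun n => by
    rw [hμL]; exact div_pos (Real.exp_pos _) hZpos
  have hμLsum : (∑ l, μL l) = 1 := by
    have h1 : (∑ l, μL l) = ∑ l, Real.exp (β * U l) / Z :=
      Finset.sum_congr rfl fun l _ => hμL l
    rw [h1, ← Finset.sum_div, ← hZ, div_self hZpos.ne']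
  have hηge : ∀ n, 1 ≤ η n := fun n => by
    rw [hη]
    have h1 : (1:ℝ) ≤ Real.exp (β * γ n) :=
      Real.one_le_exp (mul_nonneg hβ.le (hγ n))
    nlinarith [(hμLpos n).le]
  have hηpos : ∀ n, 0 < η n := fun n => lt_of_lt_of_le one_pos (hηge n)
  set d : Fin N → ℝ := fun n => 1 / η n with hd
  have hdpos : ∀ n, 0 < d n := fun n => by
    simp only [hd]; exact div_pos one_pos (hηpos n)
  have hdle : ∀ n, d n ≤ 1 := fun n => by
    simp only [hd]; rw [div_le_one (hηpos n)]; exact hηge n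
  -- the structural form of the kernel
  have hPform : ∀ n m, P n m = μL m * d n + (if m = n then 1 - d n else 0) := by
    intro n m
    have hden : (∑ l, Real.exp (β * (U l + if l = n then γ n else 0))) = Z * η n := by
      have h1 : ∀ l, Real.exp (β * (U l + if l = n then γ n else 0)) =
          Real.exp (β * U l) + (if l = n then (Real.exp (β * γ n) - 1) * Real.exp (β * U n) else 0) := by
        intro l
        by_cases h : l = n
        · subst h; simp only [if_true]
          rw [mul_add, Real.exp_add]; ring
        · simp [h]
      rw [Finset.sum_congr rfl fun l _ => h1 l, Finset.sum_add_distrib,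
        Finset.sum_ite_eq' Finset.univ n
          (fun _ => (Real.exp (β * γ n) - 1) * Real.exp (β * U n))]
      simp only [Finset.mem_univ, if_true, ← hZ]
      have hμn : Real.exp (β * U n) = μL n * Z := by
        rw [hμL]; field_simp
      rw [hμn, hη]; ring
    rw [hP, hden]
    by_cases h : m = n
    · subst h
      simp only [if_true]
      have hμn : Real.exp (β * U m) = μL m * Z := by
        rw [hμL]; field_simp
      rw [mul_add, Real.exp_add, hμn]
      have hZη : Z * η m ≠ 0 := (mul_pos hZpos (hηpos m)).ne'
      rw [div_eq_iff hZη]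
      simp only [hd]
      have expand : (μL m * (1 / η m) + (1 - 1 / η m)) * (Z * η m)
          = μL m * Z + Z * η m - Z := by
        have h0 : (1 / η m) * η m = 1 := one_div_mul_cancel (hηpos m).ne'
        linear_combination (μL m * Z - Z) * h0
      rw [expand]
      linear_combination -Z * hη m
    · simp only [h, if_false, add_zero]
      have hμm : Real.exp (β * U m) = μL m * Z := by
        rw [hμL]; field_simp
      rw [hμm]
      simp only [hd]
      rw [mul_one_div, mul_comm Z (η n), mul_div_mul_right _ _ hZpos.ne']
  -- the action of P on row vectors
  have hvec : ∀ μ : Fin N → ℝ, ∀ m, Matrix.vecMul μ P m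
      = μ m * (1 - d m) + (∑ l, μ l * d l) * μL m := by
    intro μ m
    have : Matrix.vecMul μ P m = ∑ n, μ n * P n m := by
      simp [Matrix.vecMul, dotProduct]
    rw [this]
    have h1 : ∀ n, μ n * P n m
        = μ n * d n * μL m + (if m = n then μ n * (1 - d n) else 0) := by
      intro n
      rw [hPform n m]
      by_cases h : m = n <;> simp [h] <;> ring
    rw [Finset.sum_congr rfl fun n _ => h1 n, Finset.sum_add_distrib,
      Finset.sum_ite_eq Finset.univ m (fun n => μ n * (1 - d n))]
    simp only [Finset.mem_univ, if_true]
    rw [← Finset.sum_mul]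
    ring
  -- sums to 1 is preserved
  have hsum_pres : ∀ μ : Fin N → ℝ, (∑ l, μ l) = 1 →
      (∑ l, Matrix.vecMul μ P l) = 1 := by
    intro μ hμ
    have : (∑ m, Matrix.vecMul μ P m)
        = ∑ m, (μ m * (1 - d m) + (∑ l, μ l * d l) * μL m) :=
      Finset.sum_congr rfl fun m _ => hvec μ m
    rw [this, Finset.sum_add_distrib, ← Finset.mul_sum, hμLsum, mul_one]
    have : (∑ m, μ m * (1 - d m)) = (∑ m, μ m) - ∑ m, μ m * d m := by
      rw [← Finset.sum_sub_distrib]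
      exact Finset.sum_congr rfl fun m _ => by ring
    rw [this, hμ]; ring
  set S : ℝ := ∑ l, η l * μL l with hS
  have hSpos : 0 < S :=
    Finset.sum_pos (fun l _ => mul_pos (hηpos l) (hμLpos l)) Finset.univ_nonempty
  have hμbar_nonneg : ∀ n, 0 ≤ μbar n := fun n => by
    rw [hμbar]
    exact div_nonneg (mul_nonneg (hηpos n).le (hμLpos n).le) hSpos.le
  have hμbar_sum : (∑ l, μbar l) = 1 := by
    have h1 : (∑ l, μbar l) = ∑ l, η l * μL l / S :=
      Finset.sum_congr rfl fun l _ => hμbar l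
    rw [h1, ← Finset.sum_div, ← hS, div_self hSpos.ne']
  have hμbar_mem : μbar ∈ stdSimplex ℝ (Fin N) := ⟨fun n => hμbar_nonneg n, hμbar_sum⟩
  -- μbar * d = μL / S
  have hbd : ∀ l, μbar l * d l = μL l / S := by
    intro l
    rw [hμbar]
    simp only [hd]
    field_simp [(hηpos l).ne', hSpos.ne']
  have hbdsum : (∑ l, μbar l * d l) = 1 / S := by
    rw [Finset.sum_congr rfl fun l _ => hbd l, ← Finset.sum_div, hμLsum]
  -- stationarity
  have hstat : Matrix.vecMul μbar P = μbar := by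
    funext m
    rw [hvec, hbdsum]
    linear_combination -hbd m
  refine ⟨hμbar_mem, hstat, ?_⟩
  -- convergence
  intro μ0 hμ0
  set δ : ℝ := Finset.univ.inf' Finset.univ_nonempty d with hδ
  have hδmem : ∃ n, δ = d n := by
    obtain ⟨n, _, hn⟩ := Finset.exists_mem_eq_inf' Finset.univ_nonempty d
    exact ⟨n, hn⟩
  have hδpos : 0 < δ := by obtain ⟨n, hn⟩ := hδmem; rw [hn]; exact hdpos n
  have hδle1 : δ ≤ 1 := by obtain ⟨n, hn⟩ := hδmem; rw [hn]; exact hdle n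
  have hδled : ∀ n, δ ≤ d n := fun n => Finset.inf'_le d (Finset.mem_univ n)
  set q : ℝ := 1 - δ with hq
  have hq0 : 0 ≤ q := by simp [hq]; linarith
  have hq1 : q < 1 := by simp [hq]; linarith
  -- contraction step
  have key : ∀ μ : Fin N → ℝ, (∑ l, μ l) = 1 →
      (∑ m, |Matrix.vecMul μ P m - μbar m|) ≤ q * ∑ m, |μ m - μbar m| := by
    intro μ hμ
    set x : Fin N → ℝ := fun m => μ m - μbar m with hx
    have hxsum : (∑ l, x l) = 0 := by
      simp only [hx]
      rw [Finset.sum_sub_distrib, hμ, hμbar_sum]; ring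
    set s : ℝ := ∑ l, x l * d l with hs
    have hdiff : ∀ m, Matrix.vecMul μ P m - μbar m = x m * (1 - d m) + s * μL m := by
      intro m
      have h1 := hvec μ m
      have h2 := hvec μbar m
      rw [hstat] at h2
      have hsx : s = (∑ l, μ l * d l) - ∑ l, μbar l * d l := by
        simp only [hs, hx]
        rw [← Finset.sum_sub_distrib]
        exact Finset.sum_congr rfl fun l _ => by ring
      simp only [hx]
      rw [h1]
      linear_combination -h2 - μL m * hsx
    have habs_s : |s| ≤ ∑ l, |x l| * (d l - δ) := by
      have hs2 : s = ∑ l, x l * (d l - δ) := by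
        simp only [hs]
        rw [Finset.sum_congr rfl (fun l _ => by ring :
          ∀ l ∈ Finset.univ, x l * (d l - δ) = x l * d l - x l * δ),
          Finset.sum_sub_distrib, ← Finset.sum_mul, hxsum]
        ring
      calc |s| = |∑ l, x l * (d l - δ)| := by rw [hs2]
        _ ≤ ∑ l, |x l * (d l - δ)| := Finset.abs_sum_le_sum_abs _ _
        _ = ∑ l, |x l| * (d l - δ) := Finset.sum_congr rfl fun l _ => by
            rw [abs_mul,
              abs_of_nonneg (show (0:ℝ) ≤ d l - δ by linarith [hδled l])]
    calc (∑ m, |Matrix.vecMul μ P m - μbar m|)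
        = ∑ m, |x m * (1 - d m) + s * μL m| :=
          Finset.sum_congr rfl fun m _ => by rw [hdiff m]
      _ ≤ ∑ m, (|x m| * (1 - d m) + |s| * μL m) := by
          apply Finset.sum_le_sum
          intro m _
          calc |x m * (1 - d m) + s * μL m|
              ≤ |x m * (1 - d m)| + |s * μL m| := abs_add_le _ _
            _ = |x m| * (1 - d m) + |s| * μL m := by
                rw [abs_mul, abs_mul,
                  abs_of_nonneg (show (0:ℝ) ≤ 1 - d m by linarith [hdle m]),
                  abs_of_nonneg (hμLpos m).le]
      _ = (∑ m, |x m| * (1 - d m)) + |s| := by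
          rw [Finset.sum_add_distrib, ← Finset.mul_sum, hμLsum, mul_one]
      _ ≤ (∑ m, |x m| * (1 - d m)) + ∑ l, |x l| * (d l - δ) := by linarith [habs_s]
      _ = ∑ m, |x m| * q := by
          rw [← Finset.sum_add_distrib]
          exact Finset.sum_congr rfl fun m _ => by simp only [hq]; ring
      _ = q * ∑ m, |x m| := by rw [← Finset.sum_mul]; ring
  -- iterate
  set f : ℕ → Fin N → ℝ := fun t => Matrix.vecMul μ0 (P ^ t) with hf
  have hstep : ∀ t, f (t + 1) = Matrix.vecMul (f t) P := by
    intro t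
    simp only [hf, pow_succ, ← Matrix.vecMul_vecMul]
  set e : ℕ → ℝ := fun t => ∑ m, |f t m - μbar m| with he
  have hmain : ∀ t, (∑ l, f t l) = 1 ∧ e t ≤ q ^ t * e 0 := by
    intro t
    induction t with
    | zero => exact ⟨by simpa [hf, Matrix.vecMul_one] using hμ0.2, by simp⟩
    | succ t ih =>
      obtain ⟨ih1, ih2⟩ := ih
      constructor
      · rw [hstep t]; exact hsum_pres _ ih1
      · have h1 : e (t + 1) ≤ q * e t := by
          simp only [he]
          rw [hstep t]
          exact key _ ih1
        calc e (t + 1) ≤ q * e t := h1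
          _ ≤ q * (q ^ t * e 0) := by
              apply mul_le_mul_of_nonneg_left ih2 hq0
          _ = q ^ (t + 1) * e 0 := by ring
  -- conclude convergence, componentwise
  rw [tendsto_pi_nhds]
  intro m
  have habs : ∀ t, |f t m - μbar m| ≤ q ^ t * e 0 := by
    intro t
    calc |f t m - μbar m| ≤ ∑ l, |f t l - μbar l| :=
          Finset.single_le_sum (f := fun l => |f t l - μbar l|)
            (fun l _ => abs_nonneg _) (Finset.mem_univ m)
      _ ≤ q ^ t * e 0 := (hmain t).2
  have hq_tendsto : Filter.Tendsto (fun t : ℕ => q ^ t * e 0) Filter.atTop (nhds 0) := by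
    have := tendsto_pow_atTop_nhds_zero_of_lt_one hq0 hq1
    simpa using this.mul_const (e 0)
  have : Filter.Tendsto (fun t => f t m - μbar m) Filter.atTop (nhds 0) := by
    apply squeeze_zero_norm _ hq_tendsto
    intro t
    simpa using habs t
  have := this.add_const (μbar m)
  simpa using this
end

section
/- Majorization property of the steady state: fix β > 0, N ≥ 1, utilities U ∈ ℝ^N and a uniform switching cost γ > 0 (γ_n = γ for all n). With μ_L^n = exp(βU_n)/Σ_l exp(βU_l), η^n = 1 + (exp(βγ) − 1)·μ_L^n, and μ̄^n = η^n μ_L^n / Σ_l η^l μ_L^l, the stationary distribution μ̄ majorizes the instantaneous logit response μ_L: for every m ∈ {1,…,N}, max over subsets S ⊆ {1,…,N} with |S| = m of Σ_{n∈S} μ̄^n is greater than or equal to max over subsets S ⊆ {1,…,N} with |S| = m of Σ_{n∈S} μ_L^n. -/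
/-- Proposition 5 of the paper: majorization property of the
steady state. With a uniform switching cost `γ > 0`, the stationary
distribution `μ̄` of the logit-with-inertia kernel majorizes the instantaneous
logit response `μ_L`: for every `m ∈ {1,…,N}`, the maximal sum of `μ_L` over
sets of cardinality `m` is at most the maximal sum of `μ̄` over sets of
cardinality `m`. -/
theorem steady_state_majorizes_logit
    (β : ℝ) (hβ : 0 < β) (N : ℕ) (hN : 1 ≤ N)
    (U : Fin N → ℝ) (γ : ℝ) (hγ : 0 < γ)
    (μL : Fin N → ℝ)
    (hμL : ∀ n, μL n = Real.exp (β * U n) / ∑ l, Real.exp (β * U l))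
    (η : Fin N → ℝ) (hη : ∀ n, η n = 1 + (Real.exp (β * γ) - 1) * μL n)
    (μbar : Fin N → ℝ) (hμbar : ∀ n, μbar n = η n * μL n / ∑ l, η l * μL l) :
    ∀ m : ℕ, 1 ≤ m → m ≤ N →
      ∀ S : Finset (Fin N), S.card = m →
        ∃ T : Finset (Fin N), T.card = m ∧ ∑ n ∈ S, μL n ≤ ∑ n ∈ T, μbar n := by
  intro m hm1 hmN S hS
  haveI : Nonempty (Fin N) := Fin.pos_iff_nonempty.mp (by omega)
  -- basic positivity facts
  have hEpos : 0 < ∑ l, Real.exp (β * U l) :=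
    Finset.sum_pos (fun l _ => Real.exp_pos _) Finset.univ_nonempty
  have hμLpos : ∀ n, 0 < μL n := by
    intro n; rw [hμL n]; positivity
  have hc : 0 ≤ Real.exp (β * γ) - 1 := by
    have := Real.one_le_exp (le_of_lt (mul_pos hβ hγ))
    linarith
  have hηpos : ∀ n, 0 < η n := by
    intro n; rw [hη n]
    have := hμLpos n
    nlinarith
  have hZpos : 0 < ∑ l, η l * μL l :=
    Finset.sum_pos (fun l _ => mul_pos (hηpos l) (hμLpos l)) Finset.univ_nonempty
  have hsum1 : ∑ n, μL n = 1 := by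
    simp only [hμL]
    rw [← Finset.sum_div, div_self hEpos.ne']
  -- monotonicity of η in μL
  have hηmono : ∀ n k : Fin N, μL k ≤ μL n → η k ≤ η n := by
    intro n k h
    rw [hη n, hη k]
    nlinarith
  -- choose T maximizing ∑ μL over m-subsets
  have hpow : ((Finset.univ : Finset (Fin N)).powersetCard m).Nonempty := by
    apply Finset.powersetCard_nonempty.mpr
    simpa using hmN
  obtain ⟨T, hTmem, hTmax⟩ :=
    Finset.exists_max_image (Finset.univ.powersetCard m) (fun T => ∑ n ∈ T, μL n) hpow
  have hTcard : T.card = m := (Finset.mem_powersetCard.mp hTmem).2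
  have hSle : ∑ n ∈ S, μL n ≤ ∑ n ∈ T, μL n := by
    apply hTmax
    simp [Finset.mem_powersetCard, hS]
  -- T contains the m largest values of μL
  have hTtop : ∀ n ∈ T, ∀ k ∉ T, μL k ≤ μL n := by
    intro n hn k hk
    by_contra hlt
    push_neg at hlt
    have hkerase : k ∉ T.erase n := fun h => hk (Finset.mem_of_mem_erase h)
    have hcard' : (insert k (T.erase n)).card = m := by
      rw [Finset.card_insert_of_notMem hkerase, Finset.card_erase_of_mem hn, hTcard]
      omega
    have hle := hTmax (insert k (T.erase n)) (by simp [Finset.mem_powersetCard, hcard'])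
    rw [Finset.sum_insert hkerase] at hle
    have herase : ∑ x ∈ T.erase n, μL x = ∑ x ∈ T, μL x - μL n := by
      rw [eq_sub_iff_add_eq, Finset.sum_erase_add T _ hn]
    rw [herase] at hle
    linarith
  refine ⟨T, hTcard, le_trans hSle ?_⟩
  -- now show ∑_T μL ≤ ∑_T μbar
  have hbar : ∑ n ∈ T, μbar n = (∑ n ∈ T, η n * μL n) / ∑ l, η l * μL l := by
    simp only [hμbar]
    rw [Finset.sum_div]
  rw [hbar, le_div_iff₀ hZpos]
  -- split the full sums over T and Tᶜ
  have hsplit : ∀ f : Fin N → ℝ, ∑ l, f l = ∑ l ∈ T, f l + ∑ l ∈ Tᶜ, f l := by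
    intro f
    rw [← Finset.sum_add_sum_compl T f]
  rw [hsplit (fun l => η l * μL l)]
  have h1 : ∑ n ∈ T, μL n ≤ 1 := by
    rw [← hsum1, hsplit μL]
    have : 0 ≤ ∑ l ∈ Tᶜ, μL l :=
      Finset.sum_nonneg fun l _ => (hμLpos l).le
    linarith
  have key : (∑ l ∈ Tᶜ, η l * μL l) * ∑ n ∈ T, μL n ≤
      (∑ n ∈ T, η n * μL n) * ∑ l ∈ Tᶜ, μL l := by
    rw [Finset.sum_mul_sum, Finset.sum_mul_sum]
    rw [Finset.sum_comm]
    apply Finset.sum_le_sum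
    intro n hn
    apply Finset.sum_le_sum
    intro k hk
    have hkT : k ∉ T := Finset.mem_compl.mp hk
    have hμ : μL k ≤ μL n := hTtop n hn k hkT
    have hηle : η k ≤ η n := hηmono n k hμ
    have h1 := (hμLpos n).le
    have h2 := (hμLpos k).le
    nlinarith [mul_le_mul_of_nonneg_right hηle (mul_nonneg h2 h1)]
  have hTsum : ∑ n, μL n = ∑ n ∈ T, μL n + ∑ n ∈ Tᶜ, μL n := hsplit μL
  nlinarith [Finset.sum_nonneg (fun l (_ : l ∈ T) => (mul_pos (hηpos l) (hμLpos l)).le)]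
end

section
/- Boundedness of the optimal steady-state gain: fix K ≥ 1, N ≥ 2, β > 0, weights ρ ∈ Δ_K, and for each cluster k ∈ {1,…,K} and each offer n ∈ {1,…,N−1}: a reservation price R^{kn} ∈ ℝ, a consumption E^{kn} > 0, and a cost C^{kn} ∈ ℝ; each cluster has a uniform switching cost γ^k > 0. For a price vector a ∈ ℝ^{N−1}, set U^{kn}(a) = R^{kn} − E^{kn}·a_n for n < N and U^{kN}(a) = 0; θ^{kn}(a) = E^{kn}·a_n − C^{kn} for n < N and θ^{kN}(a) = 0; μ_L^{kn}(a) = exp(βU^{kn}(a))/Σ_{l=1}^N exp(βU^{kl}(a)); η^{kn}(a) = 1 + (exp(βγ^k) − 1)·μ_L^{kn}(a); and μ̄^{kn}(a) = η^{kn}(a)·μ_L^{kn}(a)/Σ_{l=1}^N η^{kl}(a)·μ_L^{kl}(a). Then the optimal steady-state gain over unbounded prices, ḡ = sup_{a∈ℝ^{N−1}} Σ_{k=1}^K ρ_k Σ_{n=1}^N θ^{kn}(a)·μ̄^{kn}(a), satisfies ḡ ≤ max_{k∈[K], n∈[N]} (R^{kn} − C^{kn}) + N/(β·e), where by convention R^{kN}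 = C^{kN} = 0. In particular, ḡ is bounded independently of the switching costs γ^k. -/
/-- `t * exp (-t) ≤ exp (-1)` for all real `t`. -/
lemma aux_mul_exp_neg_le (t : ℝ) : t * Real.exp (-t) ≤ Real.exp (-1) := by
  have h : t ≤ Real.exp (t - 1) := by
    have := Real.add_one_le_exp (t - 1); linarith
  calc t * Real.exp (-t) ≤ Real.exp (t - 1) * Real.exp (-t) :=
        mul_le_mul_of_nonneg_right h (Real.exp_pos _).le
    _ = Real.exp (-1) := by rw [← Real.exp_add]; ring_nf

/-- Proposition 6 of the paper: boundedness of the optimal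
steady-state gain. In the electricity pricing model with `Nm = N - 1 ≥ 1`
offers (indexed by `Fin Nm`) plus an outside option (the `Unit` summand),
logit intensity `β > 0` and uniform positive switching costs `γ^k`, the
optimal steady-state gain over unbounded prices satisfies
`ḡ ≤ max_{k,n}(R^{kn} - C^{kn}) + N/(β e)`, a bound independent of the
switching costs (with the convention `R^{kN} = C^{kN} = 0` for the outside
option). -/
theorem steady_state_gain_bounded
    (K Nm : ℕ) (hK : 1 ≤ K) (hNm : 1 ≤ Nm)
    (β : ℝ) (hβ : 0 < β)
    (ρ : Fin K → ℝ) (hρ : ρ ∈ stdSimplex ℝ (Fin K))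
    (R E C : Fin K → Fin Nm → ℝ) (hE : ∀ k n, 0 < E k n)
    (γ : Fin K → ℝ) (hγ : ∀ k, 0 < γ k)
    (U θ : Fin K → (Fin Nm → ℝ) → (Fin Nm ⊕ Unit) → ℝ)
    (hU : ∀ k a, U k a = Sum.elim (fun n => R k n - E k n * a n) fun _ => 0)
    (hθ : ∀ k a, θ k a = Sum.elim (fun n => E k n * a n - C k n) fun _ => 0)
    (μL η μbar : Fin K → (Fin Nm → ℝ) → (Fin Nm ⊕ Unit) → ℝ)
    (hμL : ∀ k a n, μL k a n = Real.exp (β * U k a n) / ∑ l, Real.exp (β * U k a l))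
    (hη : ∀ k a n, η k a n = 1 + (Real.exp (β * γ k) - 1) * μL k a n)
    (hμbar : ∀ k a n, μbar k a n = η k a n * μL k a n / ∑ l, η k a l * μL k a l)
    (gbar : ℝ)
    (hgbar : gbar = ⨆ a : Fin Nm → ℝ, ∑ k, ρ k * ∑ n, θ k a n * μbar k a n) :
    gbar ≤ (⨆ k : Fin K, ⨆ n : Fin Nm ⊕ Unit,
        (Sum.elim (R k) (fun _ => (0 : ℝ)) n - Sum.elim (C k) (fun _ => (0 : ℝ)) n))
      + ((Nm : ℝ) + 1) / (β * Real.exp 1) := by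
  classical
  set M : ℝ := ⨆ k : Fin K, ⨆ n : Fin Nm ⊕ Unit,
      (Sum.elim (R k) (fun _ => (0 : ℝ)) n - Sum.elim (C k) (fun _ => (0 : ℝ)) n) with hM
  haveI : NeZero K := ⟨by omega⟩
  have hMle : ∀ k (n : Fin Nm ⊕ Unit),
      Sum.elim (R k) (fun _ => (0 : ℝ)) n - Sum.elim (C k) (fun _ => (0 : ℝ)) n ≤ M := by
    intro k n
    have h1 := le_ciSup (f := fun n : Fin Nm ⊕ Unit =>
        Sum.elim (R k) (fun _ => (0:ℝ)) n - Sum.elim (C k) (fun _ => (0:ℝ)) n)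
      (Set.Finite.bddAbove (Set.finite_range _)) n
    have h2 := le_ciSup (f := fun k : Fin K => ⨆ n : Fin Nm ⊕ Unit,
        (Sum.elim (R k) (fun _ => (0:ℝ)) n - Sum.elim (C k) (fun _ => (0:ℝ)) n))
      (Set.Finite.bddAbove (Set.finite_range _)) k
    exact h1.trans h2
  have hβe : (0 : ℝ) < β * Real.exp 1 := by positivity
  rw [hgbar]
  refine ciSup_le fun a => ?_
  -- per-cluster bound
  have key : ∀ k, ∑ n, θ k a n * μbar k a n ≤ M + ((Nm : ℝ) + 1) / (β * Real.exp 1) := by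
    intro k
    set u : Fin Nm ⊕ Unit → ℝ := U k a with hu
    set μ : Fin Nm ⊕ Unit → ℝ := μL k a with hμ
    set S : ℝ := ∑ l, Real.exp (β * u l) with hS
    have hSpos : 0 < S := Finset.sum_pos (fun l _ => Real.exp_pos _) ⟨Sum.inr (), Finset.mem_univ _⟩
    have huinr : u (Sum.inr ()) = 0 := by rw [hu, hU]; rfl
    have hS1 : 1 ≤ S := by
      have : Real.exp (β * u (Sum.inr ())) ≤ S :=
        Finset.single_le_sum (f := fun l => Real.exp (β * u l))
          (fun l _ => (Real.exp_pos _).le) (Finset.mem_univ _)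
      rwa [huinr, mul_zero, Real.exp_zero] at this
    have hμdef : ∀ n, μ n = Real.exp (β * u n) / S := fun n => hμL k a n
    have hμpos : ∀ n, 0 < μ n := fun n => by
      rw [hμdef]; exact div_pos (Real.exp_pos _) hSpos
    have hμsum : ∑ n, μ n = 1 := by
      simp only [hμdef]
      rw [← Finset.sum_div, ← hS, div_self hSpos.ne']
    set c : ℝ := Real.exp (β * γ k) - 1 with hc
    have hc0 : 0 ≤ c := by
      have : (1 : ℝ) ≤ Real.exp (β * γ k) :=
        Real.one_le_exp (mul_nonneg hβ.le (hγ k).le)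
      linarith
    have hηdef : ∀ n, η k a n = 1 + c * μ n := fun n => hη k a n
    set D : ℝ := ∑ l, η k a l * μ l with hD
    set S2 : ℝ := ∑ l, (μ l) ^ 2 with hS2
    have hDval : D = 1 + c * S2 := by
      rw [hD, hS2, Finset.mul_sum, ← hμsum, ← Finset.sum_add_distrib]
      exact Finset.sum_congr rfl fun n _ => by rw [hηdef]; ring
    have hS2pos : 0 < S2 := Finset.sum_pos (fun l _ => pow_pos (hμpos l) 2) ⟨Sum.inr (), Finset.mem_univ _⟩
    have hDpos : 0 < D := by rw [hDval]; positivity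
    have hμbardef : ∀ n, μbar k a n = η k a n * μ n / D := fun n => hμbar k a n
    have hμbarnn : ∀ n, 0 ≤ μbar k a n := fun n => by
      rw [hμbardef, hηdef]
      have h1 := (hμpos n).le
      have h2 : 0 ≤ 1 + c * μ n := by nlinarith
      exact div_nonneg (mul_nonneg h2 h1) hDpos.le
    have hμbarsum : ∑ n, μbar k a n = 1 := by
      simp only [hμbardef]
      rw [← Finset.sum_div, ← hD, div_self hDpos.ne']
    set x : Fin Nm ⊕ Unit → ℝ := fun n => max (-u n) 0 with hx
    have hx0 : ∀ n, 0 ≤ x n := fun n => le_max_right _ _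
    -- key pointwise bound
    have hxμ : ∀ n, x n * μ n ≤ 1 / (β * Real.exp 1) := by
      intro n
      rcases le_or_gt 0 (u n) with h | h
      · have : x n = 0 := by rw [hx]; simp; linarith
        rw [this, zero_mul]; positivity
      · have hxn : x n = -u n := by rw [hx]; simp; linarith
        have hμle : μ n ≤ Real.exp (β * u n) := by
          rw [hμdef]
          exact div_le_self (Real.exp_pos _).le hS1
        have h1 : x n * μ n ≤ x n * Real.exp (β * u n) :=
          mul_le_mul_of_nonneg_left hμle (hx0 n)
        have h2 : β * (x n * Real.exp (β * u n)) ≤ Real.exp (-1) := by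
          have := aux_mul_exp_neg_le (β * x n)
          have hexp : Real.exp (-(β * x n)) = Real.exp (β * u n) := by
            rw [hxn]; ring_nf
          rw [hexp] at this; linarith [this]
        have h3 : x n * Real.exp (β * u n) ≤ Real.exp (-1) / β := by
          rw [le_div_iff₀ hβ]; linarith
        refine h1.trans (h3.trans (le_of_eq ?_))
        rw [Real.exp_neg]
        field_simp
    have hxinr : x (Sum.inr ()) = 0 := by rw [hx]; simp [huinr]
    -- numerator bound
    have hnum1 : ∑ n, x n * μ n ≤ (Nm : ℝ) * (1 / (β * Real.exp 1)) := by
      rw [Fintype.sum_sum_type]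
      have h2 : ∑ n : Unit, x (Sum.inr n) * μ (Sum.inr n) = 0 := by
        simp [hxinr]
      rw [h2, add_zero]
      calc ∑ n : Fin Nm, x (Sum.inl n) * μ (Sum.inl n)
          ≤ ∑ _n : Fin Nm, 1 / (β * Real.exp 1) :=
            Finset.sum_le_sum fun n _ => hxμ _
        _ = (Nm : ℝ) * (1 / (β * Real.exp 1)) := by
            rw [Finset.sum_const, Finset.card_univ, Fintype.card_fin, nsmul_eq_mul]
    have hnum2 : ∑ n, x n * (μ n) ^ 2 ≤ 1 / (β * Real.exp 1) := by
      calc ∑ n, x n * (μ n) ^ 2 ≤ ∑ n, (1 / (β * Real.exp 1)) * μ n := by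
            refine Finset.sum_le_sum fun n _ => ?_
            have : x n * (μ n) ^ 2 = (x n * μ n) * μ n := by ring
            rw [this]
            exact mul_le_mul_of_nonneg_right (hxμ n) (hμpos n).le
        _ = 1 / (β * Real.exp 1) := by rw [← Finset.mul_sum, hμsum, mul_one]
    -- Cauchy-Schwarz: 1 ≤ (Nm+1) * S2
    have hCS : (1 : ℝ) ≤ ((Nm : ℝ) + 1) * S2 := by
      have := sq_sum_le_card_mul_sum_sq (s := (Finset.univ : Finset (Fin Nm ⊕ Unit))) (f := μ)
      rw [hμsum, one_pow, Finset.card_univ] at this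
      have hcard : (Fintype.card (Fin Nm ⊕ Unit) : ℝ) = (Nm : ℝ) + 1 := by
        simp
      calc (1:ℝ) ≤ (Fintype.card (Fin Nm ⊕ Unit) : ℝ) * ∑ i, μ i ^ 2 := by exact_mod_cast this
        _ = ((Nm : ℝ) + 1) * S2 := by rw [hcard, hS2]
    -- main: ∑ x μbar ≤ (Nm+1)/(βe)
    have hmain : ∑ n, x n * μbar k a n ≤ ((Nm : ℝ) + 1) / (β * Real.exp 1) := by
      have hnumtot : ∑ n, x n * (η k a n * μ n) ≤ (((Nm : ℝ) + 1) / (β * Real.exp 1)) * D := by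
        have hexp : ∑ n, x n * (η k a n * μ n)
            = (∑ n, x n * μ n) + c * ∑ n, x n * (μ n) ^ 2 := by
          rw [Finset.mul_sum, ← Finset.sum_add_distrib]
          exact Finset.sum_congr rfl fun n _ => by rw [hηdef]; ring
        rw [hexp, hDval, div_eq_mul_one_div]
        have h1 : c * ∑ n, x n * (μ n) ^ 2 ≤ c * (1 / (β * Real.exp 1)) :=
          mul_le_mul_of_nonneg_left hnum2 hc0
        have h2 : c * 1 ≤ c * (((Nm : ℝ) + 1) * S2) := mul_le_mul_of_nonneg_left hCS hc0
        have hβe' : 0 < 1 / (β * Real.exp 1) := by positivity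
        have h2' : c * 1 * (1 / (β * Real.exp 1))
            ≤ c * (((Nm : ℝ) + 1) * S2) * (1 / (β * Real.exp 1)) :=
          mul_le_mul_of_nonneg_right h2 hβe'.le
        nlinarith [hnum1, h1, h2', hβe'.le]
      calc ∑ n, x n * μbar k a n = (∑ n, x n * (η k a n * μ n)) / D := by
            rw [Finset.sum_div]
            exact Finset.sum_congr rfl fun n _ => by rw [hμbardef]; ring
        _ ≤ ((Nm : ℝ) + 1) / (β * Real.exp 1) := by
            rw [div_le_iff₀ hDpos]; exact hnumtot
    -- θ n ≤ M + x n pointwise (as coefficient of μbar)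
    have hθle : ∀ n, θ k a n ≤ M + x n := by
      intro n
      have hθval : θ k a n = (Sum.elim (R k) (fun _ => (0:ℝ)) n
          - Sum.elim (C k) (fun _ => (0:ℝ)) n) - u n := by
        rw [hθ, hu, hU]
        cases n with
        | inl n => simp only [Sum.elim_inl]; ring
        | inr n => simp
      rw [hθval]
      have h1 : -u n ≤ x n := le_max_left _ _
      have h2 := hMle k n
      linarith
    calc ∑ n, θ k a n * μbar k a n ≤ ∑ n, (M + x n) * μbar k a n :=
          Finset.sum_le_sum fun n _ => mul_le_mul_of_nonneg_right (hθle n) (hμbarnn n)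
      _ = M * ∑ n, μbar k a n + ∑ n, x n * μbar k a n := by
          rw [Finset.mul_sum, ← Finset.sum_add_distrib]
          exact Finset.sum_congr rfl fun n _ => by ring
      _ ≤ M + ((Nm : ℝ) + 1) / (β * Real.exp 1) := by
          rw [hμbarsum, mul_one]; linarith [hmain]
  calc ∑ k, ρ k * ∑ n, θ k a n * μbar k a n
      ≤ ∑ k, ρ k * (M + ((Nm : ℝ) + 1) / (β * Real.exp 1)) :=
        Finset.sum_le_sum fun k _ => mul_le_mul_of_nonneg_left (key k) (hρ.1 k)
    _ = M + ((Nm : ℝ) + 1) / (β * Real.exp 1) := by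
        rw [← Finset.sum_mul, hρ.2, one_mul]
end

section
/- One-dimensional transition inversion: fix β > 0 and γ > 0, and set γ̂ = e^{βγ} > 1. Let μ_prev ∈ [0,1] and μ ∈ (0,1), and set κ = 1 + (γ̂² − 1)(μ_prev − μ). Then there is a unique x > 0 such that μ = [γ̂x/(1+γ̂x) − x/(γ̂+x)]·μ_prev + x/(γ̂+x), and it is given by x = ( 2μ − κ + √( (2μ−κ)² + 4γ̂²μ(1−μ) ) ) / ( 2γ̂(1−μ) ). Consequently, writing x = e^{−β(a−R)}, there is a unique price a ∈ ℝ achieving the transition from state μ_prev to state μ. -/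
/-- Proposition 8 of the paper: one-dimensional transition
inversion. Given `μ_prev ∈ [0,1]` and `μ ∈ (0,1)`, the unique `x > 0` such
that one step of the two-state logit-with-inertia kernel maps `μ_prev` to `μ`
is given by the explicit quadratic-root formula; consequently, writing
`x = e^{-β(a - R)}`, there is a unique price `a` achieving this transition. -/
theorem transition_inversion
    (β γ : ℝ) (hβ : 0 < β) (hγ : 0 < γ)
    (γhat : ℝ) (hγhat : γhat = Real.exp (β * γ))
    (μprev μ : ℝ) (hμprev : μprev ∈ Set.Icc (0 : ℝ) 1) (hμ : μ ∈ Set.Ioo (0 : ℝ) 1)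
    (κ : ℝ) (hκ : κ = 1 + (γhat ^ 2 - 1) * (μprev - μ))
    (x0 : ℝ)
    (hx0 : x0 = (2 * μ - κ + Real.sqrt ((2 * μ - κ) ^ 2 + 4 * γhat ^ 2 * μ * (1 - μ))) /
      (2 * γhat * (1 - μ))) :
    (∀ x : ℝ,
      (0 < x ∧
        μ = (γhat * x / (1 + γhat * x) - x / (γhat + x)) * μprev + x / (γhat + x)) ↔
      x = x0) ∧
    ∀ R : ℝ, ∃! a : ℝ,
      μ = (γhat * Real.exp (-(β * (a - R))) / (1 + γhat * Real.exp (-(β * (a - R))))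
            - Real.exp (-(β * (a - R))) / (γhat + Real.exp (-(β * (a - R))))) * μprev
          + Real.exp (-(β * (a - R))) / (γhat + Real.exp (-(β * (a - R)))) := by
  obtain ⟨hμ0, hμ1⟩ := hμ
  have hγ0 : 0 < γhat := hγhat ▸ Real.exp_pos _
  have h1μ : 0 < 1 - μ := by linarith
  set D : ℝ := (2 * μ - κ) ^ 2 + 4 * γhat ^ 2 * μ * (1 - μ) with hD
  have hDpos : (2 * μ - κ) ^ 2 < D := by
    have h4 : 0 < 4 * γhat ^ 2 * μ * (1 - μ) := by positivity
    simp only [hD]; linarith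
  have hs2 : Real.sqrt D ^ 2 = D := Real.sq_sqrt (by nlinarith)
  have hsgt : |2 * μ - κ| < Real.sqrt D := by
    have := Real.sqrt_lt_sqrt (sq_nonneg (2 * μ - κ)) hDpos
    rwa [Real.sqrt_sq_eq_abs] at this
  have hsgt' : -(2 * μ - κ) < Real.sqrt D := lt_of_le_of_lt (neg_le_abs _) hsgt
  have hsgt'' : 2 * μ - κ < Real.sqrt D := lt_of_le_of_lt (le_abs_self _) hsgt
  have hden : 0 < 2 * γhat * (1 - μ) := by positivity
  have hx0pos : 0 < x0 := by
    rw [hx0]; apply div_pos; linarith; exact hden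
  set x1 : ℝ := (2 * μ - κ - Real.sqrt D) / (2 * γhat * (1 - μ)) with hx1
  have hx1neg : x1 < 0 := by
    rw [hx1]; apply div_neg_of_neg_of_pos; linarith; exact hden
  have hfact : ∀ x : ℝ, γhat * (1 - μ) * x ^ 2 + (κ - 2 * μ) * x - γhat * μ
      = γhat * (1 - μ) * (x - x0) * (x - x1) := by
    intro x
    have hne : 2 * γhat * (1 - μ) ≠ 0 := by positivity
    rw [hx0, hx1]
    field_simp
    linear_combination hs2 + hD
  have key : ∀ x : ℝ,
      (0 < x ∧
        μ = (γhat * x / (1 + γhat * x) - x / (γhat + x)) * μprev + x / (γhat + x)) ↔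
      x = x0 := by
    intro x
    constructor
    · rintro ⟨hxpos, heq⟩
      have hd1 : (0:ℝ) < 1 + γhat * x := by positivity
      have hd2 : (0:ℝ) < γhat + x := by positivity
      have hquad : γhat * (1 - μ) * x ^ 2 + (κ - 2 * μ) * x - γhat * μ = 0 := by
        field_simp at heq
        refine mul_left_cancel₀ hd2.ne' ?_
        linear_combination -(γhat + x) * heq + (γhat + x) * x * hκ
      rw [hfact x] at hquad
      rcases mul_eq_zero.1 hquad with h | h
      · rcases mul_eq_zero.1 h with h' | h'
        · exact absurd h' (by positivity)
        · linarith [sub_eq_zero.1 h']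
      · exfalso; have := sub_eq_zero.1 h; nlinarith
    · intro hxe
      rw [hxe]
      refine ⟨hx0pos, ?_⟩
      have hquad : γhat * (1 - μ) * x0 ^ 2 + (κ - 2 * μ) * x0 - γhat * μ = 0 := by
        rw [hfact x0]; ring
      have hd1 : (0:ℝ) < 1 + γhat * x0 := by positivity
      have hd2 : (0:ℝ) < γhat + x0 := by positivity
      field_simp
      linear_combination -hquad + x0 * hκ
  refine ⟨key, ?_⟩
  intro R
  refine ⟨R - Real.log x0 / β, ?_, ?_⟩
  · have hx : Real.exp (-(β * (R - Real.log x0 / β - R))) = x0 := by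
      have h : -(β * (R - Real.log x0 / β - R)) = Real.log x0 := by
        field_simp
        ring
      rw [h, Real.exp_log hx0pos]
    simp only [hx]
    exact ((key x0).2 rfl).2
  · intro a ha
    have hx : Real.exp (-(β * (a - R))) = x0 :=
      (key _).1 ⟨Real.exp_pos _, ha⟩
    have hlog := congrArg Real.log hx
    rw [Real.log_exp] at hlog
    field_simp
    linear_combination -hlog
end

section
/- Optimality of constant prices without switching cost: in the one-offer model with γ = 0, fix β > 0, R ∈ ℝ, C ∈ ℝ. Let τ ≥ 1 and let μ_0, μ_1, …, μ_τ ∈ (0,1) with μ_τ = μ_0 (a τ-cycle). Set a_t = R − (1/β)·log(μ_t/(1−μ_t)) (the unique price realizing the transition to μ_t when γ = 0), the cycle gain g[l] = (1/τ)·Σ_{t=1}^τ (a_t − C)·μ_t, the cycle mean μ̄[l] = (1/τ)·Σ_{t=1}^τ μ_t, the cycle variance V[l] = (1/τ)·Σ_{t=1}^τ (μ_t − μ̄[l])², and the optimal steady-state gain ḡ = sup_{μ∈(0,1)} ( R − C − (1/β)·log(μ/(1−μ)) )·μ. Then g[l] ≤ ḡ − V[l]/β. In particular, among cycles the gain is maximized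 by constant-price policies. -/
open Real Set

private lemma hasDerivAt_H {x : ℝ} (hx : x ∈ Set.Ioo (0:ℝ) 1) :
    HasDerivAt (fun y => y * (Real.log y - Real.log (1 - y)))
      (Real.log x - Real.log (1 - x) + (1 - x)⁻¹) x := by
  have h1 : (0:ℝ) < x := hx.1
  have h2 : (0:ℝ) < 1 - x := by linarith [hx.2]
  have dlog1 : HasDerivAt Real.log x⁻¹ x := Real.hasDerivAt_log h1.ne'
  have dinner : HasDerivAt (fun y : ℝ => 1 - y) (-1) x := by
    simpa using (hasDerivAt_id x).const_sub 1
  have dlog2 : HasDerivAt (fun y => Real.log (1 - y)) (-(1-x)⁻¹) x := by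
    have := (Real.hasDerivAt_log h2.ne').comp x dinner
    exact this.congr_deriv (by ring)
  have := (hasDerivAt_id x).mul (dlog1.sub dlog2)
  refine this.congr_deriv ?_
  field_simp
  simp only [Pi.sub_apply, id]
  ring

private lemma hasDerivAt_G {x : ℝ} (hx : x ∈ Set.Ioo (0:ℝ) 1) :
    HasDerivAt (fun y => Real.log y - Real.log (1 - y) + (1 - y)⁻¹ - 2 * y)
      (x⁻¹ + (1 - x)⁻¹ + ((1 - x) ^ 2)⁻¹ - 2) x := by
  have h1 : (0:ℝ) < x := hx.1
  have h2 : (0:ℝ) < 1 - x := by linarith [hx.2]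
  have dlog1 : HasDerivAt Real.log x⁻¹ x := Real.hasDerivAt_log h1.ne'
  have dinner : HasDerivAt (fun y : ℝ => 1 - y) (-1) x := by
    simpa using (hasDerivAt_id x).const_sub 1
  have dlog2 : HasDerivAt (fun y => Real.log (1 - y)) (-(1-x)⁻¹) x := by
    have := (Real.hasDerivAt_log h2.ne').comp x dinner
    exact this.congr_deriv (by ring)
  have dinv : HasDerivAt (fun y : ℝ => (1 - y)⁻¹) (((1 - x) ^ 2)⁻¹) x := by
    have := dinner.inv h2.ne'
    refine this.congr_deriv ?_
    field_simp
  have dlin : HasDerivAt (fun y : ℝ => 2 * y) 2 x := by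
    simpa using (hasDerivAt_id x).const_mul (2:ℝ)
  have := ((dlog1.sub dlog2).add dinv).sub dlin
  refine this.congr_deriv ?_
  ring

private lemma Gmono : MonotoneOn
    (fun y => Real.log y - Real.log (1 - y) + (1 - y)⁻¹ - 2 * y) (Set.Ioo (0:ℝ) 1) := by
  apply monotoneOn_of_deriv_nonneg (convex_Ioo 0 1)
  · exact fun x hx => (hasDerivAt_G hx).continuousAt.continuousWithinAt
  · rw [interior_Ioo]
    exact fun x hx => (hasDerivAt_G hx).differentiableAt.differentiableWithinAt
  · rw [interior_Ioo]
    intro x hx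
    rw [(hasDerivAt_G hx).deriv]
    have h1 : (0:ℝ) < x := hx.1
    have h2 : (0:ℝ) < 1 - x := by linarith [hx.2]
    have i1 : (1:ℝ) ≤ x⁻¹ := by
      rw [le_inv_comm₀ one_pos h1]; simpa using hx.2.le
    have i2 : (1:ℝ) ≤ (1 - x)⁻¹ := by
      rw [le_inv_comm₀ one_pos h2]; linarith
    have i3 : (0:ℝ) < ((1 - x) ^ 2)⁻¹ := by positivity
    linarith

/-- Strong convexity of `h(x) = x * log(x/(1-x))` on `(0,1)` with modulus 2. -/
private lemma key {p q : ℝ} (hp : p ∈ Set.Ioo (0:ℝ) 1) (hq : q ∈ Set.Ioo (0:ℝ) 1) :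
    p * (Real.log p - Real.log (1 - p))
      + (Real.log p - Real.log (1 - p) + (1 - p)⁻¹) * (q - p) + (q - p) ^ 2
      ≤ q * (Real.log q - Real.log (1 - q)) := by
  set c := Real.log p - Real.log (1 - p) + (1 - p)⁻¹ with hc
  set F : ℝ → ℝ := fun y => y * (Real.log y - Real.log (1 - y)) - c * (y - p) - (y - p) ^ 2
    with hFdef
  set G : ℝ → ℝ := fun y => Real.log y - Real.log (1 - y) + (1 - y)⁻¹ - 2 * y with hGdef
  have hF : ∀ x ∈ Set.Ioo (0:ℝ) 1, HasDerivAt F (G x - G p) x := by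
    intro x hx
    have d2 : HasDerivAt (fun y : ℝ => c * (y - p)) c x := by
      simpa using ((hasDerivAt_id x).sub_const p).const_mul c
    have d3 : HasDerivAt (fun y : ℝ => (y - p) ^ 2) (2 * (x - p)) x := by
      have := ((hasDerivAt_id x).sub_const p).pow 2
      exact this.congr_deriv (by simp)
    have := ((hasDerivAt_H hx).sub d2).sub d3
    refine this.congr_deriv ?_
    simp only [hGdef, hc]
    ring
  have hFle : F p ≤ F q := by
    rcases le_total p q with hpq | hpq
    · have hsub : Set.Icc p q ⊆ Set.Ioo (0:ℝ) 1 :=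
        fun x hx => ⟨lt_of_lt_of_le hp.1 hx.1, lt_of_le_of_lt hx.2 hq.2⟩
      have := monotoneOn_of_deriv_nonneg (convex_Icc p q)
        (fun x hx => (hF x (hsub hx)).continuousAt.continuousWithinAt)
        (by
          rw [interior_Icc]
          exact fun x hx => (hF x (hsub (Set.Ioo_subset_Icc_self hx))).differentiableAt.differentiableWithinAt)
        (by
          rw [interior_Icc]
          intro x hx
          have hx' : x ∈ Set.Ioo (0:ℝ) 1 := hsub (Set.Ioo_subset_Icc_self hx)
          rw [(hF x hx').deriv]
          exact sub_nonneg.mpr (Gmono hp hx' hx.1.le))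
      exact this (Set.left_mem_Icc.2 hpq) (Set.right_mem_Icc.2 hpq) hpq
    · have hsub : Set.Icc q p ⊆ Set.Ioo (0:ℝ) 1 :=
        fun x hx => ⟨lt_of_lt_of_le hq.1 hx.1, lt_of_le_of_lt hx.2 hp.2⟩
      have := antitoneOn_of_deriv_nonpos (convex_Icc q p)
        (fun x hx => (hF x (hsub hx)).continuousAt.continuousWithinAt)
        (by
          rw [interior_Icc]
          exact fun x hx => (hF x (hsub (Set.Ioo_subset_Icc_self hx))).differentiableAt.differentiableWithinAt)
        (by
          rw [interior_Icc]
          intro x hx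
          have hx' : x ∈ Set.Ioo (0:ℝ) 1 := hsub (Set.Ioo_subset_Icc_self hx)
          rw [(hF x hx').deriv]
          exact sub_nonpos.mpr (Gmono hx' hp hx.2.le))
      exact this (Set.left_mem_Icc.2 hpq) (Set.right_mem_Icc.2 hpq) hpq
  simp only [hFdef, sub_self, mul_zero] at hFle
  nlinarith [hFle]


/-- Proposition 9 of the paper: optimality of constant
prices without switching cost. In the one-offer model with `γ = 0`, the gain
of any `τ`-cycle `l` is at most the optimal steady-state gain minus
`V[l]/β`, where `V[l]` is the variance of the customer distribution over the
cycle; hence constant-price policies are optimal among cycles. -/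
theorem constant_price_optimal_without_switching_cost
    (β R C : ℝ) (hβ : 0 < β) (τ : ℕ) (hτ : 1 ≤ τ)
    (μ : ℕ → ℝ) (hμ : ∀ t ≤ τ, μ t ∈ Set.Ioo (0 : ℝ) 1) (hcycle : μ τ = μ 0)
    (a : ℕ → ℝ) (ha : ∀ t, a t = R - 1 / β * Real.log (μ t / (1 - μ t)))
    (g μbar V gbar : ℝ)
    (hg : g = 1 / (τ : ℝ) * ∑ t ∈ Finset.Icc 1 τ, (a t - C) * μ t)
    (hμbar : μbar = 1 / (τ : ℝ) * ∑ t ∈ Finset.Icc 1 τ, μ t)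
    (hV : V = 1 / (τ : ℝ) * ∑ t ∈ Finset.Icc 1 τ, (μ t - μbar) ^ 2)
    (hgbar : gbar = sSup {x | ∃ m ∈ Set.Ioo (0 : ℝ) 1,
      x = (R - C - 1 / β * Real.log (m / (1 - m))) * m}) :
    g ≤ gbar - V / β := by
  have hτ0 : (0:ℝ) < (τ:ℝ) := by exact_mod_cast Nat.lt_of_lt_of_le Nat.zero_lt_one hτ
  set S := Finset.Icc 1 τ with hS
  have hSne : S.Nonempty := Finset.nonempty_Icc.2 hτ
  have hcard : (S.card : ℝ) = (τ : ℝ) := by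
    simp [hS, Nat.card_Icc]
  have hmem : ∀ t ∈ S, μ t ∈ Set.Ioo (0:ℝ) 1 := by
    intro t ht
    exact hμ t (Finset.mem_Icc.mp ht).2
  -- μbar ∈ (0,1)
  have hsum_pos : 0 < ∑ t ∈ S, μ t :=
    Finset.sum_pos (fun t ht => (hmem t ht).1) hSne
  have hsum_lt : (∑ t ∈ S, μ t) < (τ:ℝ) := by
    calc (∑ t ∈ S, μ t) < ∑ t ∈ S, 1 :=
          Finset.sum_lt_sum_of_nonempty hSne (fun t ht => (hmem t ht).2)
      _ = (τ:ℝ) := by rw [Finset.sum_const, nsmul_eq_mul, mul_one, hcard]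
  have hp : μbar ∈ Set.Ioo (0:ℝ) 1 := by
    constructor
    · rw [hμbar]; positivity
    · rw [hμbar]
      rw [div_mul_eq_mul_div, one_mul, div_lt_one hτ0] at *
      · exact hsum_lt
  have h1p : (0:ℝ) < 1 - μbar := by linarith [hp.2]
  -- pointwise bound on each term
  have hterm : ∀ t ∈ S, (a t - C) * μ t ≤
      (R - C) * μ t - 1/β * (μbar * (Real.log μbar - Real.log (1 - μbar))
        + (Real.log μbar - Real.log (1 - μbar) + (1 - μbar)⁻¹) * (μ t - μbar)
        + (μ t - μbar) ^ 2) := by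
    intro t ht
    have hmt := hmem t ht
    have hlog : Real.log (μ t / (1 - μ t)) = Real.log (μ t) - Real.log (1 - μ t) :=
      Real.log_div hmt.1.ne' (by linarith [hmt.2])
    have hk := key hp hmt
    rw [ha t, hlog]
    have hβ' : 0 < 1/β := by positivity
    nlinarith [mul_le_mul_of_nonneg_left hk hβ'.le]
  -- sum the bound
  have hsum_le : (∑ t ∈ S, (a t - C) * μ t) ≤
      (R - C) * (∑ t ∈ S, μ t) - 1/β * ((τ:ℝ) * (μbar * (Real.log μbar - Real.log (1 - μbar)))
        + (Real.log μbar - Real.log (1 - μbar) + (1 - μbar)⁻¹) * ((∑ t ∈ S, μ t) - (τ:ℝ) * μbar)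
        + (∑ t ∈ S, (μ t - μbar) ^ 2)) := by
    refine le_trans (Finset.sum_le_sum hterm) (le_of_eq ?_)
    rw [Finset.sum_sub_distrib, ← Finset.mul_sum, ← Finset.mul_sum]
    congr 1
    congr 1
    rw [Finset.sum_add_distrib, Finset.sum_add_distrib, Finset.sum_const, ← Finset.mul_sum,
      Finset.sum_sub_distrib, Finset.sum_const, nsmul_eq_mul, nsmul_eq_mul, hcard]
  have hsum_mu : (∑ t ∈ S, μ t) = (τ:ℝ) * μbar := by
    rw [hμbar]; field_simp
  have hsum_V : (∑ t ∈ S, (μ t - μbar) ^ 2) = (τ:ℝ) * V := by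
    rw [hV]; field_simp
  rw [hsum_mu, hsum_V] at hsum_le
  -- g ≤ f(μbar) - V/β
  have hgle : g ≤ (R - C - 1/β * Real.log (μbar / (1 - μbar))) * μbar - V/β := by
    rw [hg]
    have hlogb : Real.log (μbar / (1 - μbar)) = Real.log μbar - Real.log (1 - μbar) :=
      Real.log_div hp.1.ne' h1p.ne'
    rw [hlogb]
    have := mul_le_mul_of_nonneg_left hsum_le (by positivity : (0:ℝ) ≤ 1/(τ:ℝ))
    have hτne : (τ:ℝ) ≠ 0 := hτ0.ne'
    calc 1/(τ:ℝ) * ∑ t ∈ S, (a t - C) * μ t ≤ _ := this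
      _ = (R - C - 1/β * (Real.log μbar - Real.log (1 - μbar))) * μbar - V/β := by
          field_simp
          ring
  -- f(μbar) ≤ gbar
  have hbdd : BddAbove {x | ∃ m ∈ Set.Ioo (0 : ℝ) 1,
      x = (R - C - 1 / β * Real.log (m / (1 - m))) * m} := by
    refine ⟨|R - C| + 1/β, ?_⟩
    rintro x ⟨m, hm, rfl⟩
    have hm1 : (0:ℝ) < 1 - m := by linarith [hm.2]
    have hlogm : Real.log (m / (1 - m)) = Real.log m - Real.log (1 - m) :=
      Real.log_div hm.1.ne' hm1.ne'
    rw [hlogm]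
    have l1 : Real.log m⁻¹ ≤ m⁻¹ - 1 := Real.log_le_sub_one_of_pos (inv_pos.2 hm.1)
    rw [Real.log_inv] at l1
    have l1' : m * Real.log m ≥ m - 1 := by
      nlinarith [mul_le_mul_of_nonneg_left l1 hm.1.le, mul_inv_cancel₀ hm.1.ne']
    have l2 : Real.log (1 - m) ≤ 0 := Real.log_nonpos (by linarith) (by linarith [hm.1])
    have l2' : m * Real.log (1 - m) ≤ 0 := mul_nonpos_of_nonneg_of_nonpos hm.1.le l2
    have hβ' : (0:ℝ) < 1/β := by positivity
    have hRC : (R - C) * m ≤ |R - C| := by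
      calc (R - C) * m ≤ |R - C| * m := mul_le_mul_of_nonneg_right (le_abs_self _) hm.1.le
        _ ≤ |R - C| * 1 := mul_le_mul_of_nonneg_left hm.2.le (abs_nonneg _)
        _ = |R - C| := mul_one _
    nlinarith [mul_le_mul_of_nonneg_left l2' hβ'.le, mul_le_mul_of_nonneg_left l1' hβ'.le,
      mul_nonneg hβ'.le hm.1.le]
  have hfle : (R - C - 1/β * Real.log (μbar / (1 - μbar))) * μbar ≤ gbar := by
    rw [hgbar]
    exact le_csSup hbdd ⟨μbar, hp, rfl⟩
  linarith
end

section
/- Divergence of cyclic gains with growing inertia: in the one-offer model, fix β > 0, R ∈ ℝ, C ∈ ℝ, reals 0 < s < S < 1 and an integer τ ≥ 2. Consider the (s,S,τ)-cycle defined by μ_t = S + (s−S)·t/τ for t = 0,1,…,τ−1 and μ_τ = μ_0 = S. For γ > 0 and γ̂ = e^{βγ}, let a_t(γ) = R − (1/β)·log x_t(γ), where x_t(γ) > 0 is the unique positive solution of μ_t = [γ̂x/(1+γ̂x)]·μ_{t−1} + [x/(γ̂+x)]·(1−μ_{t−1}), and let g[l](γ) = (1/τ)·Σ_{t=1}^τ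 (a_t(γ) − C)·μ_t be the mean profit over the cycle. Then there exist constants c ∈ ℝ and Γ_0 > 0 such that for all γ ≥ Γ_0: g[l](γ) ≥ ((τ−1)·s − S)·γ/τ − c. In particular, if (τ−1)·s > S then g[l](γ) → +∞ as γ → ∞, so (since the optimal steady-state gain is bounded independently of γ) there is a threshold Γ such that for all γ ≥ Γ the cyclic policy strictly outperforms every constant-price (steady-state) policy. -/
set_option maxHeartbeats 1000000


open Filter

private lemma ratio_lt_ratio {a b : ℝ} (ha : 0 < a) (hab : a < b) :
    a / (1 + a) < b / (1 + b) := by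
  rw [div_lt_div_iff₀ (by linarith) (by linarith)]
  nlinarith

private lemma steady_element_bound (β R C : ℝ) (hβ : 0 < β) (γ : ℝ) (hγnn : 0 ≤ γ)
    (m : ℝ) (hm0 : 0 < m) (hm1 : m < 1) :
    (R - 1 / β * Real.log
        ((2 * m - 1 +
            Real.sqrt ((2 * m - 1) ^ 2 + 4 * Real.exp (β * γ) ^ 2 * m * (1 - m))) /
          (2 * Real.exp (β * γ) * (1 - m))) - C) * m
      ≤ |R - C| + Real.log 2 / β + 1 / β := by
  have hlog2pos : 0 < Real.log 2 := Real.log_pos one_lt_two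
  set E := Real.exp (β * γ) with hEdef
  have hE0 : 0 < E := by rw [hEdef]; positivity
  have hE1 : 1 ≤ E := by rw [hEdef]; exact Real.one_le_exp (by positivity)
  have hlogE : Real.log E = β*γ := by rw [hEdef, Real.log_exp]
  have hm1' : 0 < 1 - m := by linarith
  have hsm0 : 0 < Real.sqrt m := Real.sqrt_pos.2 hm0
  have hmsq : Real.sqrt m ^ 2 = m := Real.sq_sqrt hm0.le
  set r := Real.sqrt ((2 * m - 1) ^ 2 + 4 * E ^ 2 * m * (1 - m)) with hrdef
  have hprod : 0 < 4 * E ^ 2 * m * (1 - m) := by positivity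
  have hDq0 : (0:ℝ) < (2*m-1)^2 + 4*E^2*m*(1-m) := by nlinarith [sq_nonneg (2*m-1)]
  have hr2 : r^2 = (2*m-1)^2 + 4*E^2*m*(1-m) := by
    rw [hrdef]; exact Real.sq_sqrt hDq0.le
  have habs : |2*m-1| < r := by
    rw [hrdef, ← Real.sqrt_sq_eq_abs]
    exact Real.sqrt_lt_sqrt (sq_nonneg _) (by nlinarith)
  have hq0 : 0 < r - (2*m-1) := by
    have := le_abs_self (2*m-1); linarith
  have hnum0 : 0 < 2 * m - 1 + r := by
    have := neg_abs_le (2*m-1); linarith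
  set xb := (2 * m - 1 + r) / (2 * E * (1 - m)) with hxbdef
  have hxb0 : 0 < xb := by
    rw [hxbdef]; exact div_pos hnum0 (by positivity)
  have hiden : (2*m-1+r)*(r-(2*m-1)) = 4*E^2*m*(1-m) := by linear_combination hr2
  have hxeq : xb * (r - (2*m-1)) = 2*E*m := by
    rw [hxbdef, div_mul_eq_mul_div, hiden, div_eq_iff (by positivity : (2*E*(1-m)) ≠ 0)]
    ring
  have hrub : r ≤ 1 + 2*E*Real.sqrt m := by
    rw [hrdef]
    have h1 : (2*m-1)^2 + 4*E^2*m*(1-m) ≤ (1 + 2*E*Real.sqrt m)^2 := by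
      nlinarith [hmsq, mul_pos hm0 hm1', mul_pos hE0 hsm0, sq_nonneg (E*m)]
    calc Real.sqrt ((2*m-1)^2 + 4*E^2*m*(1-m))
        ≤ Real.sqrt ((1+2*E*Real.sqrt m)^2) := Real.sqrt_le_sqrt h1
      _ = 1 + 2*E*Real.sqrt m := Real.sqrt_sq (by positivity)
  have hxlb : E*m/(1+E*Real.sqrt m) ≤ xb := by
    have hub2 : r - (2*m-1) ≤ 2 + 2*E*Real.sqrt m := by linarith [hrub, hm0]
    rw [div_le_iff₀ (by positivity)]
    nlinarith [hxeq, mul_le_mul_of_nonneg_left hub2 hxb0.le]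
  have hxbpos' : 0 < E*m/(1+E*Real.sqrt m) := by positivity
  have hlogxb : β*γ + Real.log m - Real.log (1+E*Real.sqrt m) ≤ Real.log xb := by
    have h2 : Real.log (E*m/(1+E*Real.sqrt m)) ≤ Real.log xb := Real.log_le_log hxbpos' hxlb
    rw [Real.log_div (by positivity) (by positivity),
      Real.log_mul hE0.ne' hm0.ne', hlogE] at h2
    linarith
  have hkey : (β*(R-C) - Real.log xb) * m ≤ β * |R-C| + Real.log 2 + 1 →
      (R - 1/β * Real.log xb - C)*m ≤ |R - C| + Real.log 2 / β + 1 / β := by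
    intro h
    have e1 : (R - 1/β * Real.log xb - C)*m = (1/β) * ((β*(R-C) - Real.log xb)*m) := by
      field_simp
      ring
    have e2 : |R - C| + Real.log 2 / β + 1 / β = (1/β) * (β * |R-C| + Real.log 2 + 1) := by
      field_simp
    rw [e1, e2]
    exact mul_le_mul_of_nonneg_left h (by positivity)
  apply hkey
  have hstep : (β*(R-C) - Real.log xb)*m
      ≤ (β*(R-C) - (β*γ + Real.log m - Real.log (1+E*Real.sqrt m)))*m :=
    mul_le_mul_of_nonneg_right (by linarith) hm0.le
  refine le_trans hstep ?_
  have hml : -(m * Real.log m) ≤ 1 - m := by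
    have h1 := Real.log_le_sub_one_of_pos (show (0:ℝ) < m⁻¹ by positivity)
    rw [Real.log_inv] at h1
    have h2 : m * m⁻¹ = 1 := mul_inv_cancel₀ hm0.ne'
    nlinarith [mul_le_mul_of_nonneg_left h1 hm0.le]
  have habsR : β*(R-C)*m ≤ β * |R-C| := by
    have h1 : β*(R-C)*m ≤ β * |R-C| * m :=
      mul_le_mul_of_nonneg_right (mul_le_mul_of_nonneg_left (le_abs_self _) hβ.le) hm0.le
    have h2 : β * |R-C| * m ≤ β * |R-C| := by
      nlinarith [mul_nonneg hβ.le (abs_nonneg (R-C))]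
    linarith
  rcases le_or_gt 1 (E * Real.sqrt m) with hcE | hcE
  · have hObj : Real.log (1+E*Real.sqrt m) ≤ Real.log 2 + β*γ + Real.log m / 2 := by
      have h1 : 1 + E*Real.sqrt m ≤ 2*(E*Real.sqrt m) := by linarith
      have h2 := Real.log_le_log (by positivity) h1
      rw [Real.log_mul two_ne_zero (by positivity), Real.log_mul hE0.ne' hsm0.ne',
        hlogE, Real.log_sqrt hm0.le] at h2
      linarith
    have h3 : (β*(R-C) - (β*γ + Real.log m - Real.log (1+E*Real.sqrt m)))*m
        ≤ (β*(R-C) + Real.log 2 - Real.log m / 2)*m :=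
      mul_le_mul_of_nonneg_right (by linarith) hm0.le
    refine le_trans h3 ?_
    nlinarith [habsR, hml, mul_nonneg hlog2pos.le (show (0:ℝ) ≤ 1-m by linarith)]
  · have hObj : Real.log (1+E*Real.sqrt m) ≤ Real.log 2 :=
      Real.log_le_log (by positivity) (by linarith)
    have h3 : (β*(R-C) - (β*γ + Real.log m - Real.log (1+E*Real.sqrt m)))*m
        ≤ (β*(R-C) - β*γ - Real.log m + Real.log 2)*m :=
      mul_le_mul_of_nonneg_right (by linarith) hm0.le
    refine le_trans h3 ?_
    nlinarith [habsR, hml, mul_nonneg hlog2pos.le (show (0:ℝ) ≤ 1-m by linarith),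
      mul_nonneg (mul_nonneg hβ.le hγnn) hm0.le]

/-- Proposition 10 of the paper: divergence of cyclic gains
with growing inertia. For the `(s,S,τ)`-cycle, the mean profit `g[l](γ)`
satisfies `g[l](γ) ≥ ((τ-1)s - S)γ/τ - c` for all large `γ`; hence if
`(τ-1)s > S` the cyclic gain diverges as `γ → ∞` and eventually strictly
outperforms the (bounded) optimal steady-state gain of constant-price
policies. -/
theorem cyclic_gain_diverges_with_inertia
    (β R C s S : ℝ) (hβ : 0 < β) (hs : 0 < s) (hsS : s < S) (hS1 : S < 1)
    (τ : ℕ) (hτ : 2 ≤ τ)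
    (μ : ℕ → ℝ)
    (hμ : ∀ t : ℕ, t < τ → μ t = S + (s - S) * t / τ) (hμτ : μ τ = S)
    (x : ℝ → ℕ → ℝ)
    (hx : ∀ γ : ℝ, 0 < γ → ∀ t : ℕ, 1 ≤ t → t ≤ τ →
      0 < x γ t ∧
      μ t = Real.exp (β * γ) * x γ t / (1 + Real.exp (β * γ) * x γ t) * μ (t - 1)
        + x γ t / (Real.exp (β * γ) + x γ t) * (1 - μ (t - 1)))
    (g : ℝ → ℝ)
    (hg : ∀ γ, g γ = 1 / (τ : ℝ) *
      ∑ t ∈ Finset.Icc 1 τ, (R - 1 / β * Real.log (x γ t) - C) * μ t)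
    (gbar : ℝ → ℝ)
    (hgbar : ∀ γ, gbar γ = sSup {y | ∃ m ∈ Set.Ioo (0 : ℝ) 1,
      y = (R - 1 / β * Real.log
          ((2 * m - 1 +
              Real.sqrt ((2 * m - 1) ^ 2 + 4 * Real.exp (β * γ) ^ 2 * m * (1 - m))) /
            (2 * Real.exp (β * γ) * (1 - m))) - C) * m}) :
    (∃ c Γ0 : ℝ, 0 < Γ0 ∧ ∀ γ : ℝ, Γ0 ≤ γ →
      (((τ : ℝ) - 1) * s - S) * γ / (τ : ℝ) - c ≤ g γ) ∧
    (((τ : ℝ) - 1) * s > S →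
      Tendsto g atTop atTop ∧ ∃ Γ : ℝ, ∀ γ : ℝ, Γ ≤ γ → gbar γ < g γ) := by
  have hτR : (2:ℝ) ≤ (τ:ℝ) := by exact_mod_cast hτ
  have hτ0 : (0:ℝ) < (τ:ℝ) := by linarith
  -- constants
  set D : ℝ := (S - s) / (τ:ℝ) with hDdef
  have hD0 : 0 < D := div_pos (by linarith) hτ0
  have hsD_lt : s + D < S := by
    have h1 : (S - s)/(τ:ℝ) < S - s := by
      rw [div_lt_iff₀ hτ0]; nlinarith
    rw [hDdef]; linarith
  have hsD0 : 0 < s + D := by linarith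
  set δ : ℝ := (1 - S)/2 with hδdef
  have hδ0 : 0 < δ := by rw [hδdef]; linarith
  set Δ : ℝ := S - (s + D) with hΔdef
  have hΔ0 : 0 < Δ := by rw [hΔdef]; linarith
  set M : ℝ := (Δ + δ)/δ with hMdef
  have hM0 : 0 < M := by rw [hMdef]; positivity
  set c₁ : ℝ := R - C - Real.log (S / D) / β with hc₁
  set c₂ : ℝ := R - C - Real.log M / β with hc₂
  set c : ℝ := -((((τ:ℝ)-1) * c₁ * s + c₂ * S) / (τ:ℝ)) with hcdef
  set Γ0 : ℝ := 1 + |c₁| + |Real.log ((s + D)/(δ * M))| / (2*β) with hΓ0def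
  have hΓ0pos : 0 < Γ0 := by rw [hΓ0def]; positivity
  -- bounds on the cycle states
  have hμbounds : ∀ t : ℕ, t < τ → s ≤ μ t ∧ μ t ≤ S := by
    intro t ht
    have htR : (t:ℝ) ≤ (τ:ℝ) - 1 := by
      have : (t:ℝ) + 1 ≤ (τ:ℝ) := by exact_mod_cast Nat.succ_le_of_lt ht
      linarith
    have ht0 : (0:ℝ) ≤ (t:ℝ) := Nat.cast_nonneg t
    rw [hμ t ht]
    constructor
    · have h1 : s - S ≤ (s - S) * (t:ℝ) / (τ:ℝ) := by
        rw [le_div_iff₀ hτ0]; nlinarith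
      linarith
    · have h2 : (s - S) * (t:ℝ) / (τ:ℝ) ≤ 0 :=
        div_nonpos_of_nonpos_of_nonneg (by nlinarith) hτ0.le
      linarith
  have hdiffD : ∀ t : ℕ, 1 ≤ t → t < τ → μ (t-1) = μ t + D := by
    intro t h1 h2
    have hcast : ((t-1:ℕ):ℝ) = (t:ℝ) - 1 := by
      rw [Nat.cast_sub h1, Nat.cast_one]
    rw [hμ t h2, hμ (t-1) (by omega), hcast, hDdef]
    field_simp
    ring
  have hμτ1 : μ (τ-1) = s + D := by
    rw [hμ (τ-1) (by omega)]
    have hcast : ((τ-1:ℕ):ℝ) = (τ:ℝ) - 1 := by rw [Nat.cast_sub (by omega), Nat.cast_one]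
    rw [hcast, hDdef]
    field_simp
    ring
  -- the main lower bound
  have main : ∀ γ : ℝ, Γ0 ≤ γ → (((τ:ℝ)-1)*s - S)*γ/(τ:ℝ) - c ≤ g γ := by
    intro γ hγ
    have hγ0 : 0 < γ := lt_of_lt_of_le hΓ0pos hγ
    have hγc₁ : 0 ≤ γ + c₁ := by
      have h1 : -|c₁| ≤ c₁ := neg_abs_le c₁
      have h2 : 0 ≤ |Real.log ((s + D)/(δ * M))| / (2*β) := by positivity
      rw [hΓ0def] at hγ
      linarith
    set E := Real.exp (β * γ) with hEdef
    have hE0 : 0 < E := by rw [hEdef]; positivity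
    have hlogE : Real.log E = β*γ := by rw [hEdef, Real.log_exp]
    -- decreasing steps
    have key1 : ∀ t ∈ Finset.Icc 1 (τ-1),
        (γ + c₁) * s ≤ (R - 1/β * Real.log (x γ t) - C) * μ t := by
      intro t ht
      rw [Finset.mem_Icc] at ht
      obtain ⟨ht1, ht2⟩ := ht
      have htτ : t < τ := by omega
      obtain ⟨hx0, hxeq⟩ := hx γ hγ0 t ht1 (by omega)
      rw [← hEdef] at hxeq
      have hμt := hμbounds t htτ
      have hμt1 := hμbounds (t-1) (by omega)
      have hdiff := hdiffD t ht1 htτ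
      have hμtpos : 0 < μ t := lt_of_lt_of_le hs hμt.1
      have hterm2 : 0 ≤ x γ t / (E + x γ t) * (1 - μ (t-1)) := by
        apply mul_nonneg
        · positivity
        · linarith [hμt1.2]
      have h1 : E * x γ t / (1 + E * x γ t) * μ (t-1) ≤ μ t := by linarith [hterm2]
      rw [hdiff] at h1
      have hden : (0:ℝ) < 1 + E * x γ t := by positivity
      rw [div_mul_eq_mul_div, div_le_iff₀ hden] at h1
      have hxub : x γ t ≤ S / (E * D) := by
        rw [le_div_iff₀ (by positivity)]
        nlinarith [hμt.2]
      have hSD0 : 0 < S / D := div_pos (by linarith) hD0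
      have hlogx : Real.log (x γ t) ≤ Real.log (S / D) - β * γ := by
        have heq : S / (E * D) = S / D * E⁻¹ := by
          rw [mul_comm E D, ← div_div, div_eq_mul_inv]
        have h2 : Real.log (x γ t) ≤ Real.log (S / (E * D)) := Real.log_le_log hx0 hxub
        rw [heq, Real.log_mul (ne_of_gt hSD0) (by positivity), Real.log_inv, hlogE] at h2
        linarith
      have hval : γ + c₁ ≤ R - 1/β * Real.log (x γ t) - C := by
        have h3 : 1/β * Real.log (x γ t) ≤ 1/β * (Real.log (S/D) - β*γ) :=
          mul_le_mul_of_nonneg_left hlogx (by positivity)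
        have h4 : 1/β * (Real.log (S/D) - β*γ) = Real.log (S/D)/β - γ := by
          field_simp
        rw [hc₁]
        rw [h4] at h3
        linarith
      calc (γ + c₁) * s ≤ (γ + c₁) * μ t := mul_le_mul_of_nonneg_left hμt.1 hγc₁
        _ ≤ (R - 1/β * Real.log (x γ t) - C) * μ t :=
            mul_le_mul_of_nonneg_right hval hμtpos.le
    -- promotion step
    have key2 : (c₂ - γ) * S ≤ (R - 1/β * Real.log (x γ τ) - C) * μ τ := by
      obtain ⟨hx0, hxeq⟩ := hx γ hγ0 τ (by omega) le_rfl
      rw [← hEdef] at hxeq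
      rw [hμτ, hμτ1] at hxeq
      have hcond : s + D ≤ δ * (E^2 * M) := by
        have hr0 : 0 < (s + D)/(δ*M) := by positivity
        have hlogabs : |Real.log ((s + D)/(δ*M))| ≤ 2*β*γ := by
          have h1 : |Real.log ((s + D)/(δ*M))| / (2*β) ≤ γ := by
            rw [hΓ0def] at hγ
            have := abs_nonneg c₁
            linarith
          rw [div_le_iff₀ (by positivity)] at h1
          linarith
        have h2 : (s + D)/(δ*M) ≤ E^2 := by
          have h3 : Real.log ((s+D)/(δ*M)) ≤ 2*(β*γ) := by
            have := le_abs_self (Real.log ((s+D)/(δ*M)))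
            linarith
          calc (s+D)/(δ*M) = Real.exp (Real.log ((s+D)/(δ*M))) := (Real.exp_log hr0).symm
            _ ≤ Real.exp (2*(β*γ)) := Real.exp_le_exp.2 h3
            _ = E^2 := by
                rw [hEdef, sq, ← Real.exp_add]
                congr 1
                ring
        rw [div_le_iff₀ (by positivity)] at h2
        nlinarith [h2]
      have hzub : x γ τ ≤ E * M := by
        by_contra hcon
        push_neg at hcon
        have h1m : 0 < 1 - (s + D) := by linarith
        have t1 : E*(E*M)/(1+E*(E*M)) * (s+D) < E*(x γ τ)/(1+E*(x γ τ)) * (s+D) := by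
          apply mul_lt_mul_of_pos_right _ hsD0
          exact ratio_lt_ratio (by positivity) (by nlinarith)
        have t2 : (E*M)/(E+E*M) ≤ (x γ τ)/(E+(x γ τ)) := by
          rw [div_le_div_iff₀ (by positivity) (by positivity)]
          nlinarith
        have t2' : (E*M)/(E+E*M) * (1-(s+D)) ≤ (x γ τ)/(E+(x γ τ)) * (1-(s+D)) :=
          mul_le_mul_of_nonneg_right t2 h1m.le
        have hΔ2 : 1 - (s+D) = Δ + 2*δ := by rw [hΔdef, hδdef]; ring
        have e1 : (E*M)/(E+E*M) * (1-(s+D)) = Δ + δ := by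
          have h1 : (E*M)/(E+E*M) = (Δ+δ)/(Δ+2*δ) := by
            rw [hMdef]
            field_simp
            ring
          rw [h1, hΔ2, div_mul_cancel₀]
          positivity
        have e3 : (s + D) - δ ≤ E*(E*M)/(1+E*(E*M)) * (s+D) := by
          rw [div_mul_eq_mul_div, le_div_iff₀ (by positivity)]
          nlinarith [hcond]
        have hcontr : S < S := by
          calc S = ((s+D) - δ) + (Δ + δ) := by rw [hΔdef]; ring
            _ ≤ E*(E*M)/(1+E*(E*M)) * (s+D) + (E*M)/(E+E*M) * (1-(s+D)) := by
                linarith [e3, e1]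
            _ < E*(x γ τ)/(1+E*(x γ τ)) * (s+D) + (x γ τ)/(E+(x γ τ)) * (1-(s+D)) := by
                linarith [t1, t2']
            _ = S := hxeq.symm
        exact lt_irrefl _ hcontr
      have hlogz : Real.log (x γ τ) ≤ β*γ + Real.log M := by
        have h2 : Real.log (x γ τ) ≤ Real.log (E*M) := Real.log_le_log hx0 hzub
        rw [Real.log_mul hE0.ne' hM0.ne', hlogE] at h2
        linarith
      have hval : c₂ - γ ≤ R - 1/β * Real.log (x γ τ) - C := by
        have h3 : 1/β * Real.log (x γ τ) ≤ 1/β * (β*γ + Real.log M) :=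
          mul_le_mul_of_nonneg_left hlogz (by positivity)
        have h4 : 1/β * (β*γ + Real.log M) = γ + Real.log M / β := by
          field_simp
        rw [h4] at h3
        rw [hc₂]
        linarith
      rw [hμτ]
      exact mul_le_mul_of_nonneg_right hval (by linarith)
    -- assemble the sum
    have hins : Finset.Icc 1 τ = insert τ (Finset.Icc 1 (τ-1)) := by
      ext a
      simp only [Finset.mem_Icc, Finset.mem_insert]
      omega
    have hsplit : ∑ t ∈ Finset.Icc 1 τ, (R - 1/β * Real.log (x γ t) - C) * μ t
        = (R - 1/β * Real.log (x γ τ) - C) * μ τ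
          + ∑ t ∈ Finset.Icc 1 (τ-1), (R - 1/β * Real.log (x γ t) - C) * μ t := by
      rw [hins, Finset.sum_insert (by simp [Finset.mem_Icc]; omega)]
    have hcard : (Finset.Icc 1 (τ-1)).card = τ - 1 := by
      rw [Nat.card_Icc]; omega
    have hsum1 : ((τ:ℝ)-1) * ((γ + c₁) * s)
        ≤ ∑ t ∈ Finset.Icc 1 (τ-1), (R - 1/β * Real.log (x γ t) - C) * μ t := by
      have h := Finset.card_nsmul_le_sum (Finset.Icc 1 (τ-1)) _ _ key1
      rw [hcard] at h
      have hcast : ((τ-1:ℕ):ℝ) = (τ:ℝ)-1 := by rw [Nat.cast_sub (by omega), Nat.cast_one]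
      rw [nsmul_eq_mul, hcast] at h
      exact h
    rw [hg, hsplit]
    have hfinal : (((τ:ℝ)-1)*s - S)*γ/(τ:ℝ) - c
        = 1/(τ:ℝ) * ((c₂ - γ) * S + ((τ:ℝ)-1) * ((γ + c₁) * s)) := by
      rw [hcdef]
      field_simp
      ring
    rw [hfinal]
    apply mul_le_mul_of_nonneg_left _ (by positivity)
    linarith [hsum1, key2]
  refine ⟨⟨c, Γ0, hΓ0pos, main⟩, ?_⟩
  intro hA
  have hA0 : 0 < ((τ:ℝ)-1)*s - S := sub_pos.2 hA
  set B : ℝ := |R - C| + Real.log 2 / β + 1/β with hBdef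
  have hlog2pos : 0 < Real.log 2 := Real.log_pos one_lt_two
  have hB0 : 0 ≤ B := by
    have h1 : 0 ≤ Real.log 2 / β := div_nonneg hlog2pos.le hβ.le
    have h2 : 0 < 1/β := by positivity
    have h3 := abs_nonneg (R-C)
    rw [hBdef]; linarith
  -- the steady-state gain is uniformly bounded
  have hgbarB : ∀ γ : ℝ, 0 ≤ γ → gbar γ ≤ B := by
    intro γ hγnn
    rw [hgbar, hBdef]
    apply Real.sSup_le _ (by rw [hBdef] at hB0; exact hB0)
    rintro y ⟨m, ⟨hm0, hm1⟩, rfl⟩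
    exact steady_element_bound β R C hβ γ hγnn m hm0 hm1
  constructor
  · -- divergence
    have h2 : Tendsto (fun γ : ℝ => (((τ:ℝ)-1)*s - S) * γ) atTop atTop :=
      Tendsto.const_mul_atTop hA0 tendsto_id
    have h3 := h2.atTop_div_const hτ0
    have h4 := tendsto_atTop_add_const_right atTop (-c) h3
    have h1 : Tendsto (fun γ : ℝ => (((τ:ℝ)-1)*s - S)*γ/(τ:ℝ) - c) atTop atTop := by
      refine h4.congr fun x => ?_
      ring
    exact tendsto_atTop_mono' atTop (eventually_atTop.2 ⟨Γ0, main⟩) h1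
  · -- threshold for beating steady state
    refine ⟨max Γ0 ((B + c + 1)*(τ:ℝ)/((((τ:ℝ)-1)*s - S))), ?_⟩
    intro γ hγ
    have hγ1 : Γ0 ≤ γ := le_trans (le_max_left _ _) hγ
    have hγ2 : (B + c + 1)*(τ:ℝ)/((((τ:ℝ)-1)*s - S)) ≤ γ := le_trans (le_max_right _ _) hγ
    have hg1 := main γ hγ1
    have hBc : B + c + 1 ≤ (((τ:ℝ)-1)*s - S)*γ/(τ:ℝ) := by
      rw [div_le_iff₀ hA0] at hγ2
      rw [le_div_iff₀ hτ0]
      nlinarith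
    have hgb := hgbarB γ (le_trans hΓ0pos.le hγ1)
    clear_value B c Γ0
    linarith
end
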